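/- arXiv:1603.06966 — 7 statements merged into one kernel-verified Lean document; each statement's English description precedes it below -/
import Mathlib

section
/- Under the Lipschitz-exact approximation hypotheses, for Lebesgue-almost every x ∈ U the maps S and ι = (Q,P) are differentiable at x and DS(x)v = ⟨P(x), DQ(x)v⟩ for all v ∈ ℝⁿ; that is, ι*θ = dS holds almost everywhere. -/
open scoped RealInnerProductSpace NNReal
open MeasureTheory Filter

open Metric Topology

set_option maxHeartbeats 2000000
variable {n : ℕ}

private lemma brane_key (U : Set (EuclideanSpace ℝ (Fin n))) (hU : IsOpen U) (K : ℝ≥0) (hK : 0 < K)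
    (Q P : EuclideanSpace ℝ (Fin n) → EuclideanSpace ℝ (Fin n))
    (S : EuclideanSpace ℝ (Fin n) → ℝ)
    (Qk Pk : ℕ → EuclideanSpace ℝ (Fin n) → EuclideanSpace ℝ (Fin n))
    (Sk : ℕ → EuclideanSpace ℝ (Fin n) → ℝ)
    (hC1 : ∀ k, ContDiffOn ℝ 1 (fun x => (Qk k x, Pk k x)) U)
    (hS1 : ∀ k, ContDiffOn ℝ 1 (Sk k) U)
    (hιLip : ∀ k, LipschitzOnWith K (fun x => (Qk k x, Pk k x)) U)
    (hSLip : ∀ k, LipschitzOnWith K (Sk k) U)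
    (hexact : ∀ k, ∀ x ∈ U, ∀ v,
      fderiv ℝ (Sk k) x v = ⟪Pk k x, fderiv ℝ (Qk k) x v⟫)
    (hιconv : TendstoUniformlyOn (fun k x => (Qk k x, Pk k x)) (fun x => (Q x, P x)) atTop U)
    (hSconv : TendstoUniformlyOn Sk S atTop U)
    (x₀ : EuclideanSpace ℝ (Fin n)) (hx₀ : x₀ ∈ U)
    (hSd : DifferentiableAt ℝ S x₀) (hQd : DifferentiableAt ℝ Q x₀)
    (hPLip : LipschitzOnWith K P U)
    (hQt : ∀ x ∈ U, Filter.Tendsto (fun k => Qk k x) atTop (𝓝 (Q x)))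
    (hSt : ∀ x ∈ U, Filter.Tendsto (fun k => Sk k x) atTop (𝓝 (S x))) :
    ∀ v, fderiv ℝ S x₀ v = ⟪P x₀, fderiv ℝ Q x₀ v⟫ := by
  set c := P x₀ with hc
  -- differentiability & derivative bound facts for approximants
  have hQkd : ∀ k, ∀ x ∈ U, DifferentiableAt ℝ (Qk k) x := fun k x hx =>
    (((hC1 k).differentiableOn one_ne_zero x hx).differentiableAt (hU.mem_nhds hx)).fst
  have hSkd : ∀ k, ∀ x ∈ U, DifferentiableAt ℝ (Sk k) x := fun k x hx =>
    ((hS1 k).differentiableOn one_ne_zero x hx).differentiableAt (hU.mem_nhds hx)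
  have hQkLip : ∀ k, LipschitzOnWith K (Qk k) U := fun k => by
    simpa [Function.comp_def] using LipschitzWith.comp_lipschitzOnWith LipschitzWith.prod_fst (hιLip k)
  have hDQ : ∀ k, ∀ x ∈ U, ‖fderiv ℝ (Qk k) x‖ ≤ K := fun k x hx =>
    (hQkd k x hx).hasFDerivAt.le_of_lipschitzOn (hU.mem_nhds hx) (hQkLip k)
  -- the limit candidate derivative
  set L : EuclideanSpace ℝ (Fin n) →L[ℝ] ℝ :=
    fderiv ℝ S x₀ - (innerSL ℝ c).comp (fderiv ℝ Q x₀) with hL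
  have hgL : HasFDerivAt (fun x => S x - ⟪c, Q x⟫) L x₀ := by
    exact hSd.hasFDerivAt.sub ((innerSL ℝ c).hasFDerivAt.comp x₀ hQd.hasFDerivAt)
  obtain ⟨r₀, hr₀, hball⟩ : ∃ r > 0, ball x₀ r ⊆ U := (Metric.isOpen_iff.1 hU) x₀ hx₀
  -- main Lipschitz estimate on balls
  have claim : ∀ r, 0 < r → r ≤ r₀ → ∀ x ∈ ball x₀ r, ∀ y ∈ ball x₀ r,
      ‖(S x - ⟪c, Q x⟫) - (S y - ⟪c, Q y⟫)‖ ≤ ((K:ℝ) * ((K:ℝ) * r)) * ‖x - y‖ := by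
    intro r hr hrr₀ x hx y hy
    have hbr : ball x₀ r ⊆ U := fun z hz => hball (ball_subset_ball hrr₀ hz)
    have inner_claim : ∀ ε : ℝ, 0 < ε →
        ‖(S x - ⟪c, Q x⟫) - (S y - ⟪c, Q y⟫)‖ ≤ ((K:ℝ) * (ε + (K:ℝ) * r)) * ‖x - y‖ := by
      intro ε hε
      have hev := (Metric.tendstoUniformlyOn_iff.1 hιconv) ε hε
      -- pass to the limit in k
      have hgk_tend : Filter.Tendsto
          (fun k => ‖(Sk k x - ⟪c, Qk k x⟫) - (Sk k y - ⟪c, Qk k y⟫)‖) atTop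
          (𝓝 ‖(S x - ⟪c, Q x⟫) - (S y - ⟪c, Q y⟫)‖) := by
        apply Filter.Tendsto.norm
        have h1 : Filter.Tendsto (fun k => Sk k x - ⟪c, Qk k x⟫) atTop (𝓝 (S x - ⟪c, Q x⟫)) :=
          (hSt x (hbr hx)).sub ((Filter.Tendsto.inner tendsto_const_nhds (hQt x (hbr hx))))
        have h2 : Filter.Tendsto (fun k => Sk k y - ⟪c, Qk k y⟫) atTop (𝓝 (S y - ⟪c, Q y⟫)) :=
          (hSt y (hbr hy)).sub ((Filter.Tendsto.inner tendsto_const_nhds (hQt y (hbr hy))))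
        exact h1.sub h2
      refine le_of_tendsto hgk_tend ?_
      filter_upwards [hev] with k hk
      -- gk is Lipschitz with constant K(ε+Kr) on the ball
      have bound : ∀ z ∈ ball x₀ r,
          ‖fderiv ℝ (Sk k) z - (innerSL ℝ c).comp (fderiv ℝ (Qk k) z)‖
            ≤ (K:ℝ) * (ε + (K:ℝ) * r) := by
        intro z hz
        have hzU : z ∈ U := hbr hz
        refine ContinuousLinearMap.opNorm_le_bound _ (by positivity) fun v => ?_
        have hval : (fderiv ℝ (Sk k) z - (innerSL ℝ c).comp (fderiv ℝ (Qk k) z)) v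
            = ⟪Pk k z - c, fderiv ℝ (Qk k) z v⟫ := by
          simp [hexact k z hzU v, inner_sub_left]
        rw [hval]
        have h1 : ‖Pk k z - c‖ ≤ ε + (K:ℝ) * r := by
          have hd1 : dist (P z) (Pk k z) < ε := by
            have := hk z hzU
            rw [Prod.dist_eq] at this
            exact lt_of_le_of_lt (le_max_right _ _) this
          have hd2 : dist (P z) (P x₀) ≤ (K:ℝ) * r := by
            refine le_trans ((lipschitzOnWith_iff_dist_le_mul.1 hPLip) z hzU x₀ hx₀) ?_
            have := mem_ball.1 hz
            nlinarith [K.coe_nonneg]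
          calc ‖Pk k z - c‖ ≤ ‖Pk k z - P z‖ + ‖P z - c‖ := norm_sub_le_norm_sub_add_norm_sub _ _ _
            _ ≤ ε + (K:ℝ) * r := by
                rw [← dist_eq_norm, ← dist_eq_norm, dist_comm]
                exact add_le_add hd1.le hd2
        have h2 : ‖fderiv ℝ (Qk k) z v‖ ≤ (K:ℝ) * ‖v‖ :=
          le_trans ((fderiv ℝ (Qk k) z).le_opNorm v)
            (by nlinarith [hDQ k z hzU, norm_nonneg v, (fderiv ℝ (Qk k) z).opNorm_nonneg])
        calc ‖⟪Pk k z - c, fderiv ℝ (Qk k) z v⟫‖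
            ≤ ‖Pk k z - c‖ * ‖fderiv ℝ (Qk k) z v‖ := norm_inner_le_norm _ _
          _ ≤ (ε + (K:ℝ) * r) * ((K:ℝ) * ‖v‖) := by
              apply mul_le_mul h1 h2 (norm_nonneg _)
              positivity
          _ = (K:ℝ) * (ε + (K:ℝ) * r) * ‖v‖ := by ring
      have hder : ∀ z ∈ ball x₀ r, HasFDerivWithinAt (fun w => Sk k w - ⟪c, Qk k w⟫)
          (fderiv ℝ (Sk k) z - (innerSL ℝ c).comp (fderiv ℝ (Qk k) z)) (ball x₀ r) z := by
        intro z hz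
        have hzU : z ∈ U := hbr hz
        exact ((hSkd k z hzU).hasFDerivAt.sub
          ((innerSL ℝ c).hasFDerivAt.comp z (hQkd k z hzU).hasFDerivAt)).hasFDerivWithinAt
      have := (convex_ball x₀ r).norm_image_sub_le_of_norm_hasFDerivWithin_le hder bound hy hx
      exact this
    -- let ε → 0
    refine le_of_forall_pos_le_add fun ε' hε' => ?_
    have hdnn : (0:ℝ) ≤ ‖x - y‖ := norm_nonneg _
    have hden : (0:ℝ) < (K:ℝ) * ‖x - y‖ + 1 := by positivity
    have hεpos : (0:ℝ) < ε' / ((K:ℝ) * ‖x - y‖ + 1) := by positivity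
    have h1 := inner_claim _ hεpos
    have h2 : (K:ℝ) * ‖x - y‖ * (ε' / ((K:ℝ) * ‖x - y‖ + 1)) ≤ ε' := by
      calc (K:ℝ) * ‖x - y‖ * (ε' / ((K:ℝ) * ‖x - y‖ + 1))
          ≤ ((K:ℝ) * ‖x - y‖ + 1) * (ε' / ((K:ℝ) * ‖x - y‖ + 1)) :=
            mul_le_mul_of_nonneg_right (by linarith) hεpos.le
        _ = ε' := by field_simp
    have expand : (K:ℝ) * (ε' / ((K:ℝ) * ‖x - y‖ + 1) + (K:ℝ) * r) * ‖x - y‖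
        = (K:ℝ) * ‖x - y‖ * (ε' / ((K:ℝ) * ‖x - y‖ + 1)) + (K:ℝ) * ((K:ℝ) * r) * ‖x - y‖ := by
      ring
    rw [expand] at h1
    linarith [h1, h2]
  -- conclude ‖L‖ = 0
  have hLle : ∀ r, 0 < r → r ≤ r₀ → ‖L‖ ≤ (K:ℝ) * ((K:ℝ) * r) := by
    intro r hr hrr₀
    refine hgL.le_of_lip' (by positivity) ?_
    filter_upwards [ball_mem_nhds x₀ hr] with z hz
    simpa [dist_eq_norm] using claim r hr hrr₀ z hz x₀ (mem_ball_self hr)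
  have hL0 : ‖L‖ ≤ 0 := by
    refine le_of_forall_pos_le_add fun ε hε => ?_
    have hKK : (0:ℝ) < (K:ℝ) * (K:ℝ) := by positivity
    set r := min r₀ (ε / ((K:ℝ) * (K:ℝ))) with hrdef
    have hrpos : 0 < r := lt_min hr₀ (by positivity)
    have := hLle r hrpos (min_le_left _ _)
    have h2 : (K:ℝ) * ((K:ℝ) * r) ≤ ε := by
      have : r ≤ ε / ((K:ℝ) * (K:ℝ)) := min_le_right _ _
      calc (K:ℝ) * ((K:ℝ) * r) = ((K:ℝ) * (K:ℝ)) * r := by ring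
        _ ≤ ((K:ℝ) * (K:ℝ)) * (ε / ((K:ℝ) * (K:ℝ))) := by nlinarith
        _ = ε := by field_simp
    linarith
  have hLzero : ∀ v, L v = 0 := by
    intro v
    have h1 : ‖L v‖ ≤ 0 := le_trans (L.le_opNorm v)
      (by nlinarith [norm_nonneg v, L.opNorm_nonneg])
    exact norm_eq_zero.1 (le_antisymm h1 (norm_nonneg _))
  intro v
  have h : fderiv ℝ S x₀ v - ⟪c, fderiv ℝ Q x₀ v⟫ = 0 := by
    simpa [hL, ContinuousLinearMap.sub_apply] using hLzero v
  linarith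


/-- A Lipschitz-exact Lagrangian brane satisfies `ι*θ = dS` almost
everywhere: if equi-Lipschitz `C¹` maps `ι_k = (Q_k, P_k)` with primitives `S_k`
(`ι_k*θ = dS_k` on the open set `U`) converge uniformly to `ι = (Q, P)` and `S`, then for
almost every `x ∈ U` the limits are differentiable at `x` and `DS(x)v = ⟪P x, DQ(x)v⟫`. -/
theorem lipschitz_exact_brane_exact_ae (n : ℕ) (U : Set (EuclideanSpace ℝ (Fin n)))
    (hU : IsOpen U) (K : ℝ≥0) (hK : 0 < K)
    (Q P : EuclideanSpace ℝ (Fin n) → EuclideanSpace ℝ (Fin n))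
    (S : EuclideanSpace ℝ (Fin n) → ℝ)
    (Qk Pk : ℕ → EuclideanSpace ℝ (Fin n) → EuclideanSpace ℝ (Fin n))
    (Sk : ℕ → EuclideanSpace ℝ (Fin n) → ℝ)
    (hC1 : ∀ k, ContDiffOn ℝ 1 (fun x => (Qk k x, Pk k x)) U)
    (hS1 : ∀ k, ContDiffOn ℝ 1 (Sk k) U)
    (hιLip : ∀ k, LipschitzOnWith K (fun x => (Qk k x, Pk k x)) U)
    (hSLip : ∀ k, LipschitzOnWith K (Sk k) U)
    (hexact : ∀ k, ∀ x ∈ U, ∀ v,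
      fderiv ℝ (Sk k) x v = ⟪Pk k x, fderiv ℝ (Qk k) x v⟫)
    (hιconv : TendstoUniformlyOn (fun k x => (Qk k x, Pk k x)) (fun x => (Q x, P x)) atTop U)
    (hSconv : TendstoUniformlyOn Sk S atTop U) :
    ∀ᵐ x ∂volume, x ∈ U →
      DifferentiableAt ℝ S x ∧ DifferentiableAt ℝ Q x ∧ DifferentiableAt ℝ P x ∧
        ∀ v, fderiv ℝ S x v = ⟪P x, fderiv ℝ Q x v⟫ := by
  -- pointwise convergence
  have hQt : ∀ x ∈ U, Filter.Tendsto (fun k => Qk k x) atTop (𝓝 (Q x)) := fun x hx =>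
    (continuous_fst.tendsto _).comp (hιconv.tendsto_at hx)
  have hPt : ∀ x ∈ U, Filter.Tendsto (fun k => Pk k x) atTop (𝓝 (P x)) := fun x hx =>
    (continuous_snd.tendsto _).comp (hιconv.tendsto_at hx)
  have hSt : ∀ x ∈ U, Filter.Tendsto (fun k => Sk k x) atTop (𝓝 (S x)) := fun x hx =>
    hSconv.tendsto_at hx
  -- Lipschitz bounds on the approximants' components
  have hQkLip : ∀ k, LipschitzOnWith K (Qk k) U := fun k => by
    simpa [Function.comp_def] using LipschitzWith.comp_lipschitzOnWith LipschitzWith.prod_fst (hιLip k)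
  have hPkLip : ∀ k, LipschitzOnWith K (Pk k) U := fun k => by
    simpa [Function.comp_def] using LipschitzWith.comp_lipschitzOnWith LipschitzWith.prod_snd (hιLip k)
  -- the limits are Lipschitz on U
  have hQLip : LipschitzOnWith K Q U := lipschitzOnWith_iff_dist_le_mul.2 fun x hx y hy =>
    le_of_tendsto ((hQt x hx).dist (hQt y hy)) (Filter.Eventually.of_forall fun k =>
      lipschitzOnWith_iff_dist_le_mul.1 (hQkLip k) x hx y hy)
  have hPLip : LipschitzOnWith K P U := lipschitzOnWith_iff_dist_le_mul.2 fun x hx y hy =>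
    le_of_tendsto ((hPt x hx).dist (hPt y hy)) (Filter.Eventually.of_forall fun k =>
      lipschitzOnWith_iff_dist_le_mul.1 (hPkLip k) x hx y hy)
  have hSLip' : LipschitzOnWith K S U := lipschitzOnWith_iff_dist_le_mul.2 fun x hx y hy =>
    le_of_tendsto ((hSt x hx).dist (hSt y hy)) (Filter.Eventually.of_forall fun k =>
      lipschitzOnWith_iff_dist_le_mul.1 (hSLip k) x hx y hy)
  -- Rademacher
  filter_upwards [hSLip'.ae_differentiableWithinAt_of_mem (μ := volume),
    hQLip.ae_differentiableWithinAt_of_mem (μ := volume),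
    hPLip.ae_differentiableWithinAt_of_mem (μ := volume)] with x h1 h2 h3 hx
  have hSd : DifferentiableAt ℝ S x := (h1 hx).differentiableAt (hU.mem_nhds hx)
  have hQd : DifferentiableAt ℝ Q x := (h2 hx).differentiableAt (hU.mem_nhds hx)
  have hPd : DifferentiableAt ℝ P x := (h3 hx).differentiableAt (hU.mem_nhds hx)
  exact ⟨hSd, hQd, hPd,
    brane_key U hU K hK Q P S Qk Pk Sk hC1 hS1 hιLip hSLip hexact hιconv hSconv
      x hx hSd hQd hPLip hQt hSt⟩
end

section
/- Under the Lipschitz-exact approximation hypotheses, for Lebesgue-almost every x ∈ U the map ι = (Q,P) is differentiable at x and for all u, v ∈ ℝⁿ one has ⟨DQ(x)u, DP(x)v⟩ − ⟨DQ(x)v, DP(x)u⟩ = 0; that is, the almost-everywhere defined pullback ι*ω of the canonical symplectic form vanishes almost everywhere. -/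
open scoped RealInnerProductSpace NNReal
open MeasureTheory Filter

section Aux

variable {F G : Type*} [NormedAddCommGroup F] [InnerProductSpace ℝ F]
  [NormedAddCommGroup G] [NormedSpace ℝ G]

/-- derivative along a straight path -/
lemma hasDerivAt_path {f : F → G} (a w : F) (t : ℝ) (hf : DifferentiableAt ℝ f (a + t • w)) :
    HasDerivAt (fun s : ℝ => f (a + s • w)) (fderiv ℝ f (a + t • w) w) t := by
  have h1 : HasDerivAt (fun s : ℝ => a + s • w) w t := by
    simpa using ((hasDerivAt_id t).smul_const w).const_add a
  simpa [Function.comp_def] using hf.hasFDerivAt.comp_hasDerivAt t h1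

lemma contOn_path {U : Set F} (hU : IsOpen U) {f : F → G} (hf : ContinuousOn f U)
    (a w : F) (hseg : ∀ t ∈ Set.uIcc (0:ℝ) 1, a + t • w ∈ U) :
    ContinuousOn (fun t : ℝ => f (a + t • w)) (Set.uIcc 0 1) := by
  have hc : ContinuousOn (fun t : ℝ => a + t • w) (Set.uIcc (0:ℝ) 1) :=
    (continuous_const.add (continuous_id.smul continuous_const)).continuousOn
  exact hf.comp hc hseg

lemma sideA {U : Set F} (hU : IsOpen U) {f g : F → F} {sF : F → ℝ}
    (hf : ContDiffOn ℝ 1 f U) (hg : ContDiffOn ℝ 1 g U) (hs : ContDiffOn ℝ 1 sF U)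
    (hex : ∀ y ∈ U, ∀ v, fderiv ℝ sF y v = ⟪g y, fderiv ℝ f y v⟫)
    (a w c : F) (hseg : ∀ t ∈ Set.uIcc (0:ℝ) 1, a + t • w ∈ U) :
    ∫ t in (0:ℝ)..1, ⟪fderiv ℝ g (a + t • w) w, f (a + t • w) - c⟫
      = (⟪g (a + w), f (a + w) - c⟫ - sF (a + w)) - (⟪g a, f a - c⟫ - sF a) := by
  have hdiff : ∀ {y : F}, y ∈ U → ∀ {h : F → F}, ContDiffOn ℝ 1 h U → DifferentiableAt ℝ h y :=
    fun hy _ hh => (hh.differentiableOn one_ne_zero).differentiableAt (hU.mem_nhds hy)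
  have hder : ∀ t ∈ Set.uIcc (0:ℝ) 1,
      HasDerivAt (fun s : ℝ => ⟪g (a + s • w), f (a + s • w) - c⟫ - sF (a + s • w))
        (⟪fderiv ℝ g (a + t • w) w, f (a + t • w) - c⟫) t := by
    intro t ht
    have hy := hseg t ht
    have hgd := hasDerivAt_path a w t (hdiff hy hg)
    have hfd : HasDerivAt (fun s : ℝ => f (a + s • w) - c) (fderiv ℝ f (a + t • w) w) t :=
      (hasDerivAt_path a w t (hdiff hy hf)).sub_const c
    have hsd : HasDerivAt (fun s : ℝ => sF (a + s • w)) (fderiv ℝ sF (a + t • w) w) t :=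
      hasDerivAt_path a w t ((hs.differentiableOn one_ne_zero).differentiableAt (hU.mem_nhds hy))
    have hinner := (HasDerivAt.inner ℝ hgd hfd).sub hsd
    simpa [hex _ hy w, add_sub_cancel_left, Pi.sub_def] using hinner
  have hint : IntervalIntegrable
      (fun t : ℝ => ⟪fderiv ℝ g (a + t • w) w, f (a + t • w) - c⟫) volume 0 1 := by
    apply ContinuousOn.intervalIntegrable
    have h1 : ContinuousOn (fun t : ℝ => fderiv ℝ g (a + t • w)) (Set.uIcc 0 1) :=
      contOn_path hU (hg.continuousOn_fderiv_of_isOpen hU le_rfl) a w hseg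
    exact (h1.clm_apply continuousOn_const).inner
      ((contOn_path hU hf.continuousOn a w hseg).sub continuousOn_const)
  rw [intervalIntegral.integral_eq_sub_of_hasDerivAt hder hint]
  norm_num

lemma sideB {U : Set F} (hU : IsOpen U) {g : F → F}
    (hg : ContDiffOn ℝ 1 g U) (T : F →L[ℝ] F) (x a w : F)
    (hseg : ∀ t ∈ Set.uIcc (0:ℝ) 1, a + t • w ∈ U) :
    ∫ t in (0:ℝ)..1, ⟪fderiv ℝ g (a + t • w) w, T (a + t • w - x)⟫
      = (⟪g (a + w), T (a + w - x)⟫ - ⟪g a, T (a - x)⟫)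
        - ∫ t in (0:ℝ)..1, ⟪g (a + t • w), T w⟫ := by
  have hder : ∀ t ∈ Set.uIcc (0:ℝ) 1,
      HasDerivAt (fun s : ℝ => ⟪g (a + s • w), T (a + s • w - x)⟫)
        (⟪g (a + t • w), T w⟫ + ⟪fderiv ℝ g (a + t • w) w, T (a + t • w - x)⟫) t := by
    intro t ht
    have hy := hseg t ht
    have hgd := hasDerivAt_path a w t
      ((hg.differentiableOn one_ne_zero).differentiableAt (hU.mem_nhds hy))
    have h1 : HasDerivAt (fun s : ℝ => a + s • w - x) w t := by
      have : HasDerivAt (fun s : ℝ => a + s • w) w t := by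
        simpa using ((hasDerivAt_id t).smul_const w).const_add a
      exact this.sub_const x
    have hTd : HasDerivAt (fun s : ℝ => T (a + s • w - x)) (T w) t := by
      simpa only [Function.comp_def] using T.hasFDerivAt.comp_hasDerivAt t h1
    exact HasDerivAt.inner ℝ hgd hTd
  have hgc : ContinuousOn (fun t : ℝ => g (a + t • w)) (Set.uIcc 0 1) :=
    contOn_path hU hg.continuousOn a w hseg
  have hpath : ContinuousOn (fun t : ℝ => a + t • w) (Set.uIcc (0:ℝ) 1) :=
    (continuous_const.add (continuous_id.smul continuous_const)).continuousOn
  have hint1 : IntervalIntegrable (fun t : ℝ => ⟪g (a + t • w), T w⟫) volume 0 1 :=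
    (hgc.inner continuousOn_const).intervalIntegrable
  have hint2 : IntervalIntegrable
      (fun t : ℝ => ⟪fderiv ℝ g (a + t • w) w, T (a + t • w - x)⟫) volume 0 1 := by
    apply ContinuousOn.intervalIntegrable
    have h1 : ContinuousOn (fun t : ℝ => fderiv ℝ g (a + t • w)) (Set.uIcc 0 1) :=
      contOn_path hU (hg.continuousOn_fderiv_of_isOpen hU le_rfl) a w hseg
    exact (h1.clm_apply continuousOn_const).inner
      ((T.continuous.comp_continuousOn (hpath.sub continuousOn_const)))
  have hFTC := intervalIntegral.integral_eq_sub_of_hasDerivAt hder (hint1.add hint2)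
  rw [intervalIntegral.integral_add hint1 hint2] at hFTC
  have h0 : (0:ℝ) • w = 0 := zero_smul _ _
  have h1' : (1:ℝ) • w = w := one_smul _ _
  rw [h0, h1'] at hFTC
  simp only [add_zero] at hFTC
  linarith

lemma sideC (c₀ c₁ d : F) :
    ∫ t in (0:ℝ)..1, ⟪c₀ + t • c₁, d⟫ = ⟪c₀, d⟫ + ⟪c₁, d⟫ / 2 := by
  have h : ∀ t : ℝ, ⟪c₀ + t • c₁, d⟫ = ⟪c₀, d⟫ + t * ⟪c₁, d⟫ := fun t => by
    rw [inner_add_left, real_inner_smul_left]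
  simp only [h]
  rw [intervalIntegral.integral_add intervalIntegrable_const
    ((continuous_mul_right _).intervalIntegrable 0 1)]
  simp [intervalIntegral.integral_mul_const, integral_id]
  ring

end Aux
-- key lemma, to be appended after Aux section
section Key

variable {F : Type*} [NormedAddCommGroup F] [InnerProductSpace ℝ F]

lemma integral_inner_diff_le (f₁ f₂ : ℝ → F) (d : F)
    (h₁ : ContinuousOn f₁ (Set.uIcc 0 1)) (h₂ : ContinuousOn f₂ (Set.uIcc 0 1))
    {C : ℝ} (hb : ∀ t ∈ Set.uIcc (0:ℝ) 1, ‖f₁ t - f₂ t‖ ≤ C) :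
    |(∫ t in (0:ℝ)..1, ⟪f₁ t, d⟫) - ∫ t in (0:ℝ)..1, ⟪f₂ t, d⟫| ≤ C * ‖d‖ := by
  have hint1 : IntervalIntegrable (fun t : ℝ => ⟪f₁ t, d⟫) volume 0 1 :=
    (h₁.inner continuousOn_const).intervalIntegrable
  have hint2 : IntervalIntegrable (fun t : ℝ => ⟪f₂ t, d⟫) volume 0 1 :=
    (h₂.inner continuousOn_const).intervalIntegrable
  rw [← intervalIntegral.integral_sub hint1 hint2]
  have hbd : ∀ t ∈ Set.uIoc (0:ℝ) 1, ‖⟪f₁ t, d⟫ - ⟪f₂ t, d⟫‖ ≤ C * ‖d‖ := by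
    intro t ht
    have ht' : t ∈ Set.uIcc (0:ℝ) 1 := Set.uIoc_subset_uIcc ht
    rw [← inner_sub_left]
    calc ‖⟪f₁ t - f₂ t, d⟫‖ ≤ ‖f₁ t - f₂ t‖ * ‖d‖ := norm_inner_le_norm _ _
      _ ≤ C * ‖d‖ := mul_le_mul_of_nonneg_right (hb t ht') (norm_nonneg d)
  have := intervalIntegral.norm_integral_le_of_norm_le_const hbd
  simpa [Real.norm_eq_abs] using this

lemma integral_inner_fderiv_diff_le {U : Set F} (hU : IsOpen U) {g : F → F} {K : ℝ≥0}
    (hg : ContDiffOn ℝ 1 g U) (hgLip : LipschitzOnWith K g U)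
    (a w : F) (hseg : ∀ t ∈ Set.uIcc (0:ℝ) 1, a + t • w ∈ U)
    (z₁ z₂ : ℝ → F) (hz₁ : ContinuousOn z₁ (Set.uIcc 0 1)) (hz₂ : ContinuousOn z₂ (Set.uIcc 0 1))
    {C1 C2 : ℝ} (hw : ‖w‖ ≤ C1) (hb : ∀ t ∈ Set.uIcc (0:ℝ) 1, ‖z₁ t - z₂ t‖ ≤ C2) :
    |(∫ t in (0:ℝ)..1, ⟪fderiv ℝ g (a + t • w) w, z₁ t⟫)
      - ∫ t in (0:ℝ)..1, ⟪fderiv ℝ g (a + t • w) w, z₂ t⟫| ≤ (K:ℝ) * C1 * C2 := by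
  have hDg : ContinuousOn (fun t : ℝ => fderiv ℝ g (a + t • w)) (Set.uIcc 0 1) :=
    contOn_path hU (hg.continuousOn_fderiv_of_isOpen hU le_rfl) a w hseg
  have happ := hDg.clm_apply (continuousOn_const (c := w))
  have hint1 : IntervalIntegrable (fun t : ℝ => ⟪fderiv ℝ g (a + t • w) w, z₁ t⟫) volume 0 1 :=
    (happ.inner hz₁).intervalIntegrable
  have hint2 : IntervalIntegrable (fun t : ℝ => ⟪fderiv ℝ g (a + t • w) w, z₂ t⟫) volume 0 1 :=
    (happ.inner hz₂).intervalIntegrable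
  rw [← intervalIntegral.integral_sub hint1 hint2]
  have hC2 : 0 ≤ C2 := le_trans (norm_nonneg _) (hb 0 (by simp))
  have hbd : ∀ t ∈ Set.uIoc (0:ℝ) 1,
      ‖⟪fderiv ℝ g (a + t • w) w, z₁ t⟫ - ⟪fderiv ℝ g (a + t • w) w, z₂ t⟫‖
        ≤ (K:ℝ) * C1 * C2 := by
    intro t ht
    have ht' : t ∈ Set.uIcc (0:ℝ) 1 := Set.uIoc_subset_uIcc ht
    have hy := hseg t ht'
    have hDle : ‖fderiv ℝ g (a + t • w)‖ ≤ (K:ℝ) :=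
      HasFDerivAt.le_of_lipschitzOn
        (((hg.differentiableOn one_ne_zero).differentiableAt (hU.mem_nhds hy)).hasFDerivAt)
        (hU.mem_nhds hy) hgLip
    have h2 : ‖fderiv ℝ g (a + t • w) w‖ ≤ (K:ℝ) * C1 := by
      refine le_trans (ContinuousLinearMap.le_opNorm _ _) ?_
      have := norm_nonneg (fderiv ℝ g (a + t • w))
      have := norm_nonneg w
      nlinarith [NNReal.coe_nonneg K]
    rw [← inner_sub_right]
    calc ‖⟪fderiv ℝ g (a + t • w) w, z₁ t - z₂ t⟫‖
        ≤ ‖fderiv ℝ g (a + t • w) w‖ * ‖z₁ t - z₂ t‖ := norm_inner_le_norm _ _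
      _ ≤ (K:ℝ) * C1 * C2 := by
          refine mul_le_mul h2 (hb t ht') (norm_nonneg _) ?_
          exact le_trans (norm_nonneg _) h2
  have := intervalIntegral.norm_integral_le_of_norm_le_const hbd
  simpa [Real.norm_eq_abs] using this

end Key
section KeyMain

variable {F : Type*} [NormedAddCommGroup F] [InnerProductSpace ℝ F]

lemma scalar_final {θ s0 KT δ : ℝ} (hθ : 0 < θ) (hs0 : 0 ≤ s0) (hKT : 0 ≤ KT)
    (hδ : θ * (4 * (KT + 1) * (s0 + 1) ^ 2) = δ) : 4 * θ * s0 ^ 2 * KT ≤ δ := by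
  have hkey : s0 ^ 2 * KT ≤ (KT + 1) * (s0 + 1) ^ 2 := by
    nlinarith [mul_nonneg hKT (show (0:ℝ) ≤ 2 * s0 + 1 by linarith), sq_nonneg (s0 + 1)]
  nlinarith [mul_le_mul_of_nonneg_left hkey hθ.le]

set_option maxHeartbeats 1000000 in
lemma key_pointwise {U : Set F} (hU : IsOpen U) {K : ℝ≥0}
    {Q P : F → F} {Qk Pk : ℕ → F → F} {Sk : ℕ → F → ℝ}
    (hQk1 : ∀ k, ContDiffOn ℝ 1 (Qk k) U) (hPk1 : ∀ k, ContDiffOn ℝ 1 (Pk k) U)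
    (hS1 : ∀ k, ContDiffOn ℝ 1 (Sk k) U)
    (hPkLip : ∀ k, LipschitzOnWith K (Pk k) U)
    (hexact : ∀ k, ∀ y ∈ U, ∀ v, fderiv ℝ (Sk k) y v = ⟪Pk k y, fderiv ℝ (Qk k) y v⟫)
    (hPc : ContinuousOn P U)
    (hconv : ∀ η : ℝ, 0 < η →
      ∃ k, (∀ y ∈ U, ‖Qk k y - Q y‖ ≤ η) ∧ (∀ y ∈ U, ‖Pk k y - P y‖ ≤ η))
    {x : F} (hx : x ∈ U) (hdQ : DifferentiableAt ℝ Q x) (hdP : DifferentiableAt ℝ P x)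
    (u v : F) :
    ⟪fderiv ℝ Q x u, fderiv ℝ P x v⟫ - ⟪fderiv ℝ Q x v, fderiv ℝ P x u⟫ = 0 := by
  set T := fderiv ℝ Q x with hT
  set M := fderiv ℝ P x with hM
  clear_value T M
  suffices hW : ∀ δ : ℝ, 0 < δ → |⟪M u, T v⟫ - ⟪M v, T u⟫| ≤ δ by
    have h1 : |⟪M u, T v⟫ - ⟪M v, T u⟫| ≤ 0 :=
      le_of_forall_pos_le_add (by intro c hc; simpa using hW c hc)
    have h2 : ⟪M u, T v⟫ - ⟪M v, T u⟫ = 0 :=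
      abs_eq_zero.mp (le_antisymm h1 (abs_nonneg _))
    have h3 : ⟪T u, M v⟫ = ⟪M v, T u⟫ := real_inner_comm _ _
    have h4 : ⟪T v, M u⟫ = ⟪M u, T v⟫ := real_inner_comm _ _
    rw [h3, h4]; linarith
  intro δ hδ
  set s0 := ‖u‖ + ‖v‖ with hs0
  have hs0nn : (0:ℝ) ≤ s0 := by positivity
  clear_value s0
  have hden : (0:ℝ) < 4 * ((K:ℝ) + ‖T‖ + 1) * (s0 + 1) ^ 2 := by
    have h1 : (0:ℝ) < (K:ℝ) + ‖T‖ + 1 := by positivity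
    have h2 : (0:ℝ) < (s0 + 1) ^ 2 := by nlinarith [hs0nn]
    have h3 : (0:ℝ) < 4 * ((K:ℝ) + ‖T‖ + 1) := by linarith
    exact mul_pos h3 h2
  set θ := δ / (4 * ((K:ℝ) + ‖T‖ + 1) * (s0 + 1) ^ 2) with hθdef
  have hθpos : 0 < θ := div_pos hδ hden
  clear_value θ
  -- little-o bounds and the ball inside U
  have hQo := (hdQ.hasFDerivAt.isLittleO).def hθpos
  rw [Metric.eventually_nhds_iff] at hQo
  obtain ⟨rq, hrq, hQo⟩ := hQo
  rw [← hT] at hQo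
  have hPo := (hdP.hasFDerivAt.isLittleO).def hθpos
  rw [Metric.eventually_nhds_iff] at hPo
  obtain ⟨rp, hrp, hPo⟩ := hPo
  rw [← hM] at hPo
  obtain ⟨rU, hrU, hball⟩ := Metric.isOpen_iff.1 hU x hx
  set m := min rq (min rp rU) with hmdef
  have hmpos : 0 < m := lt_min hrq (lt_min hrp hrU)
  have hmq : m ≤ rq := min_le_left _ _
  have hmp : m ≤ rp := le_trans (min_le_right _ _) (min_le_left _ _)
  have hmU : m ≤ rU := le_trans (min_le_right _ _) (min_le_right _ _)
  clear_value m
  have hs1pos : (0:ℝ) < 2 * (s0 + 1) := by linarith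
  set ε := m / (2 * (s0 + 1)) with hεdef
  have hεpos : 0 < ε := div_pos hmpos hs1pos
  have hεs : ε * s0 < m := by
    rw [hεdef, div_mul_eq_mul_div, div_lt_iff₀ hs1pos]
    nlinarith [mul_pos hmpos (show (0:ℝ) < s0 + 2 by linarith), hmpos, hs0nn]
  clear_value ε
  have hmem : ∀ y : F, ‖y - x‖ ≤ ε * s0 →
      y ∈ U ∧ ‖Q y - Q x - T (y - x)‖ ≤ θ * (ε * s0)
        ∧ ‖P y - P x - M (y - x)‖ ≤ θ * (ε * s0) := by
    intro y hy
    have hlt : ‖y - x‖ < m := lt_of_le_of_lt hy hεs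
    have hdy : dist y x < m := by rwa [dist_eq_norm]
    refine ⟨hball (Metric.mem_ball.2
      (lt_of_lt_of_le hdy hmU)), ?_, ?_⟩
    · refine le_trans (hQo (lt_of_lt_of_le hdy hmq)) ?_
      exact mul_le_mul_of_nonneg_left hy hθpos.le
    · refine le_trans (hPo (lt_of_lt_of_le hdy hmp)) ?_
      exact mul_le_mul_of_nonneg_left hy hθpos.le
  -- norm facts for side vectors
  have hwu : ‖ε • u‖ ≤ ε * s0 := by
    rw [norm_smul, Real.norm_eq_abs, abs_of_nonneg hεpos.le]
    nlinarith [norm_nonneg v, hεpos.le]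
  have hwv : ‖ε • v‖ ≤ ε * s0 := by
    rw [norm_smul, Real.norm_eq_abs, abs_of_nonneg hεpos.le]
    nlinarith [norm_nonneg u, hεpos.le]
  have hwu' : ‖-(ε • u)‖ ≤ ε * s0 := by rwa [norm_neg]
  have hwv' : ‖-(ε • v)‖ ≤ ε * s0 := by rwa [norm_neg]
  -- nearness of the four sides
  have hn1 : ∀ t ∈ Set.uIcc (0:ℝ) 1, ‖x + t • (ε • u) - x‖ ≤ ε * s0 := by
    intro t ht
    rw [Set.uIcc_of_le zero_le_one] at ht
    have he : x + t • (ε • u) - x = (t * ε) • u := by module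
    rw [he, norm_smul, Real.norm_eq_abs,
      abs_of_nonneg (by nlinarith [ht.1, hεpos.le] : (0:ℝ) ≤ t * ε)]
    nlinarith [norm_nonneg u, norm_nonneg v, ht.1, ht.2, hεpos.le,
      mul_nonneg (mul_nonneg (sub_nonneg.2 ht.2) hεpos.le) (norm_nonneg u),
      mul_nonneg (mul_nonneg (sub_nonneg.2 ht.2) hεpos.le) (norm_nonneg v),
      mul_nonneg (mul_nonneg ht.1 hεpos.le) (norm_nonneg u),
      mul_nonneg (mul_nonneg ht.1 hεpos.le) (norm_nonneg v),
      mul_nonneg hεpos.le (norm_nonneg u), mul_nonneg hεpos.le (norm_nonneg v)]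
  have hn2 : ∀ t ∈ Set.uIcc (0:ℝ) 1, ‖x + ε • u + t • (ε • v) - x‖ ≤ ε * s0 := by
    intro t ht
    rw [Set.uIcc_of_le zero_le_one] at ht
    have he : x + ε • u + t • (ε • v) - x = ε • u + (t * ε) • v := by module
    rw [he]
    refine le_trans (norm_add_le _ _) ?_
    rw [norm_smul, norm_smul, Real.norm_eq_abs, Real.norm_eq_abs,
      abs_of_nonneg hεpos.le,
      abs_of_nonneg (by nlinarith [ht.1, hεpos.le] : (0:ℝ) ≤ t * ε)]
    nlinarith [norm_nonneg u, norm_nonneg v, ht.1, ht.2, hεpos.le,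
      mul_nonneg (mul_nonneg (sub_nonneg.2 ht.2) hεpos.le) (norm_nonneg u),
      mul_nonneg (mul_nonneg (sub_nonneg.2 ht.2) hεpos.le) (norm_nonneg v),
      mul_nonneg (mul_nonneg ht.1 hεpos.le) (norm_nonneg u),
      mul_nonneg (mul_nonneg ht.1 hεpos.le) (norm_nonneg v),
      mul_nonneg hεpos.le (norm_nonneg u), mul_nonneg hεpos.le (norm_nonneg v)]
  have hn3 : ∀ t ∈ Set.uIcc (0:ℝ) 1, ‖x + ε • u + ε • v + t • (-(ε • u)) - x‖ ≤ ε * s0 := by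
    intro t ht
    rw [Set.uIcc_of_le zero_le_one] at ht
    have he : x + ε • u + ε • v + t • (-(ε • u)) - x = ((1 - t) * ε) • u + ε • v := by module
    rw [he]
    refine le_trans (norm_add_le _ _) ?_
    rw [norm_smul, norm_smul, Real.norm_eq_abs, Real.norm_eq_abs,
      abs_of_nonneg hεpos.le,
      abs_of_nonneg (by nlinarith [ht.2, hεpos.le] : (0:ℝ) ≤ (1 - t) * ε)]
    nlinarith [norm_nonneg u, norm_nonneg v, ht.1, ht.2, hεpos.le,
      mul_nonneg (mul_nonneg (sub_nonneg.2 ht.2) hεpos.le) (norm_nonneg u),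
      mul_nonneg (mul_nonneg (sub_nonneg.2 ht.2) hεpos.le) (norm_nonneg v),
      mul_nonneg (mul_nonneg ht.1 hεpos.le) (norm_nonneg u),
      mul_nonneg (mul_nonneg ht.1 hεpos.le) (norm_nonneg v),
      mul_nonneg hεpos.le (norm_nonneg u), mul_nonneg hεpos.le (norm_nonneg v)]
  have hn4 : ∀ t ∈ Set.uIcc (0:ℝ) 1, ‖x + ε • v + t • (-(ε • v)) - x‖ ≤ ε * s0 := by
    intro t ht
    rw [Set.uIcc_of_le zero_le_one] at ht
    have he : x + ε • v + t • (-(ε • v)) - x = ((1 - t) * ε) • v := by module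
    rw [he, norm_smul, Real.norm_eq_abs,
      abs_of_nonneg (by nlinarith [ht.2, hεpos.le] : (0:ℝ) ≤ (1 - t) * ε)]
    nlinarith [norm_nonneg u, norm_nonneg v, ht.1, ht.2, hεpos.le,
      mul_nonneg (mul_nonneg (sub_nonneg.2 ht.2) hεpos.le) (norm_nonneg u),
      mul_nonneg (mul_nonneg (sub_nonneg.2 ht.2) hεpos.le) (norm_nonneg v),
      mul_nonneg (mul_nonneg ht.1 hεpos.le) (norm_nonneg u),
      mul_nonneg (mul_nonneg ht.1 hεpos.le) (norm_nonneg v),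
      mul_nonneg hεpos.le (norm_nonneg u), mul_nonneg hεpos.le (norm_nonneg v)]
  have C1nn : (0:ℝ) ≤ ε * s0 := mul_nonneg hεpos.le hs0nn
  -- η-independent per-side facts
  have sideP : ∀ a w : F, (∀ t ∈ Set.uIcc (0:ℝ) 1, ‖a + t • w - x‖ ≤ ε * s0) → ‖w‖ ≤ ε * s0 →
      |(∫ t in (0:ℝ)..1, ⟪P (a + t • w), T w⟫)
          - ∫ t in (0:ℝ)..1, ⟪P x + M (a + t • w - x), T w⟫|
            ≤ (θ * (ε * s0)) * (‖T‖ * (ε * s0))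
        ∧ (∫ t in (0:ℝ)..1, ⟪P x + M (a + t • w - x), T w⟫)
            = ⟪P x + M (a - x), T w⟫ + ⟪M w, T w⟫ / 2 := by
    intro a w hnear hwle
    have hseg : ∀ t ∈ Set.uIcc (0:ℝ) 1, a + t • w ∈ U := fun t ht => (hmem _ (hnear t ht)).1
    have hpathc : Continuous (fun t : ℝ => a + t • w) :=
      continuous_const.add (continuous_id.smul continuous_const)
    have hc1 : ContinuousOn (fun t : ℝ => P (a + t • w)) (Set.uIcc 0 1) :=
      contOn_path hU hPc a w hseg
    have hc2 : ContinuousOn (fun t : ℝ => P x + M (a + t • w - x)) (Set.uIcc 0 1) :=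
      (continuous_const.add (M.continuous.comp (hpathc.sub continuous_const))).continuousOn
    constructor
    · refine le_trans (integral_inner_diff_le (C := θ * (ε * s0)) _ _ (T w) hc1 hc2 ?_) ?_
      · intro t ht
        have h1 := (hmem _ (hnear t ht)).2.2
        have he : P (a + t • w) - (P x + M (a + t • w - x))
            = P (a + t • w) - P x - M (a + t • w - x) := by abel
        rw [he]; exact h1
      · have h1 : ‖T w‖ ≤ ‖T‖ * (ε * s0) :=
          le_trans (T.le_opNorm w) (mul_le_mul_of_nonneg_left hwle (norm_nonneg _))
        exact mul_le_mul_of_nonneg_left h1 (mul_nonneg hθpos.le C1nn)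
    · have he : ∀ t ∈ Set.uIcc (0:ℝ) 1, (fun t : ℝ => (⟪P x + M (a + t • w - x), T w⟫:ℝ)) t
          = (fun t : ℝ => (⟪(P x + M (a - x)) + t • (M w), T w⟫:ℝ)) t := by
        intro t _
        have h2 : a + t • w - x = (a - x) + t • w := by abel
        dsimp only
        rw [h2, map_add, _root_.map_smul, add_assoc]
      rw [intervalIntegral.integral_congr he]
      exact sideC _ _ _
  -- the η-step
  have hstep1 : ∀ η : ℝ, 0 < η →
      |(∫ t in (0:ℝ)..1, ⟪P (x + t • (ε • u)), T (ε • u)⟫)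
        + (∫ t in (0:ℝ)..1, ⟪P (x + ε • u + t • (ε • v)), T (ε • v)⟫)
        + (∫ t in (0:ℝ)..1, ⟪P (x + ε • u + ε • v + t • (-(ε • u))), T (-(ε • u))⟫)
        + (∫ t in (0:ℝ)..1, ⟪P (x + ε • v + t • (-(ε • v))), T (-(ε • v))⟫)|
      ≤ 4 * ((K:ℝ) * (ε * s0) * (η + θ * (ε * s0))) + 4 * (η * (‖T‖ * (ε * s0))) := by
    intro η hη
    obtain ⟨k, hQη, hPη⟩ := hconv η hη
    have side : ∀ a w : F, (∀ t ∈ Set.uIcc (0:ℝ) 1, ‖a + t • w - x‖ ≤ ε * s0) → ‖w‖ ≤ ε * s0 →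
        ((∫ t in (0:ℝ)..1, ⟪fderiv ℝ (Pk k) (a + t • w) w, Qk k (a + t • w) - Q x⟫)
          = (⟪Pk k (a + w), Qk k (a + w) - Q x⟫ - Sk k (a + w))
              - (⟪Pk k a, Qk k a - Q x⟫ - Sk k a))
        ∧ ((∫ t in (0:ℝ)..1, ⟪fderiv ℝ (Pk k) (a + t • w) w, T (a + t • w - x)⟫)
          = (⟪Pk k (a + w), T (a + w - x)⟫ - ⟪Pk k a, T (a - x)⟫)
              - ∫ t in (0:ℝ)..1, ⟪Pk k (a + t • w), T w⟫)
        ∧ |(∫ t in (0:ℝ)..1, ⟪fderiv ℝ (Pk k) (a + t • w) w, Qk k (a + t • w) - Q x⟫)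
            - ∫ t in (0:ℝ)..1, ⟪fderiv ℝ (Pk k) (a + t • w) w, T (a + t • w - x)⟫|
              ≤ (K:ℝ) * (ε * s0) * (η + θ * (ε * s0))
        ∧ |(∫ t in (0:ℝ)..1, ⟪Pk k (a + t • w), T w⟫)
            - ∫ t in (0:ℝ)..1, ⟪P (a + t • w), T w⟫| ≤ η * (‖T‖ * (ε * s0)) := by
      intro a w hnear hwle
      have hseg : ∀ t ∈ Set.uIcc (0:ℝ) 1, a + t • w ∈ U := fun t ht => (hmem _ (hnear t ht)).1
      have hpathc : Continuous (fun t : ℝ => a + t • w) :=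
        continuous_const.add (continuous_id.smul continuous_const)
      refine ⟨sideA hU (hQk1 k) (hPk1 k) (hS1 k) (hexact k) a w (Q x) hseg,
             sideB hU (hPk1 k) T x a w hseg, ?_, ?_⟩
      · refine integral_inner_fderiv_diff_le hU (hPk1 k) (hPkLip k) a w hseg
          (fun t => Qk k (a + t • w) - Q x) (fun t => T (a + t • w - x))
          ((contOn_path hU (hQk1 k).continuousOn a w hseg).sub continuousOn_const)
          ((T.continuous.comp (hpathc.sub continuous_const)).continuousOn) hwle ?_
        intro t ht
        have h1 := hQη _ (hseg t ht)
        have h2 := (hmem _ (hnear t ht)).2.1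
        have he : (Qk k (a + t • w) - Q x) - T (a + t • w - x)
            = (Qk k (a + t • w) - Q (a + t • w))
              + (Q (a + t • w) - Q x - T (a + t • w - x)) := by abel
        rw [he]
        exact le_trans (norm_add_le _ _) (add_le_add h1 h2)
      · refine le_trans (integral_inner_diff_le (C := η) _ _ (T w)
          (contOn_path hU (hPk1 k).continuousOn a w hseg)
          (contOn_path hU hPc a w hseg) ?_) ?_
        · intro t ht; exact hPη _ (hseg t ht)
        · have h1 : ‖T w‖ ≤ ‖T‖ * (ε * s0) :=
            le_trans (T.le_opNorm w) (mul_le_mul_of_nonneg_left hwle (norm_nonneg _))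
          exact mul_le_mul_of_nonneg_left h1 hη.le
    obtain ⟨e1, g1, d1, ad1⟩ := side x (ε • u) hn1 hwu
    obtain ⟨e2, g2, d2, ad2⟩ := side (x + ε • u) (ε • v) hn2 hwv
    obtain ⟨e3, g3, d3, ad3⟩ := side (x + ε • u + ε • v) (-(ε • u)) hn3 hwu'
    obtain ⟨e4, g4, d4, ad4⟩ := side (x + ε • v) (-(ε • v)) hn4 hwv'
    have hend3 : x + ε • u + ε • v + -(ε • u) = x + ε • v := by module
    have hend4 : x + ε • v + -(ε • v) = x := by module
    rw [hend3] at e3 g3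
    rw [hend4] at e4 g4
    have d1' := abs_le.mp d1; have d2' := abs_le.mp d2
    have d3' := abs_le.mp d3; have d4' := abs_le.mp d4
    have ad1' := abs_le.mp ad1; have ad2' := abs_le.mp ad2
    have ad3' := abs_le.mp ad3; have ad4' := abs_le.mp ad4
    rw [abs_le]
    constructor <;>
      linarith [e1, e2, e3, e4, g1, g2, g3, g4, d1'.1, d1'.2, d2'.1, d2'.2, d3'.1, d3'.2,
        d4'.1, d4'.2, ad1'.1, ad1'.2, ad2'.1, ad2'.2, ad3'.1, ad3'.2, ad4'.1, ad4'.2]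
  -- let η → 0
  have hstep2 :
      |(∫ t in (0:ℝ)..1, ⟪P (x + t • (ε • u)), T (ε • u)⟫)
        + (∫ t in (0:ℝ)..1, ⟪P (x + ε • u + t • (ε • v)), T (ε • v)⟫)
        + (∫ t in (0:ℝ)..1, ⟪P (x + ε • u + ε • v + t • (-(ε • u))), T (-(ε • u))⟫)
        + (∫ t in (0:ℝ)..1, ⟪P (x + ε • v + t • (-(ε • v))), T (-(ε • v))⟫)|
      ≤ 4 * ((K:ℝ) * (ε * s0) * (θ * (ε * s0))) := by
    refine le_of_forall_pos_le_add (fun c hc => ?_)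
    have hKnn := NNReal.coe_nonneg K
    have hTnn : (0:ℝ) ≤ ‖T‖ := norm_nonneg _
    have hD : (0:ℝ) < 4 * (K:ℝ) * (ε * s0) + 4 * (‖T‖ * (ε * s0)) + 1 := by
      nlinarith [mul_nonneg hKnn C1nn, mul_nonneg hTnn C1nn]
    obtain ⟨η, hηpos, hηc⟩ :
        ∃ η : ℝ, 0 < η ∧ η * (4 * (K:ℝ) * (ε * s0) + 4 * (‖T‖ * (ε * s0)) + 1) = c :=
      ⟨c / (4 * (K:ℝ) * (ε * s0) + 4 * (‖T‖ * (ε * s0)) + 1),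
        div_pos hc hD, div_mul_cancel₀ _ (ne_of_gt hD)⟩
    have h := hstep1 η hηpos
    nlinarith [h, hηpos.le, hηc, mul_nonneg hKnn C1nn, mul_nonneg hTnn C1nn]
  -- compare with the bilinear model
  obtain ⟨q1, r1⟩ := sideP x (ε • u) hn1 hwu
  obtain ⟨q2, r2⟩ := sideP (x + ε • u) (ε • v) hn2 hwv
  obtain ⟨q3, r3⟩ := sideP (x + ε • u + ε • v) (-(ε • u)) hn3 hwu'
  obtain ⟨q4, r4⟩ := sideP (x + ε • v) (-(ε • v)) hn4 hwv'
  have hBW : (⟪P x + M (x - x), T (ε • u)⟫ + ⟪M (ε • u), T (ε • u)⟫ / 2)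
      + (⟪P x + M (x + ε • u - x), T (ε • v)⟫ + ⟪M (ε • v), T (ε • v)⟫ / 2)
      + (⟪P x + M (x + ε • u + ε • v - x), T (-(ε • u))⟫ + ⟪M (-(ε • u)), T (-(ε • u))⟫ / 2)
      + (⟪P x + M (x + ε • v - x), T (-(ε • v))⟫ + ⟪M (-(ε • v)), T (-(ε • v))⟫ / 2)
      = ε ^ 2 * (⟪M u, T v⟫ - ⟪M v, T u⟫) := by
    have m1 : x - x = (0:F) := sub_self x
    have m2 : x + ε • u - x = ε • u := by module
    have m3 : x + ε • u + ε • v - x = ε • u + ε • v := by module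
    have m4 : x + ε • v - x = ε • v := by module
    rw [m1, m2, m3, m4]
    simp only [map_zero, map_add, _root_.map_smul, map_neg, add_zero,
      inner_add_left, inner_add_right, inner_neg_left, inner_neg_right,
      real_inner_smul_left, real_inner_smul_right]
    ring
  have q1' := abs_le.mp q1; have q2' := abs_le.mp q2
  have q3' := abs_le.mp q3; have q4' := abs_le.mp q4
  have hstep2' := abs_le.mp hstep2
  have hWabs : |ε ^ 2 * (⟪M u, T v⟫ - ⟪M v, T u⟫)|
      ≤ 4 * ((K:ℝ) * (ε * s0) * (θ * (ε * s0))) + 4 * ((θ * (ε * s0)) * (‖T‖ * (ε * s0))) := by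
    rw [abs_le]
    constructor <;>
      linarith [hBW, r1, r2, r3, r4, q1'.1, q1'.2, q2'.1, q2'.2, q3'.1, q3'.2, q4'.1, q4'.2,
        hstep2'.1, hstep2'.2]
  rw [abs_mul, abs_of_nonneg (sq_nonneg ε)] at hWabs
  have hθK : θ * (4 * ((K:ℝ) + ‖T‖ + 1) * (s0 + 1) ^ 2) = δ := by
    rw [hθdef]; exact div_mul_cancel₀ _ (ne_of_gt hden)
  have hfinal : ε ^ 2 * |⟪M u, T v⟫ - ⟪M v, T u⟫| ≤ ε ^ 2 * δ := by
    refine le_trans hWabs ?_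
    have h1 : 4 * ((K:ℝ) * (ε * s0) * (θ * (ε * s0))) + 4 * ((θ * (ε * s0)) * (‖T‖ * (ε * s0)))
        = ε ^ 2 * (4 * θ * s0 ^ 2 * ((K:ℝ) + ‖T‖)) := by ring
    rw [h1]
    refine mul_le_mul_of_nonneg_left ?_ (sq_nonneg ε)
    exact scalar_final hθpos hs0nn (add_nonneg (NNReal.coe_nonneg K) (norm_nonneg _)) hθK
  exact le_of_mul_le_mul_left hfinal (pow_pos hεpos 2)

end KeyMain

/-- For a Lipschitz-exact Lagrangian brane, the almost-everywhere defined
pullback `ι*ω` of the canonical symplectic form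
`ω((a₁,b₁),(a₂,b₂)) = ⟪a₁,b₂⟫ - ⟪a₂,b₁⟫` vanishes almost everywhere on `U`. -/
theorem lipschitz_exact_brane_isotropic_ae (n : ℕ) (U : Set (EuclideanSpace ℝ (Fin n)))
    (hU : IsOpen U) (K : ℝ≥0) (hK : 0 < K)
    (Q P : EuclideanSpace ℝ (Fin n) → EuclideanSpace ℝ (Fin n))
    (S : EuclideanSpace ℝ (Fin n) → ℝ)
    (Qk Pk : ℕ → EuclideanSpace ℝ (Fin n) → EuclideanSpace ℝ (Fin n))
    (Sk : ℕ → EuclideanSpace ℝ (Fin n) → ℝ)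
    (hC1 : ∀ k, ContDiffOn ℝ 1 (fun x => (Qk k x, Pk k x)) U)
    (hS1 : ∀ k, ContDiffOn ℝ 1 (Sk k) U)
    (hιLip : ∀ k, LipschitzOnWith K (fun x => (Qk k x, Pk k x)) U)
    (hSLip : ∀ k, LipschitzOnWith K (Sk k) U)
    (hexact : ∀ k, ∀ x ∈ U, ∀ v,
      fderiv ℝ (Sk k) x v = ⟪Pk k x, fderiv ℝ (Qk k) x v⟫)
    (hιconv : TendstoUniformlyOn (fun k x => (Qk k x, Pk k x)) (fun x => (Q x, P x)) atTop U)
    (hSconv : TendstoUniformlyOn Sk S atTop U) :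
    ∀ᵐ x ∂volume, x ∈ U →
      DifferentiableAt ℝ Q x ∧ DifferentiableAt ℝ P x ∧
        ∀ u v, ⟪fderiv ℝ Q x u, fderiv ℝ P x v⟫ - ⟪fderiv ℝ Q x v, fderiv ℝ P x u⟫ = 0 := by
  have hQk1 : ∀ k, ContDiffOn ℝ 1 (Qk k) U := fun k =>
    (ContinuousLinearMap.fst ℝ (EuclideanSpace ℝ (Fin n))
      (EuclideanSpace ℝ (Fin n))).contDiff.comp_contDiffOn (hC1 k)
  have hPk1 : ∀ k, ContDiffOn ℝ 1 (Pk k) U := fun k =>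
    (ContinuousLinearMap.snd ℝ (EuclideanSpace ℝ (Fin n))
      (EuclideanSpace ℝ (Fin n))).contDiff.comp_contDiffOn (hC1 k)
  have hPkLip : ∀ k, LipschitzOnWith K (Pk k) U := fun k => by
    simpa [Function.comp_def] using LipschitzWith.prod_snd.comp_lipschitzOnWith (hιLip k)
  have hQPLip : LipschitzOnWith K (fun y => (Q y, P y)) U := by
    rw [lipschitzOnWith_iff_dist_le_mul]
    intro y hy z hz
    have h1 : Tendsto (fun k => dist (Qk k y, Pk k y) (Qk k z, Pk k z)) atTop
        (nhds (dist (Q y, P y) (Q z, P z))) :=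
      (hιconv.tendsto_at hy).dist (hιconv.tendsto_at hz)
    exact le_of_tendsto h1 (Eventually.of_forall fun k =>
      lipschitzOnWith_iff_dist_le_mul.1 (hιLip k) y hy z hz)
  have hQLip : LipschitzOnWith K Q U := by
    simpa [Function.comp_def] using LipschitzWith.prod_fst.comp_lipschitzOnWith hQPLip
  have hPLip : LipschitzOnWith K P U := by
    simpa [Function.comp_def] using LipschitzWith.prod_snd.comp_lipschitzOnWith hQPLip
  have hconv : ∀ η : ℝ, 0 < η →
      ∃ k, (∀ y ∈ U, ‖Qk k y - Q y‖ ≤ η) ∧ (∀ y ∈ U, ‖Pk k y - P y‖ ≤ η) := by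
    intro η hη
    obtain ⟨k, hk⟩ := ((Metric.tendstoUniformlyOn_iff.1 hιconv) η hη).exists
    refine ⟨k, fun y hy => ?_, fun y hy => ?_⟩
    · have h := hk y hy
      rw [Prod.dist_eq] at h
      have h2 := lt_of_le_of_lt (le_max_left (dist (Q y) (Qk k y)) (dist (P y) (Pk k y))) h
      rw [← dist_eq_norm, dist_comm]
      exact h2.le
    · have h := hk y hy
      rw [Prod.dist_eq] at h
      have h2 := lt_of_le_of_lt (le_max_right (dist (Q y) (Qk k y)) (dist (P y) (Pk k y))) h
      rw [← dist_eq_norm, dist_comm]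
      exact h2.le
  have radQ := hQLip.ae_differentiableWithinAt_of_mem (μ := volume)
  have radP := hPLip.ae_differentiableWithinAt_of_mem (μ := volume)
  filter_upwards [radQ, radP] with x hqx hpx
  intro hxU
  have dQ : DifferentiableAt ℝ Q x := (hqx hxU).differentiableAt (hU.mem_nhds hxU)
  have dP : DifferentiableAt ℝ P x := (hpx hxU).differentiableAt (hU.mem_nhds hxU)
  exact ⟨dQ, dP, fun u v => key_pointwise hU hQk1 hPk1 hS1 hPkLip hexact
    hPLip.continuousOn hconv hxU dQ dP u v⟩
end

section
/- Under the Lipschitz-exact approximation hypotheses, for every Lipschitz curve c : [0,1] → U one has ∫₀¹ ⟨P(c(t)), (Q∘c)'(t)⟩ dt = S(c(1)) − S(c(0)), where (Q∘c)' denotes the almost-everywhere defined derivative of the Lipschitz map Q∘c : [0,1] → ℝⁿ. In other words, the line integral of the Liouville form θ along ι∘c equals S(c(1)) − S(c(0)). -/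
open scoped RealInnerProductSpace NNReal
open MeasureTheory Filter

section Aux

lemma aux_norm_deriv_le {F : Type*} [NormedAddCommGroup F] [NormedSpace ℝ F]
    {L : ℝ≥0} {f : ℝ → F} (hf : LipschitzWith L f) (t : ℝ) : ‖deriv f t‖ ≤ L := by
  by_cases h : DifferentiableAt ℝ f t
  · have h1 : ‖fderiv ℝ f t‖ ≤ L := h.hasFDerivAt.le_of_lipschitz hf
    rw [← fderiv_apply_one_eq_deriv]
    calc ‖fderiv ℝ f t 1‖ ≤ ‖fderiv ℝ f t‖ * ‖(1:ℝ)‖ := (fderiv ℝ f t).le_opNorm 1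
    _ ≤ L := by simpa using h1
  · rw [deriv_zero_of_not_differentiableAt h]; simp

lemma aux_lip_inner {E : Type*} [NormedAddCommGroup E] [InnerProductSpace ℝ E]
    {f g : ℝ → E} {Lf Lg : ℝ≥0} (hf : LipschitzWith Lf f) (hg : LipschitzWith Lg g)
    {Mf Mg : ℝ} (hMf : ∀ t, ‖f t‖ ≤ Mf) (hMg : ∀ t, ‖g t‖ ≤ Mg) :
    ∃ Lp : ℝ≥0, LipschitzWith Lp (fun t => ⟪f t, g t⟫) := by
  have hMf0 : 0 ≤ Mf := le_trans (norm_nonneg _) (hMf 0)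
  have hMg0 : 0 ≤ Mg := le_trans (norm_nonneg _) (hMg 0)
  refine ⟨Real.toNNReal (Mf * Lg + Lf * Mg), LipschitzWith.of_dist_le_mul fun x y => ?_⟩
  have key : ⟪f x, g x⟫ - ⟪f y, g y⟫ = ⟪f x, g x - g y⟫ + ⟪f x - f y, g y⟫ := by
    rw [inner_sub_right, inner_sub_left]; ring
  rw [Real.dist_eq, key]
  have h1 : |⟪f x, g x - g y⟫| ≤ Mf * (Lg * dist x y) := by
    calc |⟪f x, g x - g y⟫| ≤ ‖f x‖ * ‖g x - g y‖ := abs_real_inner_le_norm _ _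
    _ ≤ Mf * (Lg * dist x y) := by
        apply mul_le_mul (hMf x) _ (norm_nonneg _) hMf0
        rw [← dist_eq_norm]; exact hg.dist_le_mul x y
  have h2 : |⟪f x - f y, g y⟫| ≤ Lf * dist x y * Mg := by
    calc |⟪f x - f y, g y⟫| ≤ ‖f x - f y‖ * ‖g y‖ := abs_real_inner_le_norm _ _
    _ ≤ Lf * dist x y * Mg := by
        apply mul_le_mul _ (hMg y) (norm_nonneg _) (by positivity)
        rw [← dist_eq_norm]; exact hf.dist_le_mul x y
  have hco : (Real.toNNReal (Mf * Lg + Lf * Mg) : ℝ) = Mf * Lg + Lf * Mg := by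
    rw [Real.coe_toNNReal]; positivity
  rw [hco]
  calc |⟪f x, g x - g y⟫ + ⟪f x - f y, g y⟫| ≤ |⟪f x, g x - g y⟫| + |⟪f x - f y, g y⟫| :=
    abs_add_le _ _
  _ ≤ Mf * (Lg * dist x y) + Lf * dist x y * Mg := add_le_add h1 h2
  _ = (Mf * Lg + Lf * Mg) * dist x y := by ring

lemma aux_pair_lip {α : Type*} [PseudoMetricSpace α] {E F : Type*} [PseudoMetricSpace E]
    [PseudoMetricSpace F] {K : ℝ≥0} {f : α → E} {g : α → F} {s : Set α}
    (h : LipschitzOnWith K (fun x => (f x, g x)) s) :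
    LipschitzOnWith K f s ∧ LipschitzOnWith K g s := by
  constructor
  · refine LipschitzOnWith.of_dist_le_mul fun x hx y hy => ?_
    refine le_trans ?_ (h.dist_le_mul x hx y hy)
    rw [Prod.dist_eq]; exact le_max_left _ _
  · refine LipschitzOnWith.of_dist_le_mul fun x hx y hy => ?_
    refine le_trans ?_ (h.dist_le_mul x hx y hy)
    rw [Prod.dist_eq]; exact le_max_right _ _

lemma aux_lip_limit {α E : Type*} [PseudoMetricSpace α] [PseudoMetricSpace E]
    {K : ℝ≥0} {fk : ℕ → α → E} {f : α → E} {s : Set α}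
    (hlip : ∀ k, LipschitzOnWith K (fk k) s)
    (hconv : ∀ x ∈ s, Tendsto (fun k => fk k x) atTop (nhds (f x))) :
    LipschitzOnWith K f s := by
  refine LipschitzOnWith.of_dist_le_mul fun x hx y hy => ?_
  have : Tendsto (fun k => dist (fk k x) (fk k y)) atTop (nhds (dist (f x) (f y))) :=
    (hconv x hx).dist (hconv y hy)
  exact le_of_tendsto this (Eventually.of_forall fun k => (hlip k).dist_le_mul x hx y hy)

lemma aux_lip_sub {E : Type*} [NormedAddCommGroup E] {L₁ L₂ : ℝ≥0} {f g : ℝ → E}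
    (hf : LipschitzWith L₁ f) (hg : LipschitzWith L₂ g) :
    LipschitzWith (L₁ + L₂) (fun t => f t - g t) := by
  refine LipschitzWith.of_dist_le_mul fun x y => ?_
  rw [dist_eq_norm]
  have h0 : f x - g x - (f y - g y) = (f x - f y) - (g x - g y) := by abel
  rw [h0]
  have h1 : ‖f x - f y‖ ≤ (L₁ : ℝ) * dist x y := by
    rw [← dist_eq_norm]; exact hf.dist_le_mul x y
  have h2 : ‖g x - g y‖ ≤ (L₂ : ℝ) * dist x y := by
    rw [← dist_eq_norm]; exact hg.dist_le_mul x y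
  calc ‖(f x - f y) - (g x - g y)‖ ≤ ‖f x - f y‖ + ‖g x - g y‖ := norm_sub_le _ _
  _ ≤ (L₁ : ℝ) * dist x y + (L₂ : ℝ) * dist x y := add_le_add h1 h2
  _ = (↑(L₁ + L₂)) * dist x y := by push_cast; ring

lemma lip_ftc {f : ℝ → ℝ} {L : ℝ≥0} (hf : LipschitzWith L f) :
    ∫ t in Set.Ioc (0:ℝ) 1, deriv f t = f 1 - f 0 := by
  have hcont := hf.continuous
  set F : ℝ → ℝ := fun x => ∫ t in (0:ℝ)..x, f t with hF
  have hFd : ∀ x : ℝ, HasDerivAt F (f x) x := fun x =>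
    (hcont.integral_hasStrictDerivAt 0 x).hasDerivAt
  set h : ℕ → ℝ := fun m => 1/(m+1) with hh
  have hhpos : ∀ m, 0 < h m := fun m => by positivity
  have hhlim : Tendsto h atTop (nhds 0) := by
    simpa [hh] using (tendsto_one_div_add_atTop_nhds_zero_nat : Tendsto (fun n : ℕ => 1 / ((n : ℝ) + 1)) atTop (nhds 0))
  set D : ℕ → ℝ → ℝ := fun m t => (f (t + h m) - f t) / h m with hD
  have hint : ∀ (a b : ℝ), IntervalIntegrable f volume a b := fun a b =>
    hcont.intervalIntegrable a b
  have key : ∀ m, ∫ t in (0:ℝ)..1, D m t = ((F (1 + h m) - F 1) - (F (0 + h m) - F 0)) / h m := by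
    intro m
    have h1 : ∫ t in (0:ℝ)..1, f (t + h m) = F (1 + h m) - F (0 + h m) := by
      rw [intervalIntegral.integral_comp_add_right]
      have := intervalIntegral.integral_interval_sub_left (a := 0) (b := 1 + h m)
        (c := 0 + h m) (hint 0 (1 + h m)) (hint 0 (0 + h m))
      rw [← this]
    have h2 : ∫ t in (0:ℝ)..1, (f (t + h m) - f t) = (F (1 + h m) - F (0 + h m)) - (F 1 - F 0) := by
      rw [intervalIntegral.integral_sub (Continuous.intervalIntegrable
        (by continuity : Continuous fun t => f (t + h m)) 0 1) (hint 0 1), h1]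
      have : ∫ t in (0:ℝ)..1, f t = F 1 - F 0 := by
        simp [hF, intervalIntegral.integral_same]
      rw [this]
    have : ∀ t, D m t = (f (t + h m) - f t) * (h m)⁻¹ := by
      intro t; rw [hD]; ring
    simp_rw [this]
    rw [intervalIntegral.integral_mul_const, h2]
    ring
  have hlimF1 : Tendsto (fun m => (F (1 + h m) - F 1) / h m) atTop (nhds (f 1)) := by
    have hd := (hFd 1)
    rw [hasDerivAt_iff_tendsto_slope] at hd
    have hseq : Tendsto (fun m : ℕ => 1 + h m) atTop (nhdsWithin 1 {(1:ℝ)}ᶜ) := by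
      apply tendsto_nhdsWithin_of_tendsto_nhds_of_eventually_within
      · simpa using tendsto_const_nhds.add hhlim
      · filter_upwards with m
        simp only [Set.mem_compl_iff, Set.mem_singleton_iff]
        intro hcon; nlinarith [hhpos m]
    have := hd.comp hseq
    convert this using 2 with m
    simp [slope, div_eq_inv_mul]
  have hlimF0 : Tendsto (fun m => (F (0 + h m) - F 0) / h m) atTop (nhds (f 0)) := by
    have hd := (hFd 0)
    rw [hasDerivAt_iff_tendsto_slope] at hd
    have hseq : Tendsto (fun m : ℕ => 0 + h m) atTop (nhdsWithin 0 {(0:ℝ)}ᶜ) := by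
      apply tendsto_nhdsWithin_of_tendsto_nhds_of_eventually_within
      · simpa using hhlim
      · filter_upwards with m
        simp only [Set.mem_compl_iff, Set.mem_singleton_iff]
        intro hcon; nlinarith [hhpos m]
    have := hd.comp hseq
    convert this using 2 with m
    simp [slope, div_eq_inv_mul]
  have hlimRHS : Tendsto (fun m => ∫ t in (0:ℝ)..1, D m t) atTop (nhds (f 1 - f 0)) := by
    simp_rw [key]
    have : ∀ m, ((F (1 + h m) - F 1) - (F (0 + h m) - F 0)) / h m
        = (F (1 + h m) - F 1) / h m - (F (0 + h m) - F 0) / h m := fun m => by ring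
    simp_rw [this]
    exact hlimF1.sub hlimF0
  have hmeas : ∀ m, AEStronglyMeasurable (D m) (volume.restrict (Set.Ioc (0:ℝ) 1)) := by
    intro m
    exact ((hcont.comp (by continuity)).sub hcont).div_const _ |>.aestronglyMeasurable
  have hbound : ∀ m, ∀ᵐ t ∂(volume.restrict (Set.Ioc (0:ℝ) 1)), ‖D m t‖ ≤ (L : ℝ) := by
    intro m
    filter_upwards with t
    have : |f (t + h m) - f t| ≤ L * |(t + h m) - t| := by
      have := hf.dist_le_mul (t + h m) t
      simpa [Real.dist_eq] using this
    rw [hD]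
    simp only [norm_div, Real.norm_eq_abs]
    rw [abs_of_pos (hhpos m), div_le_iff₀ (hhpos m)]
    calc |f (t + h m) - f t| ≤ L * |(t + h m) - t| := this
    _ = L * h m := by rw [show (t + h m) - t = h m by ring, abs_of_pos (hhpos m)]
  have hae : ∀ᵐ t ∂(volume.restrict (Set.Ioc (0:ℝ) 1)),
      Tendsto (fun m => D m t) atTop (nhds (deriv f t)) := by
    apply ae_restrict_of_ae
    filter_upwards [hf.ae_differentiableAt_of_real] with t ht
    have hd := ht.hasDerivAt
    rw [hasDerivAt_iff_tendsto_slope] at hd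
    have hseq : Tendsto (fun m : ℕ => t + h m) atTop (nhdsWithin t {t}ᶜ) := by
      apply tendsto_nhdsWithin_of_tendsto_nhds_of_eventually_within
      · simpa using tendsto_const_nhds.add hhlim
      · filter_upwards with m
        simp only [Set.mem_compl_iff, Set.mem_singleton_iff]
        intro hcon; nlinarith [hhpos m]
    have := hd.comp hseq
    convert this using 2 with m
    simp [hD, slope, div_eq_inv_mul]
  have hDCT := tendsto_integral_of_dominated_convergence (μ := volume.restrict (Set.Ioc (0:ℝ) 1))
    (F := D) (f := deriv f) (fun _ => (L:ℝ)) hmeas (integrable_const _) hbound hae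
  have heq : ∀ m, ∫ t in (0:ℝ)..1, D m t = ∫ t in Set.Ioc (0:ℝ) 1, D m t := fun m =>
    intervalIntegral.integral_of_le zero_le_one
  simp_rw [heq] at hlimRHS
  exact tendsto_nhds_unique hDCT hlimRHS

end Aux

set_option maxHeartbeats 2000000

/-- For a Lipschitz-exact Lagrangian brane, the line integral of the
Liouville form `θ` along `ι ∘ c` for any Lipschitz curve `c : [0,1] → U` equals
`S(c 1) - S(c 0)`. -/
theorem lipschitz_exact_brane_line_integral (n : ℕ) (U : Set (EuclideanSpace ℝ (Fin n)))
    (hU : IsOpen U) (K : ℝ≥0) (hK : 0 < K)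
    (Q P : EuclideanSpace ℝ (Fin n) → EuclideanSpace ℝ (Fin n))
    (S : EuclideanSpace ℝ (Fin n) → ℝ)
    (Qk Pk : ℕ → EuclideanSpace ℝ (Fin n) → EuclideanSpace ℝ (Fin n))
    (Sk : ℕ → EuclideanSpace ℝ (Fin n) → ℝ)
    (hC1 : ∀ k, ContDiffOn ℝ 1 (fun x => (Qk k x, Pk k x)) U)
    (hS1 : ∀ k, ContDiffOn ℝ 1 (Sk k) U)
    (hιLip : ∀ k, LipschitzOnWith K (fun x => (Qk k x, Pk k x)) U)
    (hSLip : ∀ k, LipschitzOnWith K (Sk k) U)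
    (hexact : ∀ k, ∀ x ∈ U, ∀ v,
      fderiv ℝ (Sk k) x v = ⟪Pk k x, fderiv ℝ (Qk k) x v⟫)
    (hιconv : TendstoUniformlyOn (fun k x => (Qk k x, Pk k x)) (fun x => (Q x, P x)) atTop U)
    (hSconv : TendstoUniformlyOn Sk S atTop U)
    (c : ℝ → EuclideanSpace ℝ (Fin n)) (Kc : ℝ≥0)
    (hc : LipschitzOnWith Kc c (Set.Icc 0 1))
    (hcU : ∀ t ∈ Set.Icc (0 : ℝ) 1, c t ∈ U) :
    ∫ t in (0 : ℝ)..1, ⟪P (c t), deriv (fun s => Q (c s)) t⟫ = S (c 1) - S (c 0) := by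
  classical
  -- clamping projection onto [0,1]
  set π : ℝ → ℝ := fun t => max 0 (min t 1) with hπdef
  have hπmem : ∀ t, π t ∈ Set.Icc (0:ℝ) 1 :=
    fun t => ⟨le_max_left _ _, max_le zero_le_one (min_le_right _ _)⟩
  have hπid : ∀ t ∈ Set.Icc (0:ℝ) 1, π t = t := fun t ht => by
    simp only [hπdef]
    rw [min_eq_left ht.2, max_eq_right ht.1]
  have hπlip : LipschitzWith 1 π := by
    refine LipschitzWith.of_dist_le_mul fun x y => ?_
    rw [Real.dist_eq, Real.dist_eq]
    simp only [hπdef, NNReal.coe_one, one_mul]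
    calc |max 0 (min x 1) - max 0 (min y 1)| = |max (min x 1) 0 - max (min y 1) 0| := by
          rw [max_comm, max_comm (min y 1)]
    _ ≤ |min x 1 - min y 1| := abs_max_sub_max_le_abs _ _ _
    _ ≤ max |x - y| |1 - 1| := abs_min_sub_min_le_max x 1 y 1
    _ = |x - y| := by simp
  set c₂ : ℝ → EuclideanSpace ℝ (Fin n) := fun t => c (π t) with hc₂def
  have hc₂eq : ∀ t ∈ Set.Icc (0:ℝ) 1, c₂ t = c t := fun t ht => by
    simp only [hc₂def]; rw [hπid t ht]
  have hc₂U : ∀ t, c₂ t ∈ U := fun t => hcU _ (hπmem t)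
  have hc₂lip : LipschitzWith Kc c₂ := by
    have h1 := hc.comp (hπlip.lipschitzOnWith (s := Set.univ)) (fun t _ => hπmem t)
    rw [lipschitzOnWith_univ] at h1
    rw [mul_one] at h1
    exact h1
  -- the limit maps are Lipschitz on U
  have hQPl : LipschitzOnWith K (fun x => (Q x, P x)) U :=
    aux_lip_limit hιLip (fun x hx => hιconv.tendsto_at hx)
  have hQl := (aux_pair_lip hQPl).1
  have hPl := (aux_pair_lip hQPl).2
  have hQkLip : ∀ k, LipschitzOnWith K (Qk k) U := fun k => (aux_pair_lip (hιLip k)).1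
  have hPkLip : ∀ k, LipschitzOnWith K (Pk k) U := fun k => (aux_pair_lip (hιLip k)).2
  -- compositions with c₂ are (K*Kc)-Lipschitz
  have compLip : ∀ {F : Type} [PseudoMetricSpace F]
      {g : EuclideanSpace ℝ (Fin n) → F}, LipschitzOnWith K g U →
      LipschitzWith (K * Kc) (fun t => g (c₂ t)) := by
    intro F _ g hg
    have h1 := hg.comp (hc₂lip.lipschitzOnWith (s := Set.univ)) (fun t _ => hc₂U t)
    rw [lipschitzOnWith_univ] at h1
    exact h1
  set q : ℝ → EuclideanSpace ℝ (Fin n) := fun t => Q (c₂ t) with hqdef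
  set p : ℝ → EuclideanSpace ℝ (Fin n) := fun t => P (c₂ t) with hpdef
  have hqLip : LipschitzWith (K*Kc) q := compLip hQl
  have hpLip : LipschitzWith (K*Kc) p := compLip hPl
  -- compact bound for P on the image of the curve
  have hKset : IsCompact (c '' Set.Icc 0 1) := isCompact_Icc.image_of_continuousOn hc.continuousOn
  have hKsub : c '' Set.Icc 0 1 ⊆ U := by
    rintro x ⟨t, ht, rfl⟩; exact hcU t ht
  obtain ⟨Mp, hMp⟩ : ∃ Mp, ∀ x ∈ c '' Set.Icc 0 1, ‖P x‖ ≤ Mp :=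
    hKset.exists_bound_of_continuousOn (hPl.mono hKsub).continuousOn
  have hpbd : ∀ t, ‖p t‖ ≤ Mp := fun t => hMp _ ⟨π t, hπmem t, rfl⟩
  have hMp0 : 0 ≤ Mp := le_trans (norm_nonneg _) (hpbd 0)
  -- rewrite the interval integral with the clamped curve
  have hIeq : ∫ t in (0:ℝ)..1, ⟪P (c t), deriv (fun s => Q (c s)) t⟫
      = ∫ t in Set.Ioc (0:ℝ) 1, ⟪p t, deriv q t⟫ := by
    rw [intervalIntegral.integral_of_le zero_le_one]
    apply setIntegral_congr_ae measurableSet_Ioc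
    filter_upwards [(Set.countable_singleton (1:ℝ)).ae_notMem volume] with t ht1 htIoc
    have htIoo : t ∈ Set.Ioo (0:ℝ) 1 :=
      ⟨htIoc.1, lt_of_le_of_ne htIoc.2 (by simpa using ht1)⟩
    have htIcc : t ∈ Set.Icc (0:ℝ) 1 := ⟨le_of_lt htIoo.1, le_of_lt htIoo.2⟩
    have hnbhd : Set.Icc (0:ℝ) 1 ∈ nhds t := Icc_mem_nhds htIoo.1 htIoo.2
    have heq : (fun s => Q (c s)) =ᶠ[nhds t] q := by
      filter_upwards [hnbhd] with s hs
      rw [hqdef]; simp only; rw [hc₂eq s hs]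
    rw [heq.deriv_eq, hpdef]
    simp only
    rw [hc₂eq t htIcc]
  rw [hIeq]
  set I := ∫ t in Set.Ioc (0:ℝ) 1, ⟪p t, deriv q t⟫ with hIdef
  -- the ε-estimate
  have main : ∀ ε : ℝ, 0 < ε → ε ≤ 1 →
      |I - (S (c 1) - S (c 0))| ≤ (2*((K:ℝ)*Kc) + 2*Mp + 4) * ε := by

    intro ε hε hε1
    obtain ⟨k, hk1, hk2⟩ := ((Metric.tendstoUniformlyOn_iff.mp hιconv ε hε).and
      (Metric.tendstoUniformlyOn_iff.mp hSconv ε hε)).exists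
    have hPd : ∀ x ∈ U, ‖P x - Pk k x‖ ≤ ε := by
      intro x hx
      have h3 := hk1 x hx
      rw [Prod.dist_eq] at h3
      have h4 := le_trans (le_max_right (dist (Q x) (Qk k x)) _) (le_of_lt h3)
      rwa [dist_eq_norm] at h4
    have hQd : ∀ x ∈ U, ‖Q x - Qk k x‖ ≤ ε := by
      intro x hx
      have h3 := hk1 x hx
      rw [Prod.dist_eq] at h3
      have h4 := le_trans (le_max_left _ (dist (P x) (Pk k x))) (le_of_lt h3)
      rwa [dist_eq_norm] at h4
    have hSd : ∀ x ∈ U, |S x - Sk k x| ≤ ε := by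
      intro x hx
      have h3 := le_of_lt (hk2 x hx)
      rwa [Real.dist_eq] at h3
    set qk : ℝ → EuclideanSpace ℝ (Fin n) := fun t => Qk k (c₂ t) with hqkdef
    set pk : ℝ → EuclideanSpace ℝ (Fin n) := fun t => Pk k (c₂ t) with hpkdef
    set sk : ℝ → ℝ := fun t => Sk k (c₂ t) with hskdef
    have hqkLip : LipschitzWith (K*Kc) qk := compLip (hQkLip k)
    have hpkLip : LipschitzWith (K*Kc) pk := compLip (hPkLip k)
    have hskLip : LipschitzWith (K*Kc) sk := compLip (hSLip k)
    have hppk : ∀ t, ‖p t - pk t‖ ≤ ε := fun t => hPd _ (hc₂U t)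
    have hqqk : ∀ t, ‖q t - qk t‖ ≤ ε := fun t => hQd _ (hc₂U t)
    have hpkbd : ∀ t, ‖pk t‖ ≤ Mp + ε := by
      intro t
      have h0 : pk t = p t - (p t - pk t) := by abel
      rw [h0]
      calc ‖p t - (p t - pk t)‖ ≤ ‖p t‖ + ‖p t - pk t‖ := norm_sub_le _ _
      _ ≤ Mp + ε := add_le_add (hpbd t) (hppk t)
    obtain ⟨Lφ, hφLip⟩ := aux_lip_inner hpkLip (aux_lip_sub hqLip hqkLip) hpkbd hqqk
    set φ : ℝ → ℝ := fun t => ⟪pk t, q t - qk t⟫ with hφdef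
    -- a.e. key identity
    have hkey : ∀ᵐ t ∂(volume : Measure ℝ), ⟪p t, deriv q t⟫ =
        deriv sk t + ⟪p t - pk t, deriv q t⟫ + deriv φ t - ⟪deriv pk t, q t - qk t⟫ := by
      filter_upwards [hc₂lip.ae_differentiableAt_real, hqLip.ae_differentiableAt_real]
        with t htc htq
      have hmem := hc₂U t
      have hUt : U ∈ nhds (c₂ t) := hU.mem_nhds hmem
      have hpairD : DifferentiableAt ℝ (fun x => (Qk k x, Pk k x)) (c₂ t) :=
        (((hC1 k).differentiableOn one_ne_zero) (c₂ t) hmem).differentiableAt hUt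
      have hQkD : DifferentiableAt ℝ (Qk k) (c₂ t) := hpairD.fst
      have hPkD : DifferentiableAt ℝ (Pk k) (c₂ t) := hpairD.snd
      have hSkD : DifferentiableAt ℝ (Sk k) (c₂ t) :=
        (((hS1 k).differentiableOn one_ne_zero) (c₂ t) hmem).differentiableAt hUt
      have hcd : HasDerivAt c₂ (deriv c₂ t) t := htc.hasDerivAt
      have hqk' : HasDerivAt qk (fderiv ℝ (Qk k) (c₂ t) (deriv c₂ t)) t :=
        hQkD.hasFDerivAt.comp_hasDerivAt t hcd
      have hpk' : HasDerivAt pk (fderiv ℝ (Pk k) (c₂ t) (deriv c₂ t)) t :=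
        hPkD.hasFDerivAt.comp_hasDerivAt t hcd
      have hsk' : HasDerivAt sk (fderiv ℝ (Sk k) (c₂ t) (deriv c₂ t)) t :=
        hSkD.hasFDerivAt.comp_hasDerivAt t hcd
      have hq' : HasDerivAt q (deriv q t) t := htq.hasDerivAt
      have hφ' : HasDerivAt φ
          (⟪pk t, deriv q t - fderiv ℝ (Qk k) (c₂ t) (deriv c₂ t)⟫
            + ⟪fderiv ℝ (Pk k) (c₂ t) (deriv c₂ t), q t - qk t⟫) t :=
        HasDerivAt.inner ℝ hpk' (hq'.sub hqk')
      have e1 : deriv sk t = ⟪pk t, fderiv ℝ (Qk k) (c₂ t) (deriv c₂ t)⟫ := by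
        rw [hsk'.deriv]; exact hexact k (c₂ t) hmem (deriv c₂ t)
      rw [e1, hφ'.deriv, hpk'.deriv, inner_sub_left, inner_sub_right]
      ring
    -- measurability and integrability of the four pieces
    have m1 : AEStronglyMeasurable (fun t => deriv sk t) (volume.restrict (Set.Ioc (0:ℝ) 1)) :=
      (stronglyMeasurable_deriv sk).aestronglyMeasurable
    have m2 : AEStronglyMeasurable (fun t => ⟪p t - pk t, deriv q t⟫)
        (volume.restrict (Set.Ioc (0:ℝ) 1)) :=
      (((hpLip.continuous.sub hpkLip.continuous).measurable).inner
        (measurable_deriv q)).aestronglyMeasurable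
    have m3 : AEStronglyMeasurable (fun t => deriv φ t) (volume.restrict (Set.Ioc (0:ℝ) 1)) :=
      (stronglyMeasurable_deriv φ).aestronglyMeasurable
    have m4 : AEStronglyMeasurable (fun t => ⟪deriv pk t, q t - qk t⟫)
        (volume.restrict (Set.Ioc (0:ℝ) 1)) :=
      ((measurable_deriv pk).inner
        ((hqLip.continuous.sub hqkLip.continuous).measurable)).aestronglyMeasurable
    have hKKc0 : (0:ℝ) ≤ (K:ℝ) * Kc := by positivity
    have b1 : ∀ t, ‖deriv sk t‖ ≤ (K:ℝ) * Kc := by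
      intro t; have := aux_norm_deriv_le hskLip t; rwa [NNReal.coe_mul] at this
    have bq : ∀ t, ‖deriv q t‖ ≤ (K:ℝ) * Kc := by
      intro t; have := aux_norm_deriv_le hqLip t; rwa [NNReal.coe_mul] at this
    have bpk : ∀ t, ‖deriv pk t‖ ≤ (K:ℝ) * Kc := by
      intro t; have := aux_norm_deriv_le hpkLip t; rwa [NNReal.coe_mul] at this
    have b2 : ∀ t, ‖⟪p t - pk t, deriv q t⟫‖ ≤ ε * ((K:ℝ) * Kc) := by
      intro t
      rw [Real.norm_eq_abs]
      calc |⟪p t - pk t, deriv q t⟫| ≤ ‖p t - pk t‖ * ‖deriv q t‖ := abs_real_inner_le_norm _ _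
      _ ≤ ε * ((K:ℝ) * Kc) := mul_le_mul (hppk t) (bq t) (norm_nonneg _) (le_of_lt hε)
    have b3 : ∀ t, ‖deriv φ t‖ ≤ (Lφ : ℝ) := fun t => aux_norm_deriv_le hφLip t
    have b4 : ∀ t, ‖⟪deriv pk t, q t - qk t⟫‖ ≤ ((K:ℝ) * Kc) * ε := by
      intro t
      rw [Real.norm_eq_abs]
      calc |⟪deriv pk t, q t - qk t⟫| ≤ ‖deriv pk t‖ * ‖q t - qk t‖ := abs_real_inner_le_norm _ _
      _ ≤ ((K:ℝ) * Kc) * ε := mul_le_mul (bpk t) (hqqk t) (norm_nonneg _) hKKc0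
    have i1 : Integrable (fun t => deriv sk t) (volume.restrict (Set.Ioc (0:ℝ) 1)) :=
      Integrable.mono' (integrable_const _) m1 (ae_of_all _ b1)
    have i2 : Integrable (fun t => ⟪p t - pk t, deriv q t⟫)
        (volume.restrict (Set.Ioc (0:ℝ) 1)) :=
      Integrable.mono' (integrable_const _) m2 (ae_of_all _ b2)
    have i3 : Integrable (fun t => deriv φ t) (volume.restrict (Set.Ioc (0:ℝ) 1)) :=
      Integrable.mono' (integrable_const _) m3 (ae_of_all _ b3)
    have i4 : Integrable (fun t => ⟪deriv pk t, q t - qk t⟫)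
        (volume.restrict (Set.Ioc (0:ℝ) 1)) :=
      Integrable.mono' (integrable_const _) m4 (ae_of_all _ b4)
    -- split the integral
    have hsplit : I = (∫ t in Set.Ioc (0:ℝ) 1, deriv sk t)
        + (∫ t in Set.Ioc (0:ℝ) 1, ⟪p t - pk t, deriv q t⟫)
        + (∫ t in Set.Ioc (0:ℝ) 1, deriv φ t)
        - (∫ t in Set.Ioc (0:ℝ) 1, ⟪deriv pk t, q t - qk t⟫) := by
      rw [hIdef]
      rw [setIntegral_congr_ae measurableSet_Ioc (hkey.mono fun t ht _ => ht)]
      have i12 : Integrable (fun t => deriv sk t + ⟪p t - pk t, deriv q t⟫)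
          (volume.restrict (Set.Ioc (0:ℝ) 1)) := i1.add i2
      have i123 : Integrable (fun t => deriv sk t + ⟪p t - pk t, deriv q t⟫ + deriv φ t)
          (volume.restrict (Set.Ioc (0:ℝ) 1)) := i12.add i3
      rw [integral_sub i123 i4, integral_add i12 i3, integral_add i1 i2]
    -- the FTC values
    have v1 : ∫ t in Set.Ioc (0:ℝ) 1, deriv sk t = sk 1 - sk 0 := lip_ftc hskLip
    have v3 : ∫ t in Set.Ioc (0:ℝ) 1, deriv φ t = φ 1 - φ 0 := lip_ftc hφLip
    -- integral norm bounds
    have hsfin : volume (Set.Ioc (0:ℝ) 1) < ⊤ := by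
      rw [Real.volume_Ioc]; exact ENNReal.ofReal_lt_top
    have hμ1 : (volume (Set.Ioc (0:ℝ) 1)).toReal = 1 := by
      rw [Real.volume_Ioc]; norm_num
    have n2 : |∫ t in Set.Ioc (0:ℝ) 1, ⟪p t - pk t, deriv q t⟫| ≤ ε * ((K:ℝ) * Kc) := by
      have := norm_setIntegral_le_of_norm_le_const_ae hsfin
        (ae_of_all _ (fun t => b2 t) :
          ∀ᵐ t ∂(volume.restrict (Set.Ioc (0:ℝ) 1)),
            ‖⟪p t - pk t, deriv q t⟫‖ ≤ ε * ((K:ℝ) * Kc))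
      rw [measureReal_def, hμ1, mul_one] at this
      rwa [Real.norm_eq_abs] at this
    have n4 : |∫ t in Set.Ioc (0:ℝ) 1, ⟪deriv pk t, q t - qk t⟫| ≤ ((K:ℝ) * Kc) * ε := by
      have := norm_setIntegral_le_of_norm_le_const_ae hsfin
        (ae_of_all _ (fun t => b4 t) :
          ∀ᵐ t ∂(volume.restrict (Set.Ioc (0:ℝ) 1)),
            ‖⟪deriv pk t, q t - qk t⟫‖ ≤ ((K:ℝ) * Kc) * ε)
      rw [measureReal_def, hμ1, mul_one] at this
      rwa [Real.norm_eq_abs] at this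
    -- endpoint bounds
    have h0Icc : (0:ℝ) ∈ Set.Icc (0:ℝ) 1 := by norm_num
    have h1Icc : (1:ℝ) ∈ Set.Icc (0:ℝ) 1 := by norm_num
    have hSd1 : |sk 1 - S (c 1)| ≤ ε := by
      rw [hskdef]; simp only
      rw [hc₂eq 1 h1Icc, abs_sub_comm]
      exact hSd (c 1) (hcU 1 h1Icc)
    have hSd0 : |sk 0 - S (c 0)| ≤ ε := by
      rw [hskdef]; simp only
      rw [hc₂eq 0 h0Icc, abs_sub_comm]
      exact hSd (c 0) (hcU 0 h0Icc)
    have hφbd : ∀ t, |φ t| ≤ (Mp + 1) * ε := by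
      intro t
      calc |φ t| ≤ ‖pk t‖ * ‖q t - qk t‖ := abs_real_inner_le_norm _ _
      _ ≤ (Mp + ε) * ε := mul_le_mul (hpkbd t) (hqqk t) (norm_nonneg _) (by linarith)
      _ ≤ (Mp + 1) * ε := by nlinarith
    -- assemble
    rw [hsplit, v1, v3]
    have a1 := abs_le.mp hSd1
    have a0 := abs_le.mp hSd0
    have a2 := abs_le.mp n2
    have a4 := abs_le.mp n4
    have a31 := abs_le.mp (hφbd 1)
    have a30 := abs_le.mp (hφbd 0)
    rw [abs_le]
    constructor <;> [skip; skip] <;> nlinarith [hKKc0, hMp0, hε.le, hε1]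

  -- conclusion
  set C : ℝ := 2*((K:ℝ)*Kc) + 2*Mp + 4 with hCdef
  have hC : 0 < C := by positivity
  have habs : |I - (S (c 1) - S (c 0))| ≤ 0 := by
    refine le_of_forall_pos_le_add fun δ hδ => ?_
    have h1 : 0 < min (δ / C) 1 := lt_min (by positivity) one_pos
    calc |I - (S (c 1) - S (c 0))| ≤ C * min (δ / C) 1 :=
      main _ h1 (min_le_right _ _)
    _ ≤ C * (δ / C) := by
        apply mul_le_mul_of_nonneg_left (min_le_left _ _) (le_of_lt hC)
    _ = δ := by field_simp
    _ = 0 + δ := by ring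
  have : I - (S (c 1) - S (c 0)) = 0 := by
    have := abs_nonneg (I - (S (c 1) - S (c 0)))
    have h0 : |I - (S (c 1) - S (c 0))| = 0 := le_antisymm habs this
    exact abs_eq_zero.mp h0
  linarith
end

section
/- Let v : ℝⁿ → ℝ be a differentiable function whose gradient ∇v is bounded and Lipschitz, and set Γ_v(q) := (q, ∇v(q)). Let φ : ℝⁿ × ℝⁿ → ℝⁿ × ℝⁿ and g : ℝⁿ × ℝⁿ → ℝ be smooth Lipschitz maps satisfying φ*θ − θ = dg, i.e. θ_{φ(y)}(Dφ(y)w) = θ_y(w) + Dg(y)w for all y and all tangent vectors w. Set ι := φ ∘ Γ_v and S := v + g ∘ Γ_v. Then there exist a constant K > 0 and sequences of smooth maps ι_k : ℝⁿ → ℝⁿ × ℝⁿ and smooth functions S_k : ℝⁿ → ℝ, all K-Lipschitz, such that writing ι_k = (Q_k,P_k) one has DS_k(x)v' = ⟨P_k(x), DQ_k(x)v'⟩ for all k, x, v' (i.e. ι_k*θ = dS_k), and ι_k → ι and S_k → S uniformly on ℝⁿ. In particular (ℝⁿ, ι, S) is a Lipschitz-exact Lagrangian brane. -/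
open MeasureTheory ContinuousLinearMap Metric
open scoped RealInnerProductSpace NNReal Convolution Topology
set_option maxHeartbeats 1000000
set_option synthInstance.maxHeartbeats 200000
noncomputable section

lemma supp_smul {α X : Type*} [Zero X] [SMulWithZero ℝ X] (ρ : α → ℝ) (g : α → X) :
    (Function.support fun t => ρ t • g t) ⊆ Function.support ρ := fun t ht => by
  simp only [Function.mem_support] at *
  intro h; exact ht (by rw [h]; exact zero_smul ℝ (g t))

local notation "Eu" n => EuclideanSpace ℝ (Fin n)

lemma mollify (n k : ℕ) (v : (Eu n) → ℝ) (hv : Differentiable ℝ v)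
    (Cv : ℝ) (hbdd : ∀ x, ‖fderiv ℝ v x‖ ≤ Cv)
    (Kv : ℝ≥0) (hlip : LipschitzWith Kv (fderiv ℝ v)) :
    ∃ w : (Eu n) → ℝ, ContDiff ℝ (⊤ : ℕ∞) w ∧
      (∀ x, ‖fderiv ℝ w x‖ ≤ Cv + 2 * Kv) ∧ LipschitzWith Kv (fderiv ℝ w) ∧
      (∀ x, dist (w x) (v x) ≤ Cv * (2 * ((k:ℝ)+1)⁻¹)) ∧
      (∀ x, dist (fderiv ℝ w x) (fderiv ℝ v x) ≤ (Kv:ℝ) * (2 * ((k:ℝ)+1)⁻¹)) := by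
  have hk1 : (0:ℝ) < ((k:ℝ)+1)⁻¹ := by positivity
  set r : ℝ := 2 * ((k:ℝ)+1)⁻¹ with hr
  have hrpos : 0 < r := by positivity
  have hrle2 : r ≤ 2 := by
    have : ((k:ℝ)+1)⁻¹ ≤ 1 := by
      rw [inv_le_one_iff₀]; right; linarith [Nat.cast_nonneg (α := ℝ) k]
    linarith
  set ρb : ContDiffBump (0 : Eu n) := ⟨((k:ℝ)+1)⁻¹, r, hk1, by rw [hr]; linarith⟩ with hρb
  have hrOut : ρb.rOut = r := rfl
  set ρ : (Eu n) → ℝ := ρb.normed volume with hρ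
  have hρc : HasCompactSupport ρ := ρb.hasCompactSupport_normed
  have hρs : ContDiff ℝ (⊤ : ℕ∞) ρ := ρb.contDiff_normed
  have hρnn : ∀ x, 0 ≤ ρ x := ρb.nonneg_normed
  have hρint : Integrable ρ volume := ρb.integrable_normed
  have hρ1 : ∫ x, ρ x = 1 := ρb.integral_normed
  have hvc : Continuous v := hv.continuous
  have hDvc : Continuous (fderiv ℝ v) := hlip.continuous
  set w : (Eu n) → ℝ := ρ ⋆[lsmul ℝ ℝ, volume] v with hw
  set w' : (Eu n) → ((Eu n) →L[ℝ] ℝ) := ρ ⋆[lsmul ℝ ℝ, volume] (fderiv ℝ v) with hw'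
  have hcontF : ∀ x : Eu n, Continuous (fun t => ρ t • v (x - t)) := fun x =>
    hρs.continuous.smul (hvc.comp (continuous_const.sub continuous_id))
  have hcontF' : ∀ x : Eu n, Continuous (fun t => ρ t • fderiv ℝ v (x - t)) := fun x =>
    hρs.continuous.smul (hDvc.comp (continuous_const.sub continuous_id))
  have hintF' : ∀ x : Eu n, Integrable (fun t => ρ t • fderiv ℝ v (x - t)) volume := by
    intro x
    exact Continuous.integrable_of_hasCompactSupport (hcontF' x)
      (hρc.mono (supp_smul ρ _))
  -- derivative of w
  have hder : ∀ x, HasFDerivAt w (w' x) x := by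
    intro x₀
    have key : HasFDerivAt (fun x => ∫ t, ρ t • v (x - t))
        (∫ t, ρ t • fderiv ℝ v (x₀ - t)) x₀ := by
      apply hasFDerivAt_integral_of_dominated_of_fderiv_le
        (F := fun x t => ρ t • v (x - t)) (F' := fun x t => ρ t • fderiv ℝ v (x - t))
        (bound := fun t => ρ t * (Cv + 0)) (s := Set.univ) (hs := Filter.univ_mem)
      · exact Filter.Eventually.of_forall fun x => (hcontF x).aestronglyMeasurable
      · exact Continuous.integrable_of_hasCompactSupport (hcontF x₀)
          (hρc.mono (supp_smul ρ _))
      · exact (hcontF' x₀).aestronglyMeasurable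
      · refine Filter.Eventually.of_forall fun t => fun x _ => ?_
        have hns : ‖ρ t • fderiv ℝ v (x - t)‖ = ‖ρ t‖ * ‖fderiv ℝ v (x - t)‖ := norm_smul _ _
        rw [hns, Real.norm_eq_abs, abs_of_nonneg (hρnn t)]
        have := hbdd (x - t)
        nlinarith [hρnn t, norm_nonneg (fderiv ℝ v (x - t))]
      · exact hρint.mul_const _
      · refine Filter.Eventually.of_forall fun t => fun x _ => ?_
        have h1 : HasFDerivAt (fun x : Eu n => v (x - t)) (fderiv ℝ v (x - t)) x := by
          have := (hv (x - t)).hasFDerivAt.comp x ((hasFDerivAt_id x).sub_const t)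
          rw [ContinuousLinearMap.comp_id] at this
          exact this
        exact h1.const_smul (ρ t)
    have e1 : (fun x => ∫ t, ρ t • v (x - t)) = w := by
      funext x; rw [hw, convolution_def]; simp
    have e2 : (∫ t, ρ t • fderiv ℝ v (x₀ - t)) = w' x₀ := by
      rw [hw', convolution_def]; simp
    rwa [e1, e2] at key
  have hfder : ∀ x, fderiv ℝ w x = w' x := fun x => (hder x).fderiv
  -- closeness of derivative
  have hclose' : ∀ x, dist (w' x) (fderiv ℝ v x) ≤ (Kv:ℝ) * r := by
    intro x
    apply ContDiffBump.dist_normed_convolution_le hDvc.aestronglyMeasurable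
    intro y hy
    calc dist (fderiv ℝ v y) (fderiv ℝ v x) ≤ Kv * dist y x := hlip.dist_le_mul y x
    _ ≤ Kv * r := by
        have h2 := (mem_ball.1 hy).le
        rw [hrOut] at h2
        exact mul_le_mul_of_nonneg_left h2 Kv.coe_nonneg
  -- closeness of w
  have hvlip : ∀ y x : Eu n, dist (v y) (v x) ≤ Cv * dist y x := by
    intro y x
    rw [dist_eq_norm, dist_eq_norm]
    exact Convex.norm_image_sub_le_of_norm_fderiv_le
      (fun z _ => hv z) (fun z _ => hbdd z)
      convex_univ (Set.mem_univ x) (Set.mem_univ y)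
  have hCv0 : 0 ≤ Cv := le_trans (norm_nonneg _) (hbdd 0)
  have hclose : ∀ x, dist (w x) (v x) ≤ Cv * r := by
    intro x
    apply ContDiffBump.dist_normed_convolution_le hvc.aestronglyMeasurable
    intro y hy
    calc dist (v y) (v x) ≤ Cv * dist y x := hvlip y x
    _ ≤ Cv * r := by
        have h2 := (mem_ball.1 hy).le
        rw [hrOut] at h2
        exact mul_le_mul_of_nonneg_left h2 hCv0
  -- Lipschitz of w'
  have hwlip : LipschitzWith Kv w' := by
    apply LipschitzWith.of_dist_le_mul
    intro x y
    have ew : ∀ z : Eu n, w' z = ∫ t, ρ t • fderiv ℝ v (z - t) := by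
      intro z; rw [hw', convolution_def]; simp
    rw [dist_eq_norm, ew x, ew y, ← integral_sub (hintF' x) (hintF' y)]
    calc ‖∫ t, (ρ t • fderiv ℝ v (x - t) - ρ t • fderiv ℝ v (y - t))‖
        ≤ ∫ t, ρ t * ((Kv:ℝ) * dist x y) := by
          apply norm_integral_le_of_norm_le ((hρint.mul_const _))
          refine Filter.Eventually.of_forall fun t => ?_
          rw [← smul_sub]
          have hns : ‖ρ t • (fderiv ℝ v (x - t) - fderiv ℝ v (y - t))‖
              = ‖ρ t‖ * ‖fderiv ℝ v (x - t) - fderiv ℝ v (y - t)‖ := norm_smul _ _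
          rw [hns, Real.norm_eq_abs, abs_of_nonneg (hρnn t)]
          apply mul_le_mul_of_nonneg_left _ (hρnn t)
          have h3 := hlip.dist_le_mul (x - t) (y - t)
          rw [dist_eq_norm] at h3 ⊢
          calc ‖fderiv ℝ v (x - t) - fderiv ℝ v (y - t)‖ ≤ (Kv:ℝ) * ‖x - t - (y - t)‖ := h3
          _ = (Kv:ℝ) * ‖x - y‖ := by rw [sub_sub_sub_cancel_right]
          _ = (Kv:ℝ) * dist x y := by rw [dist_eq_norm]
      _ = (Kv:ℝ) * dist x y := by
          rw [integral_mul_const, hρ1, one_mul]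
  -- bound on w'
  have hwbdd : ∀ x, ‖w' x‖ ≤ Cv + 2 * Kv := by
    intro x
    have h1 := hclose' x
    have h2 := hbdd x
    rw [dist_eq_norm] at h1
    have h4 := norm_sub_norm_le (w' x) (fderiv ℝ v x)
    have hKr : (Kv:ℝ) * r ≤ 2 * Kv := by nlinarith [Kv.coe_nonneg]
    linarith
  refine ⟨w, ?_, ?_, ?_, hclose, ?_⟩
  · exact hρc.contDiff_convolution_left _ hρs (hvc.locallyIntegrable)
  · intro x; rw [hfder]; exact hwbdd x
  · have h5 : (fderiv ℝ w) = w' := funext hfder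
    rw [h5]; exact hwlip
  · intro x; rw [hfder]; exact hclose' x

open Filter

lemma tendstoUniformly_of_dist_le {α β : Type*} [PseudoMetricSpace β]
    (F : ℕ → α → β) (f : α → β) (c : ℕ → ℝ)
    (h : ∀ k x, dist (F k x) (f x) ≤ c k) (hc : Tendsto c atTop (nhds 0)) :
    TendstoUniformly F f atTop := by
  rw [Metric.tendstoUniformly_iff]
  intro ε hε
  filter_upwards [hc.eventually_lt_const hε] with k hk x
  exact lt_of_le_of_lt (by rw [dist_comm]; exact h k x) hk

lemma tendsto_aux (C : ℝ) : Tendsto (fun k : ℕ => C * (2 * ((k:ℝ)+1)⁻¹)) atTop (nhds 0) := by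
  have h := tendsto_one_div_add_atTop_nhds_zero_nat.const_mul (C * 2)
  rw [mul_zero] at h
  convert h using 2 with k
  field_simp

/-- Graphs of `C^{1,1}` functions composed with exact symplectomorphisms are
Lipschitz-exact: `ι := φ ∘ Γ_v` and `S := v + g ∘ Γ_v` admit an approximating equi-Lipschitz
sequence of smooth exact Lagrangian embeddings with smooth primitives. -/
theorem graph_compose_exact_symplectomorphism_is_lipschitz_exact (n : ℕ)
    (v : EuclideanSpace ℝ (Fin n) → ℝ) (hv : Differentiable ℝ v)
    (Cv : ℝ) (hvbdd : ∀ x, ‖gradient v x‖ ≤ Cv)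
    (Kv : ℝ≥0) (hvlip : LipschitzWith Kv (gradient v))
    (φ : EuclideanSpace ℝ (Fin n) × EuclideanSpace ℝ (Fin n) →
      EuclideanSpace ℝ (Fin n) × EuclideanSpace ℝ (Fin n))
    (hφ : ContDiff ℝ (⊤ : ℕ∞) φ) (Kφ : ℝ≥0) (hφlip : LipschitzWith Kφ φ)
    (g : EuclideanSpace ℝ (Fin n) × EuclideanSpace ℝ (Fin n) → ℝ)
    (hg : ContDiff ℝ (⊤ : ℕ∞) g) (Kg : ℝ≥0) (hglip : LipschitzWith Kg g)
    (hexact : ∀ y w, ⟪(φ y).2, (fderiv ℝ φ y w).1⟫ = ⟪y.2, w.1⟫ + fderiv ℝ g y w) :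
    ∃ (K : ℝ≥0), 0 < K ∧
      ∃ (Qk Pk : ℕ → EuclideanSpace ℝ (Fin n) → EuclideanSpace ℝ (Fin n))
        (Sk : ℕ → EuclideanSpace ℝ (Fin n) → ℝ),
        (∀ k, ContDiff ℝ (⊤ : ℕ∞) (fun x => (Qk k x, Pk k x))) ∧
        (∀ k, ContDiff ℝ (⊤ : ℕ∞) (Sk k)) ∧
        (∀ k, LipschitzWith K (fun x => (Qk k x, Pk k x))) ∧
        (∀ k, LipschitzWith K (Sk k)) ∧
        (∀ k x v', fderiv ℝ (Sk k) x v' = ⟪Pk k x, fderiv ℝ (Qk k) x v'⟫) ∧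
        TendstoUniformly (fun k x => (Qk k x, Pk k x))
          (fun x => φ (x, gradient v x)) atTop ∧
        TendstoUniformly Sk (fun x => v x + g (x, gradient v x)) atTop := by
  set e := InnerProductSpace.toDual ℝ (EuclideanSpace ℝ (Fin n)) with he
  have hfd : ∀ (f : (Eu n) → ℝ) x, fderiv ℝ f x = e (gradient f x) := by
    intro f x; rw [gradient]; simp [he]
  have hbdd' : ∀ x, ‖fderiv ℝ v x‖ ≤ Cv := by
    intro x; rw [hfd v x, e.norm_map]; exact hvbdd x
  have hlip' : LipschitzWith Kv (fderiv ℝ v) := by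
    have h1 : (fderiv ℝ v) = fun x => e (gradient v x) := funext fun x => hfd v x
    rw [h1]
    have := e.isometry.lipschitz.comp hvlip
    rwa [one_mul] at this
  choose w hws hwb hwl hwc hwc' using fun k => mollify n k v hv Cv hbdd' Kv hlip'
  -- gradient facts
  have hGlip : ∀ k, LipschitzWith Kv (gradient (w k)) := by
    intro k
    have h1 : gradient (w k) = fun x => e.symm (fderiv ℝ (w k) x) := rfl
    rw [h1]
    have := e.symm.isometry.lipschitz.comp (hwl k)
    rwa [one_mul] at this
  have hGclose : ∀ k x, dist (gradient (w k) x) (gradient v x) ≤ (Kv:ℝ) * (2*((k:ℝ)+1)⁻¹) := by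
    intro k x
    have h1 : gradient (w k) x = e.symm (fderiv ℝ (w k) x) := rfl
    have h2 : gradient v x = e.symm (fderiv ℝ v x) := rfl
    rw [h1, h2, e.symm.dist_map]
    exact hwc' k x
  have hGcd : ∀ k, ContDiff ℝ (⊤ : ℕ∞) (gradient (w k)) := by
    intro k
    have h1 : gradient (w k) = fun x => e.symm (fderiv ℝ (w k) x) := rfl
    rw [h1]
    exact e.symm.contDiff.comp ((hws k).fderiv_right (by simp))
  set Γ : ℕ → (Eu n) → (Eu n) × (Eu n) := fun k x => (x, gradient (w k) x) with hΓ
  have hΓcd : ∀ k, ContDiff ℝ (⊤ : ℕ∞) (Γ k) := fun k => contDiff_id.prodMk (hGcd k)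
  have hΓlip : ∀ k, LipschitzWith (max 1 Kv) (Γ k) := fun k =>
    LipschitzWith.prodMk LipschitzWith.id (hGlip k)
  refine ⟨max (Kφ * max 1 Kv) (Real.toNNReal (Cv + 2*Kv) + Kg * max 1 Kv) + 1,
    lt_of_lt_of_le one_pos le_add_self,
    fun k x => (φ (Γ k x)).1, fun k x => (φ (Γ k x)).2,
    fun k x => w k x + g (Γ k x), ?_, ?_, ?_, ?_, ?_, ?_, ?_⟩
  · intro k
    exact hφ.comp (hΓcd k)
  · intro k
    exact (hws k).add (hg.comp (hΓcd k))
  · intro k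
    have : LipschitzWith (Kφ * max 1 Kv) (fun x => φ (Γ k x)) := hφlip.comp (hΓlip k)
    exact this.weaken ((le_max_left _ _).trans le_self_add)
  · intro k
    have hCv0 : (0:ℝ) ≤ Cv := le_trans (norm_nonneg _) (hvbdd 0)
    have hwLip : LipschitzWith (Real.toNNReal (Cv + 2*Kv)) (w k) := by
      apply lipschitzWith_of_nnnorm_fderiv_le ((hws k).differentiable (by simp))
      intro x
      rw [← NNReal.coe_le_coe, coe_nnnorm, Real.coe_toNNReal _ (by positivity)]
      exact hwb k x
    have := hwLip.add (hglip.comp (hΓlip k))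
    exact this.weaken ((le_max_right _ _).trans le_self_add)
  · intro k x v'
    set y := Γ k x with hy
    have hΓd : HasFDerivAt (Γ k)
        ((ContinuousLinearMap.id ℝ (Eu n)).prod (fderiv ℝ (gradient (w k)) x)) x :=
      (hasFDerivAt_id x).prodMk (((hGcd k).differentiable (by simp) x).hasFDerivAt)
    set D := (ContinuousLinearMap.id ℝ (Eu n)).prod (fderiv ℝ (gradient (w k)) x) with hD
    have hφΓ : HasFDerivAt (fun x => φ (Γ k x)) ((fderiv ℝ φ y).comp D) x :=
      ((hφ.differentiable (by simp)) y).hasFDerivAt.comp x hΓd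
    have hQ : HasFDerivAt (fun x => (φ (Γ k x)).1)
        ((ContinuousLinearMap.fst ℝ _ _).comp ((fderiv ℝ φ y).comp D)) x := hφΓ.fst
    have hS : HasFDerivAt (fun x => w k x + g (Γ k x))
        ((fderiv ℝ (w k) x) + (fderiv ℝ g y).comp D) x :=
      (((hws k).differentiable (by simp) x).hasFDerivAt).add
        (((hg.differentiable (by simp)) y).hasFDerivAt.comp x hΓd)
    rw [hS.fderiv, hQ.fderiv]
    have hex := hexact y (D v')
    have hD1 : (D v').1 = v' := rfl
    simp only [ContinuousLinearMap.add_apply, ContinuousLinearMap.comp_apply,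
      ContinuousLinearMap.coe_fst']
    rw [hex, hD1]
    congr 1
    rw [hfd (w k) x]
    simp [he, InnerProductSpace.toDual_apply_apply, hy, hΓ]
  · apply tendstoUniformly_of_dist_le _ _ (fun k => (Kφ * Kv : ℝ≥0) * (2*((k:ℝ)+1)⁻¹))
      _ (tendsto_aux _)
    intro k x
    calc dist ((φ (Γ k x)).1, (φ (Γ k x)).2) (φ (x, gradient v x))
        = dist (φ (Γ k x)) (φ (x, gradient v x)) := by rw [Prod.mk.eta]
      _ ≤ Kφ * dist (Γ k x) (x, gradient v x) := hφlip.dist_le_mul _ _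
      _ ≤ Kφ * ((Kv:ℝ) * (2*((k:ℝ)+1)⁻¹)) := by
          apply mul_le_mul_of_nonneg_left _ Kφ.coe_nonneg
          rw [hΓ, Prod.dist_eq]
          simp only [dist_self]
          rw [max_eq_right dist_nonneg]
          exact hGclose k x
      _ = (Kφ * Kv : ℝ≥0) * (2*((k:ℝ)+1)⁻¹) := by push_cast; ring
  · apply tendstoUniformly_of_dist_le _ _
      (fun k => (Cv + (Kg:ℝ) * Kv) * (2*((k:ℝ)+1)⁻¹)) _ (tendsto_aux _)
    intro k x
    calc dist (w k x + g (Γ k x)) (v x + g (x, gradient v x))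
        ≤ dist (w k x) (v x) + dist (g (Γ k x)) (g (x, gradient v x)) := dist_add_add_le _ _ _ _
      _ ≤ Cv * (2*((k:ℝ)+1)⁻¹) + Kg * ((Kv:ℝ) * (2*((k:ℝ)+1)⁻¹)) := by
          apply add_le_add (hwc k x)
          calc dist (g (Γ k x)) (g (x, gradient v x))
              ≤ Kg * dist (Γ k x) (x, gradient v x) := hglip.dist_le_mul _ _
            _ ≤ Kg * ((Kv:ℝ) * (2*((k:ℝ)+1)⁻¹)) := by
                apply mul_le_mul_of_nonneg_left _ Kg.coe_nonneg
                rw [hΓ, Prod.dist_eq]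
                simp only [dist_self]
                rw [max_eq_right dist_nonneg]
                exact hGclose k x
      _ = (Cv + (Kg:ℝ) * Kv) * (2*((k:ℝ)+1)⁻¹) := by ring
end
end

section
/- Let K > 0 and let f_k, g_k : ℝⁿ → ℝ be C¹ functions, all K-Lipschitz, such that f_k → f and g_k → g uniformly on ℝⁿ. Then for every smooth compactly supported function η : ℝⁿ → ℝ and every vector w ∈ ℝⁿ, the integrals ∫_{ℝⁿ} f_k(x)·(Dg_k(x)w)·η(x) dx converge to ∫_{ℝⁿ} f(x)·(Dg(x)w)·η(x) dx, where Dg denotes the Lebesgue-almost-everywhere defined derivative of the Lipschitz limit g (which exists a.e. by Rademacher's theorem). -/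
open scoped NNReal
open MeasureTheory Filter

/-- A bounded measurable function supported in a compact set, multiplied by a continuous
function, is integrable. -/
lemma aux_integrable_mul {n : ℕ} {s : Set (EuclideanSpace ℝ (Fin n))} (hs : IsCompact s)
    {M : ℝ} {ψ : EuclideanSpace ℝ (Fin n) → ℝ}
    (hψm : AEStronglyMeasurable ψ volume) (hψ0 : ∀ x ∉ s, ψ x = 0)
    (hψb : ∀ x, ‖ψ x‖ ≤ M) {h : EuclideanSpace ℝ (Fin n) → ℝ} (hh : Continuous h) :
    Integrable (fun x => ψ x * h x) := by
  obtain ⟨C, hC⟩ := hs.exists_bound_of_continuousOn hh.continuousOn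
  have hind : Integrable (s.indicator (fun _ => M * C)) volume :=
    (integrable_indicator_iff hs.measurableSet).2
      (integrableOn_const hs.measure_lt_top.ne)
  refine hind.mono' (hψm.mul hh.aestronglyMeasurable) ?_
  filter_upwards with x
  by_cases hx : x ∈ s
  · rw [Set.indicator_of_mem hx, norm_mul]
    exact mul_le_mul (hψb x) (hC x hx) (norm_nonneg _)
      (le_trans (norm_nonneg _) (hψb x))
  · rw [Set.indicator_of_notMem hx, hψ0 x hx, zero_mul, norm_zero]

/-- If `u k → v` uniformly and `ψ k` are uniformly bounded, all supported in a fixed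
compact set `s`, then `∫ ψ k * (u k - v) → 0`. -/
lemma aux_tendsto_zero {n : ℕ} {s : Set (EuclideanSpace ℝ (Fin n))} (hs : IsCompact s)
    (M : ℝ) (ψ : ℕ → EuclideanSpace ℝ (Fin n) → ℝ)
    (hψ0 : ∀ k, ∀ x ∉ s, ψ k x = 0) (hψb : ∀ k x, ‖ψ k x‖ ≤ M)
    {u : ℕ → EuclideanSpace ℝ (Fin n) → ℝ} {v : EuclideanSpace ℝ (Fin n) → ℝ}
    (huv : TendstoUniformly u v atTop) :
    Tendsto (fun k => ∫ x, ψ k x * (u k x - v x)) atTop (nhds 0) := by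
  have hM : 0 ≤ M := le_trans (norm_nonneg _) (hψb 0 0)
  set V : ℝ := (volume s).toReal with hV
  have hV0 : 0 ≤ V := ENNReal.toReal_nonneg
  rw [Metric.tendsto_atTop]
  intro ε hε
  set c : ℝ := M * V + 1 with hc
  have hc0 : 0 < c := by positivity
  have hε' : 0 < ε / c := div_pos hε hc0
  obtain ⟨N, hN⟩ := Filter.eventually_atTop.1
    ((Metric.tendstoUniformly_iff.1 huv (ε / c) hε'))
  refine ⟨N, fun k hk => ?_⟩
  rw [dist_zero_right]
  have hbd : ‖∫ x, ψ k x * (u k x - v x)‖ ≤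
      ∫ x, s.indicator (fun _ => M * (ε / c)) x := by
    refine norm_integral_le_of_norm_le
      ((integrable_indicator_iff hs.measurableSet).2
        (integrableOn_const hs.measure_lt_top.ne)) ?_
    filter_upwards with x
    by_cases hx : x ∈ s
    · rw [Set.indicator_of_mem hx, norm_mul]
      refine mul_le_mul (hψb k x) ?_ (norm_nonneg _) hM
      have := hN k hk x
      rw [dist_comm, dist_eq_norm] at this
      exact le_of_lt this
    · rw [Set.indicator_of_notMem hx, hψ0 k x hx, zero_mul, norm_zero]
  have hval : ∫ x, s.indicator (fun _ : EuclideanSpace ℝ (Fin n) => M * (ε / c)) x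
      = (M * (ε / c)) * V := by
    rw [integral_indicator_const _ hs.measurableSet, smul_eq_mul, hV, mul_comm]
    rfl
  have hlt : (M * (ε / c)) * V < ε := by
    have h1 : (M * (ε / c)) * V = (ε / c) * (M * V) := by ring
    have h2 : (ε / c) * (M * V) < (ε / c) * c := by
      apply mul_lt_mul_of_pos_left _ hε'
      rw [hc]; linarith
    rw [h1]
    calc (ε / c) * (M * V) < (ε / c) * c := h2
    _ = ε := div_mul_cancel₀ ε (ne_of_gt hc0)
  calc ‖∫ x, ψ k x * (u k x - v x)‖
      ≤ ∫ x, s.indicator (fun _ => M * (ε / c)) x := hbd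
    _ = (M * (ε / c)) * V := hval
    _ < ε := hlt

/-- Key convergence step in Proposition 2.4: for equi-Lipschitz `C¹`
sequences `f_k → f` and `g_k → g` uniformly, the integrals
`∫ f_k · (Dg_k w) · η` converge to `∫ f · (Dg w) · η` for every smooth compactly
supported test function `η` and every direction `w`. -/
theorem tendsto_integral_mul_fderiv_of_equiLipschitz (n : ℕ) (K : ℝ≥0) (hK : 0 < K)
    (fk gk : ℕ → EuclideanSpace ℝ (Fin n) → ℝ)
    (f g : EuclideanSpace ℝ (Fin n) → ℝ)
    (hfC1 : ∀ k, ContDiff ℝ 1 (fk k)) (hgC1 : ∀ k, ContDiff ℝ 1 (gk k))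
    (hfLip : ∀ k, LipschitzWith K (fk k)) (hgLip : ∀ k, LipschitzWith K (gk k))
    (hfconv : TendstoUniformly fk f atTop) (hgconv : TendstoUniformly gk g atTop) :
    ∀ (η : EuclideanSpace ℝ (Fin n) → ℝ), ContDiff ℝ (⊤ : ℕ∞) η → HasCompactSupport η →
      ∀ w : EuclideanSpace ℝ (Fin n),
        Tendsto (fun k => ∫ x, fk k x * fderiv ℝ (gk k) x w * η x)
          atTop (nhds (∫ x, f x * fderiv ℝ g x w * η x)) := by
  intro η hη hηs w
  -- the limits are Lipschitz
  have hfL : LipschitzWith K f := LipschitzWith.of_dist_le_mul fun x y =>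
    le_of_tendsto ((hfconv.tendsto_at x).dist (hfconv.tendsto_at y))
      (Filter.Eventually.of_forall fun k => (hfLip k).dist_le_mul x y)
  have hgL : LipschitzWith K g := LipschitzWith.of_dist_le_mul fun x y =>
    le_of_tendsto ((hgconv.tendsto_at x).dist (hgconv.tendsto_at y))
      (Filter.Eventually.of_forall fun k => (hgLip k).dist_le_mul x y)
  -- η is Lipschitz and bounded
  obtain ⟨Lη, hLη⟩ := ContDiff.lipschitzWith_of_hasCompactSupport hηs hη (by simp)
  obtain ⟨A, hA⟩ := hηs.exists_bound_of_continuous hη.continuous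
  have hA0 : 0 ≤ A := le_trans (norm_nonneg _) (hA 0)
  -- bound of f on the support of η
  obtain ⟨M0, hM0⟩ := (hηs : IsCompact (tsupport η)).exists_bound_of_continuousOn
    hfL.continuous.continuousOn
  set M : ℝ := max M0 0 with hMdef
  have hM : ∀ x ∈ tsupport η, ‖f x‖ ≤ M := fun x hx => (hM0 x hx).trans (le_max_left _ _)
  have hM0' : (0 : ℝ) ≤ M := le_max_right _ _
  -- the product φ = f * η is Lipschitz with compact support
  set φ : EuclideanSpace ℝ (Fin n) → ℝ := fun x => f x * η x with hφdef
  have hφs : HasCompactSupport φ := HasCompactSupport.mul_left hηs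
  have hφcont : Continuous φ := hfL.continuous.mul hη.continuous
  have hφ : LipschitzWith (Real.toNNReal ((K : ℝ) * A + M * Lη)) φ := by
    apply LipschitzWith.of_dist_le'
    intro x y
    rw [dist_eq_norm, dist_eq_norm]
    by_cases hy : y ∈ tsupport η
    · have e : φ x - φ y = (f x - f y) * η x + f y * (η x - η y) := by
        simp only [hφdef]; ring
      calc ‖φ x - φ y‖ ≤ ‖(f x - f y) * η x‖ + ‖f y * (η x - η y)‖ := by
            rw [e]; exact norm_add_le _ _
        _ ≤ ((K : ℝ) * ‖x - y‖) * A + M * (Lη * ‖x - y‖) := by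
            rw [norm_mul, norm_mul]
            refine add_le_add (mul_le_mul (hfL.norm_sub_le x y) (hA x) (norm_nonneg _)
              (by positivity)) (mul_le_mul (hM y hy) (hLη.norm_sub_le x y) (norm_nonneg _)
                hM0')
        _ = ((K : ℝ) * A + M * Lη) * ‖x - y‖ := by ring
    · have hηy : η y = 0 := image_eq_zero_of_notMem_tsupport hy
      by_cases hx : x ∈ tsupport η
      · have e : φ x - φ y = f x * (η x - η y) := by
          simp only [hφdef, hηy]; ring
        calc ‖φ x - φ y‖ = ‖f x‖ * ‖η x - η y‖ := by rw [e, norm_mul]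
          _ ≤ M * (Lη * ‖x - y‖) :=
              mul_le_mul (hM x hx) (hLη.norm_sub_le x y) (norm_nonneg _) hM0'
          _ ≤ ((K : ℝ) * A + M * Lη) * ‖x - y‖ := by
              have : (0:ℝ) ≤ (K : ℝ) * A * ‖x - y‖ := by positivity
              nlinarith [norm_nonneg (x - y)]
      · have hηx : η x = 0 := image_eq_zero_of_notMem_tsupport hx
        simp only [hφdef, hηx, hηy, mul_zero, sub_zero, norm_zero]
        positivity
  -- differentiability of the gk and the fderiv bound
  have hgkd : ∀ k x, DifferentiableAt ℝ (gk k) x :=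
    fun k x => ((hgC1 k).differentiable one_ne_zero).differentiableAt
  have hDgk : ∀ k x, ‖fderiv ℝ (gk k) x w‖ ≤ (K : ℝ) * ‖w‖ := by
    intro k x
    rw [← (hgkd k x).lineDeriv_eq_fderiv]
    exact norm_lineDeriv_le_of_lipschitz ℝ (hgLip k)
  have cD : ∀ k, Continuous fun x => fderiv ℝ (gk k) x w :=
    fun k => ((hgC1 k).continuous_fderiv one_ne_zero).clm_apply continuous_const
  -- the weak derivative ψ of φ in direction -w
  set D : ℝ := (Real.toNNReal ((K : ℝ) * A + M * Lη) : ℝ) with hDdef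
  set ψ : EuclideanSpace ℝ (Fin n) → ℝ := fun x => lineDeriv ℝ φ x (-w) with hψdef
  have hψm : AEStronglyMeasurable ψ volume := aestronglyMeasurable_lineDeriv hφcont volume
  have hψ0 : ∀ x ∉ tsupport φ, ψ x = 0 := by
    intro x hx
    have h0 : φ =ᶠ[nhds x] 0 := notMem_tsupport_iff_eventuallyEq.1 hx
    show lineDeriv ℝ φ x (-w) = 0
    rw [h0.lineDeriv_eq (v := -w)]
    simp [lineDeriv]
  have hψb : ∀ x, ‖ψ x‖ ≤ D * ‖w‖ := by
    intro x
    have := norm_lineDeriv_le_of_lipschitz ℝ hφ (x₀ := x) (v := -w)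
    rwa [norm_neg] at this
  -- integration by parts for the approximations
  have eq_k : ∀ k, ∫ x, f x * fderiv ℝ (gk k) x w * η x = ∫ x, ψ x * gk k x := by
    intro k
    have h1 : ∫ x, f x * fderiv ℝ (gk k) x w * η x
        = ∫ x, lineDeriv ℝ (gk k) x w * φ x := by
      refine integral_congr_ae (Filter.Eventually.of_forall fun x => ?_)
      show f x * fderiv ℝ (gk k) x w * η x = lineDeriv ℝ (gk k) x w * φ x
      rw [(hgkd k x).lineDeriv_eq_fderiv]
      simp only [hφdef]; ring
    rw [h1, (hgLip k).integral_lineDeriv_mul_eq hφ hφs w]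
  -- integration by parts for the limit
  have eq_lim : ∫ x, f x * fderiv ℝ g x w * η x = ∫ x, ψ x * g x := by
    have h1 : ∫ x, f x * fderiv ℝ g x w * η x = ∫ x, lineDeriv ℝ g x w * φ x := by
      refine integral_congr_ae ?_
      filter_upwards [hgL.ae_differentiableAt (μ := volume)] with x hx
      show f x * fderiv ℝ g x w * η x = lineDeriv ℝ g x w * φ x
      rw [hx.lineDeriv_eq_fderiv]
      simp only [hφdef]; ring
    rw [h1, hgL.integral_lineDeriv_mul_eq hφ hφs w]
  -- convergence of the error terms
  have T1 : Tendsto (fun k => ∫ x, (fderiv ℝ (gk k) x w * η x) * (fk k x - f x))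
      atTop (nhds 0) := by
    refine aux_tendsto_zero (hηs : IsCompact (tsupport η)) ((K : ℝ) * ‖w‖ * A)
      (fun k x => fderiv ℝ (gk k) x w * η x) ?_ ?_ hfconv
    · intro k x hx
      show fderiv ℝ (gk k) x w * η x = 0
      rw [image_eq_zero_of_notMem_tsupport hx, mul_zero]
    · intro k x
      show ‖fderiv ℝ (gk k) x w * η x‖ ≤ ↑K * ‖w‖ * A
      rw [norm_mul]
      exact mul_le_mul (hDgk k x) (hA x) (norm_nonneg _) (by positivity)
  have T2 : Tendsto (fun k => ∫ x, ψ x * (gk k x - g x)) atTop (nhds 0) :=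
    aux_tendsto_zero (hφs : IsCompact (tsupport φ)) (D * ‖w‖) (fun _ => ψ)
      (fun _ => hψ0) (fun _ x => hψb x) hgconv
  -- decomposition of the integral
  have keyfun : ∀ k, (∫ x, fk k x * fderiv ℝ (gk k) x w * η x)
      = (∫ x, (fderiv ℝ (gk k) x w * η x) * (fk k x - f x))
        + ((∫ x, ψ x * (gk k x - g x)) + ∫ x, ψ x * g x) := by
    intro k
    have i1 : Integrable (fun x => (fderiv ℝ (gk k) x w * η x) * (fk k x - f x)) := by
      refine Continuous.integrable_of_hasCompactSupport
        (((cD k).mul hη.continuous).mul ((hfC1 k).continuous.sub hfL.continuous)) ?_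
      exact (HasCompactSupport.mul_left hηs).mul_right
    have i2 : Integrable (fun x => f x * fderiv ℝ (gk k) x w * η x) := by
      refine Continuous.integrable_of_hasCompactSupport
        ((hfL.continuous.mul (cD k)).mul hη.continuous) ?_
      exact HasCompactSupport.mul_left hηs
    have i3 : Integrable (fun x => ψ x * (gk k x - g x)) :=
      aux_integrable_mul (hφs : IsCompact (tsupport φ)) hψm hψ0 hψb
        ((hgC1 k).continuous.sub hgL.continuous)
    have i4 : Integrable (fun x => ψ x * g x) :=
      aux_integrable_mul (hφs : IsCompact (tsupport φ)) hψm hψ0 hψb hgL.continuous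
    have step1 : ∫ x, fk k x * fderiv ℝ (gk k) x w * η x
        = (∫ x, (fderiv ℝ (gk k) x w * η x) * (fk k x - f x))
          + ∫ x, f x * fderiv ℝ (gk k) x w * η x := by
      rw [← integral_add i1 i2]
      exact integral_congr_ae (Filter.Eventually.of_forall fun x => by ring)
    have step2 : ∫ x, f x * fderiv ℝ (gk k) x w * η x
        = (∫ x, ψ x * (gk k x - g x)) + ∫ x, ψ x * g x := by
      rw [eq_k k, ← integral_add i3 i4]
      exact integral_congr_ae (Filter.Eventually.of_forall fun x => by ring)
    rw [step1, step2]
  rw [eq_lim]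
  have H := T1.add (T2.add (tendsto_const_nhds
    (x := ∫ x, ψ x * g x) (f := atTop (α := ℕ))))
  rw [zero_add, zero_add] at H
  exact H.congr fun k => (keyfun k).symm
end

section
/- Let N be a compact smooth n-dimensional manifold without boundary, ι : N → ℝⁿ × ℝⁿ a smooth injective immersion with components ι = (Q̃, P̃), and S : N → ℝ a smooth function satisfying the exactness condition d_xS(v) = ⟨P̃(x), d_xQ̃(v)⟩ for all x ∈ N and v ∈ T_xN (i.e. dS = ι*θ). Let π := Q̃ : N → ℝⁿ and let 𝒰 := {q ∈ ℝⁿ : for every x ∈ π⁻¹(q), d_xπ is a linear isomorphism}. Define the set of Cerf-regular values 𝒰^Cf := {q ∈ 𝒰 : S restricted to π⁻¹(q) is injective}. Then 𝒰^Cf is open and dense in ℝⁿ and its complement has Lebesgue measure zero. -/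
open MeasureTheory Set Function
open scoped Manifold RealInnerProductSpace Topology ContDiff

namespace CerfAux

variable {n : ℕ} {N : Type*} [TopologicalSpace N]
  [ChartedSpace (EuclideanSpace ℝ (Fin n)) N] [IsManifold (𝓡 n) (⊤ : ℕ∞) N]

local notation "𝕍" => EuclideanSpace ℝ (Fin n)

lemma bij_iff_det {A : 𝕍 →L[ℝ] 𝕍} : Function.Bijective A ↔ A.det ≠ 0 := by
  constructor
  · intro h
    have e : 𝕍 ≃ₗ[ℝ] 𝕍 := LinearEquiv.ofBijective (A : 𝕍 →ₗ[ℝ] 𝕍) h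
    have : IsUnit (LinearMap.det ((LinearEquiv.ofBijective (A : 𝕍 →ₗ[ℝ] 𝕍) h) : 𝕍 →ₗ[ℝ] 𝕍)) :=
      LinearEquiv.isUnit_det' _
    exact this.ne_zero
  · intro h
    exact (LinearMap.equivOfDetNeZero (A : 𝕍 →ₗ[ℝ] 𝕍) h).bijective

lemma chart_stuff {π : N → 𝕍} (hπ : ContMDiff (𝓡 n) 𝓘(ℝ, 𝕍) (⊤ : ℕ∞) π)
    (x : N) {w : 𝕍} (hw : w ∈ (chartAt 𝕍 x).target) :
    DifferentiableAt ℝ (π ∘ (chartAt 𝕍 x).symm) w ∧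
      (Function.Bijective ⇑(fderiv ℝ (π ∘ (chartAt 𝕍 x).symm) w) ↔
        Function.Bijective ⇑(mfderiv (𝓡 n) 𝓘(ℝ, 𝕍) π ((chartAt 𝕍 x).symm w))) := by
  set c := chartAt 𝕍 x with hc
  have hsy : MDifferentiableAt 𝓘(ℝ, 𝕍) (𝓡 n) c.symm w :=
    mdifferentiableAt_atlas_symm (I := 𝓡 n) (chart_mem_atlas _ _) hw
  have hsy' : ContMDiffAt 𝓘(ℝ, 𝕍) (𝓡 n) (⊤ : ℕ∞) c.symm w :=
    (contMDiffOn_chart_symm (x := x)).contMDiffAt (c.open_target.mem_nhds hw)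
  set y := c.symm w with hy
  have hπy : MDifferentiableAt (𝓡 n) 𝓘(ℝ, 𝕍) π y := (hπ y).mdifferentiableAt (by simp)
  have hcomp : mfderiv 𝓘(ℝ, 𝕍) 𝓘(ℝ, 𝕍) (π ∘ c.symm) w =
      (mfderiv (𝓡 n) 𝓘(ℝ, 𝕍) π y).comp (mfderiv 𝓘(ℝ, 𝕍) (𝓡 n) c.symm w) :=
    mfderiv_comp w hπy hsy
  have hdiff : DifferentiableAt ℝ (π ∘ c.symm) w := by
    have : MDifferentiableAt 𝓘(ℝ, 𝕍) 𝓘(ℝ, 𝕍) (π ∘ c.symm) w := hπy.comp w hsy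
    rwa [mdifferentiableAt_iff_differentiableAt] at this
  refine ⟨hdiff, ?_⟩
  have hfd : fderiv ℝ (π ∘ c.symm) w =
      (mfderiv (𝓡 n) 𝓘(ℝ, 𝕍) π y).comp (mfderiv 𝓘(ℝ, 𝕍) (𝓡 n) c.symm w) := by
    rw [← hcomp, ← mfderiv_eq_fderiv]
  have hbij : Function.Bijective ⇑(mfderiv 𝓘(ℝ, 𝕍) (𝓡 n) c.symm w) := by
    have h1 : c.symm.MDifferentiable 𝓘(ℝ, 𝕍) (𝓡 n) := (mdifferentiable_chart (I := 𝓡 n) x).symm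
    exact h1.mfderiv_bijective (by simpa using hw)
  rw [hfd]
  exact Function.Bijective.of_comp_iff _ hbij

lemma localSection {π : N → 𝕍} (hπ : ContMDiff (𝓡 n) 𝓘(ℝ, 𝕍) (⊤ : ℕ∞) π)
    (x : N) (hx : Function.Bijective ⇑(mfderiv (𝓡 n) 𝓘(ℝ, 𝕍) π x))
    {U₀ : Set N} (hU₀ : U₀ ∈ 𝓝 x) :
    ∃ (U : Set N) (V : Set 𝕍) (σ : 𝕍 → N), IsOpen U ∧ x ∈ U ∧ U ⊆ U₀ ∧ IsOpen V ∧
      (∀ q ∈ V, σ q ∈ U ∧ π (σ q) = q) ∧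
      (∀ y ∈ U, π y ∈ V ∧ σ (π y) = y) ∧
      (∀ q ∈ V, ContMDiffAt 𝓘(ℝ, 𝕍) (𝓡 n) (⊤ : ℕ∞) σ q) := by
  classical
  set c := chartAt 𝕍 x with hc
  set f : 𝕍 → 𝕍 := π ∘ c.symm with hf
  set a := c x with ha
  have hax : c.symm a = x := c.left_inv (mem_chart_source _ _)
  have hat : a ∈ c.target := c.map_source (mem_chart_source _ _)
  have hfo : ContDiffOn ℝ (↑(⊤ : ℕ∞)) f c.target := by
    have : ContMDiffOn 𝓘(ℝ, 𝕍) 𝓘(ℝ, 𝕍) (⊤ : ℕ∞) f c.target :=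
      hπ.comp_contMDiffOn (contMDiffOn_chart_symm (x := x))
    exact contMDiffOn_iff_contDiffOn.mp this
  have hone : (1 : WithTop ℕ∞) ≤ (↑(⊤ : ℕ∞) : WithTop ℕ∞) := by
    exact_mod_cast le_top
  have hcont : ContinuousOn (fun w => (fderiv ℝ f w).det) c.target :=
    ContinuousLinearMap.continuous_det.comp_continuousOn
      (hfo.continuousOn_fderiv_of_isOpen c.open_target hone)
  have hO : IsOpen (c.target ∩ (fun w => (fderiv ℝ f w).det) ⁻¹' ({0}ᶜ)) :=
    hcont.isOpen_inter_preimage c.open_target isOpen_compl_singleton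
  set O := c.target ∩ (fun w => (fderiv ℝ f w).det) ⁻¹' ({0}ᶜ) with hOdef
  have haO : a ∈ O := by
    refine ⟨hat, ?_⟩
    have h2 := (chart_stuff hπ x hat).2
    rw [hax] at h2
    simpa using bij_iff_det.mp (h2.mpr hx)
  -- the inverse function theorem at `a`
  have hfca : ContDiffAt ℝ (↑(⊤ : ℕ∞)) f a := hfo.contDiffAt (c.open_target.mem_nhds hat)
  have hdet_a : (fderiv ℝ f a).det ≠ 0 := by simpa using haO.2
  have hfa : HasFDerivAt f
      (((fderiv ℝ f a).toContinuousLinearEquivOfDetNeZero hdet_a : 𝕍 ≃L[ℝ] 𝕍) : 𝕍 →L[ℝ] 𝕍) a := by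
    rw [ContinuousLinearMap.coe_toContinuousLinearEquivOfDetNeZero]
    exact (chart_stuff hπ x hat).1.hasFDerivAt
  set φ := hfca.toOpenPartialHomeomorph f hfa (zero_lt_one.trans_le hone).ne' with hφdef
  have hφcoe : ⇑φ = f := rfl
  have haφ : a ∈ φ.source := hfca.mem_toOpenPartialHomeomorph_source hfa (zero_lt_one.trans_le hone).ne'
  -- the open set where everything is good
  have hO2 : IsOpen (c.target ∩ c.symm ⁻¹' interior U₀) :=
    c.symm.isOpen_inter_preimage isOpen_interior
  set W := (φ.source ∩ O) ∩ (c.target ∩ c.symm ⁻¹' interior U₀) with hWdef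
  have hWopen : IsOpen W := ((φ.open_source.inter hO).inter hO2)
  have haW : a ∈ W := ⟨⟨haφ, haO⟩, hat, by
    simp only [mem_preimage, hax]
    exact mem_interior_iff_mem_nhds.2 hU₀⟩
  have hWc : W ⊆ c.target := fun w hw => hw.2.1
  have hWφ : W ⊆ φ.source := fun w hw => hw.1.1
  refine ⟨c.symm '' W, φ '' W, c.symm ∘ φ.symm, ?_, ⟨a, haW, hax⟩, ?_, ?_, ?_, ?_, ?_⟩
  · exact c.symm.isOpen_image_of_subset_source hWopen hWc
  · rintro y ⟨w, hw, rfl⟩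
    exact interior_subset hw.2.2
  · exact φ.isOpen_image_of_subset_source hWopen hWφ
  · rintro q ⟨w, hw, rfl⟩
    have h1 : φ.symm (φ w) = w := φ.left_inv (hWφ hw)
    refine ⟨⟨w, hw, ?_⟩, ?_⟩
    · show (c.symm : 𝕍 → N) w = (c.symm ∘ φ.symm) (φ w)
      simp only [Function.comp_apply, h1]
    · show π ((c.symm ∘ φ.symm) (φ w)) = φ w
      simp only [Function.comp_apply, h1]
      rfl
  · rintro y ⟨w, hw, rfl⟩
    have h1 : φ.symm (φ w) = w := φ.left_inv (hWφ hw)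
    refine ⟨⟨w, hw, rfl⟩, ?_⟩
    show (c.symm ∘ φ.symm) (π ((c.symm : 𝕍 → N) w)) = (c.symm : 𝕍 → N) w
    have h2 : π ((c.symm : 𝕍 → N) w) = φ w := rfl
    rw [h2]
    simp only [Function.comp_apply, h1]
  · rintro q ⟨w, hw, rfl⟩
    have h1 : φ.symm (φ w) = w := φ.left_inv (hWφ hw)
    have hwt : w ∈ c.target := hWc hw
    have hdet_w : (fderiv ℝ f w).det ≠ 0 := by simpa using hw.1.2.2
    have hfw : HasFDerivAt f
        (((fderiv ℝ f w).toContinuousLinearEquivOfDetNeZero hdet_w : 𝕍 ≃L[ℝ] 𝕍) : 𝕍 →L[ℝ] 𝕍)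
        w := by
      rw [ContinuousLinearMap.coe_toContinuousLinearEquivOfDetNeZero]
      exact (chart_stuff hπ x hwt).1.hasFDerivAt
    have hsymm : ContDiffAt ℝ (↑(⊤ : ℕ∞)) φ.symm (φ w) := by
      refine φ.contDiffAt_symm (f₀' := (fderiv ℝ f w).toContinuousLinearEquivOfDetNeZero hdet_w) (φ.map_source (hWφ hw)) ?_ ?_
      · rw [h1]; exact hfw
      · rw [h1]; exact hfo.contDiffAt (c.open_target.mem_nhds hwt)
    have hcs : ContMDiffAt 𝓘(ℝ, 𝕍) (𝓡 n) (⊤ : ℕ∞) c.symm (φ.symm (φ w)) := by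
      rw [h1]
      exact (contMDiffOn_chart_symm (x := x)).contMDiffAt (c.open_target.mem_nhds hwt)
    exact hcs.comp (φ w) hsymm.contMDiffAt

lemma section_deriv {π : N → 𝕍} (hπ : ContMDiff (𝓡 n) 𝓘(ℝ, 𝕍) (⊤ : ℕ∞) π)
    {P : N → 𝕍} {S : N → ℝ} (hS : ContMDiff (𝓡 n) 𝓘(ℝ, ℝ) (⊤ : ℕ∞) S)
    (hexact : ∀ (x : N) (v : TangentSpace (𝓡 n) x),
      mfderiv (𝓡 n) 𝓘(ℝ, ℝ) S x v = ⟪P x, mfderiv (𝓡 n) 𝓘(ℝ, 𝕍) π x v⟫)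
    {σ : 𝕍 → N} {V : Set 𝕍} (hV : IsOpen V) (hσπ : ∀ q ∈ V, π (σ q) = q)
    {q : 𝕍} (hq : q ∈ V) (hσs : ContMDiffAt 𝓘(ℝ, 𝕍) (𝓡 n) (⊤ : ℕ∞) σ q) :
    HasFDerivAt (S ∘ σ) (innerSL ℝ (P (σ q))) q := by
  have hσd : MDifferentiableAt 𝓘(ℝ, 𝕍) (𝓡 n) σ q := hσs.mdifferentiableAt (by simp)
  have hSd : MDifferentiableAt (𝓡 n) 𝓘(ℝ, ℝ) S (σ q) := (hS (σ q)).mdifferentiableAt (by simp)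
  have hπd : MDifferentiableAt (𝓡 n) 𝓘(ℝ, 𝕍) π (σ q) := (hπ (σ q)).mdifferentiableAt (by simp)
  have hcompS : mfderiv 𝓘(ℝ, 𝕍) 𝓘(ℝ, ℝ) (S ∘ σ) q =
      (mfderiv (𝓡 n) 𝓘(ℝ, ℝ) S (σ q)).comp (mfderiv 𝓘(ℝ, 𝕍) (𝓡 n) σ q) :=
    mfderiv_comp q hSd hσd
  have hcompπ : mfderiv 𝓘(ℝ, 𝕍) 𝓘(ℝ, 𝕍) (π ∘ σ) q =
      (mfderiv (𝓡 n) 𝓘(ℝ, 𝕍) π (σ q)).comp (mfderiv 𝓘(ℝ, 𝕍) (𝓡 n) σ q) :=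
    mfderiv_comp q hπd hσd
  have hid : mfderiv 𝓘(ℝ, 𝕍) 𝓘(ℝ, 𝕍) (π ∘ σ) q = ContinuousLinearMap.id ℝ 𝕍 := by
    have hev : (π ∘ σ) =ᶠ[𝓝 q] id :=
      Filter.eventuallyEq_of_mem (hV.mem_nhds hq) fun q' hq' => hσπ q' hq'
    rw [hev.mfderiv_eq]
    exact mfderiv_id
  have key : ∀ v : 𝕍, mfderiv 𝓘(ℝ, 𝕍) 𝓘(ℝ, ℝ) (S ∘ σ) q v = ⟪P (σ q), v⟫ := by
    intro v
    have h1 : mfderiv 𝓘(ℝ, 𝕍) 𝓘(ℝ, ℝ) (S ∘ σ) q v =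
        mfderiv (𝓡 n) 𝓘(ℝ, ℝ) S (σ q) (mfderiv 𝓘(ℝ, 𝕍) (𝓡 n) σ q v) := by
      rw [hcompS]; rfl
    have h2 : mfderiv (𝓡 n) 𝓘(ℝ, 𝕍) π (σ q) (mfderiv 𝓘(ℝ, 𝕍) (𝓡 n) σ q v) = v := by
      have := congrArg (fun (L : 𝕍 →L[ℝ] 𝕍) => L v) (hcompπ.symm.trans hid)
      exact this
    rw [h1, hexact (σ q), h2]
  have hd : DifferentiableAt ℝ (S ∘ σ) q := by
    have h3 : MDifferentiableAt 𝓘(ℝ, 𝕍) 𝓘(ℝ, ℝ) (S ∘ σ) q := hSd.comp q hσd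
    rwa [mdifferentiableAt_iff_differentiableAt] at h3
  have hfd : fderiv ℝ (S ∘ σ) q = innerSL ℝ (P (σ q)) := by
    ext v
    rw [← mfderiv_eq_fderiv]
    exact key v
  exact hfd ▸ hd.hasFDerivAt

lemma crit_closed_null [CompactSpace N] {π : N → 𝕍} (hπ : ContMDiff (𝓡 n) 𝓘(ℝ, 𝕍) (⊤ : ℕ∞) π) :
    IsClosed {x : N | ¬ Function.Bijective ⇑(mfderiv (𝓡 n) 𝓘(ℝ, 𝕍) π x)} ∧
      volume (π '' {x : N | ¬ Function.Bijective ⇑(mfderiv (𝓡 n) 𝓘(ℝ, 𝕍) π x)}) = 0 := by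
  classical
  set C := {x : N | ¬ Function.Bijective ⇑(mfderiv (𝓡 n) 𝓘(ℝ, 𝕍) π x)} with hC
  have hone : (1 : WithTop ℕ∞) ≤ (↑(⊤ : ℕ∞) : WithTop ℕ∞) := by exact_mod_cast le_top
  -- chart-level data
  have hfo : ∀ x : N, ContDiffOn ℝ (↑(⊤ : ℕ∞)) (π ∘ (chartAt 𝕍 x).symm) (chartAt 𝕍 x).target :=
    fun x => contMDiffOn_iff_contDiffOn.mp (hπ.comp_contMDiffOn (contMDiffOn_chart_symm (x := x)))
  have hGood : ∀ x : N, IsOpen ((chartAt 𝕍 x).target ∩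
      (fun w => (fderiv ℝ (π ∘ (chartAt 𝕍 x).symm) w).det) ⁻¹' ({0}ᶜ)) := by
    intro x
    have hcont : ContinuousOn (fun w => (fderiv ℝ (π ∘ (chartAt 𝕍 x).symm) w).det)
        (chartAt 𝕍 x).target :=
      ContinuousLinearMap.continuous_det.comp_continuousOn
        ((hfo x).continuousOn_fderiv_of_isOpen (chartAt 𝕍 x).open_target hone)
    exact hcont.isOpen_inter_preimage (chartAt 𝕍 x).open_target isOpen_compl_singleton
  constructor
  · -- closedness
    rw [← isOpen_compl_iff]
    rw [isOpen_iff_forall_mem_open]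
    intro x hx
    simp only [mem_compl_iff, hC, mem_setOf_eq, not_not] at hx
    set c := chartAt 𝕍 x with hcdef
    set G := c.target ∩ (fun w => (fderiv ℝ (π ∘ c.symm) w).det) ⁻¹' ({0}ᶜ) with hg
    refine ⟨c.symm '' G, ?_, c.symm.isOpen_image_of_subset_source (hGood x) inter_subset_left, ?_⟩
    · rintro y ⟨w, hw, rfl⟩
      simp only [mem_compl_iff, hC, mem_setOf_eq, not_not]
      exact ((chart_stuff hπ x hw.1).2).mp (bij_iff_det.mpr (by simpa using hw.2))
    · refine ⟨c x, ⟨c.map_source (mem_chart_source _ _), ?_⟩, c.left_inv (mem_chart_source _ _)⟩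
      have h2 := (chart_stuff hπ x (c.map_source (mem_chart_source _ _))).2
      rw [c.left_inv (mem_chart_source _ _)] at h2
      simpa using bij_iff_det.mp (h2.mpr hx)
  · -- null image of critical set
    have hCcover : C ⊆ ⋃ x ∈ (univ : Set N), (chartAt 𝕍 x).source := by
      intro x _
      exact mem_biUnion (mem_univ x) (mem_chart_source _ _)
    have hcomp : IsCompact (univ : Set N) := isCompact_univ
    obtain ⟨t, -, hcov⟩ := hcomp.elim_nhds_subcover (fun x => (chartAt 𝕍 x).source)
      (fun x _ => (chartAt 𝕍 x).open_source.mem_nhds (mem_chart_source _ _))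
    have hsub : π '' C ⊆ ⋃ x ∈ t, (π ∘ (chartAt 𝕍 x).symm) ''
        {w ∈ (chartAt 𝕍 x).target | (fderiv ℝ (π ∘ (chartAt 𝕍 x).symm) w).det = 0} := by
      rintro q ⟨y, hy, rfl⟩
      have hy' : y ∈ ⋃ x ∈ t, (chartAt 𝕍 x).source := hcov (mem_univ y)
      simp only [mem_iUnion] at hy'
      obtain ⟨x, hxt, hys⟩ := hy'
      refine mem_iUnion.2 ⟨x, mem_iUnion.2 ⟨hxt, ?_⟩⟩
      set c := chartAt 𝕍 x
      have hwt : c y ∈ c.target := c.map_source hys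
      have hcy : c.symm (c y) = y := c.left_inv hys
      refine ⟨c y, ⟨hwt, ?_⟩, by show π (c.symm (c y)) = π y; rw [hcy]⟩
      by_contra hdet
      have h2 := (chart_stuff hπ x hwt).2
      rw [hcy] at h2
      exact hy (h2.mp (bij_iff_det.mpr hdet))
    refine le_antisymm ?_ (zero_le)
    refine le_trans (measure_mono hsub) ?_
    refine le_trans (measure_biUnion_finset_le t _) ?_
    refine le_of_eq (Finset.sum_eq_zero ?_)
    intro x _
    set c := chartAt 𝕍 x
    set fx := π ∘ c.symm with hfx
    set s := {w ∈ c.target | (fderiv ℝ fx w).det = 0} with hs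
    have hsmeas : MeasurableSet s := by
      have : s = c.target \ (c.target ∩ (fun w => (fderiv ℝ fx w).det) ⁻¹' ({0}ᶜ)) := by
        ext w
        simp only [hs, mem_setOf_eq, mem_diff, mem_inter_iff, mem_preimage, mem_compl_iff,
          mem_singleton_iff]
        tauto
      rw [this]
      exact (c.open_target.measurableSet).diff (hGood x).measurableSet
    have hderiv : ∀ w ∈ s, HasFDerivWithinAt fx (fderiv ℝ fx w) s w :=
      fun w hw => ((chart_stuff hπ x hw.1).1.hasFDerivAt).hasFDerivWithinAt
    refine le_antisymm ?_ (zero_le)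
    refine le_trans (addHaar_image_le_lintegral_abs_det_fderiv volume hsmeas hderiv) ?_
    have hz : ∫⁻ w in s, ENNReal.ofReal |(fderiv ℝ fx w).det| ∂volume =
        ∫⁻ _ in s, 0 ∂volume := by
      refine setLIntegral_congr_fun hsmeas (fun w hw => ?_)
      rw [hw.2]
      simp
    rw [hz, lintegral_zero]

lemma null_level {g : 𝕍 → ℝ} {q₁ : 𝕍} (hg : ContDiffAt ℝ (↑(⊤ : ℕ∞)) g q₁)
    {A : 𝕍 →L[ℝ] ℝ} (hA : HasFDerivAt g A q₁) (hA0 : A ≠ 0) :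
    ∃ W ∈ 𝓝 q₁, volume {q ∈ W | g q = 0} = 0 := by
  classical
  have hone : (1 : WithTop ℕ∞) ≤ (↑(⊤ : ℕ∞) : WithTop ℕ∞) := by exact_mod_cast le_top
  obtain ⟨v, hv⟩ : ∃ v, A v ≠ 0 := by
    by_contra h
    push_neg at h
    exact hA0 (ContinuousLinearMap.ext fun v => by simp [h v])
  set u := (A v)⁻¹ • v with hu
  have hAu : A u = 1 := by
    simp only [hu, _root_.map_smul, smul_eq_mul]
    field_simp
  set ψ : 𝕍 → 𝕍 := fun q => q + (g q - A q) • u with hψ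
  have hψd : HasFDerivAt ψ (ContinuousLinearMap.id ℝ 𝕍) q₁ := by
    have h1 : HasFDerivAt (fun q => g q - A q) (A - A) q₁ := hA.sub A.hasFDerivAt
    rw [sub_self] at h1
    have h2 : HasFDerivAt (fun q => (g q - A q) • u)
        ((0 : 𝕍 →L[ℝ] ℝ).smulRight u) q₁ := h1.smul_const u
    have h3 := (hasFDerivAt_id q₁).add h2
    have h4 : ContinuousLinearMap.id ℝ 𝕍 + (0 : 𝕍 →L[ℝ] ℝ).smulRight u =
        ContinuousLinearMap.id ℝ 𝕍 := by ext w; simp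
    rw [h4] at h3
    exact h3
  have hψd' : HasFDerivAt ψ ((ContinuousLinearEquiv.refl ℝ 𝕍 : 𝕍 ≃L[ℝ] 𝕍) : 𝕍 →L[ℝ] 𝕍) q₁ := by
    simpa using hψd
  have hψc : ContDiffAt ℝ (↑(⊤ : ℕ∞)) ψ q₁ := by
    refine contDiffAt_id.add ?_
    exact ((hg.sub (A.contDiff.contDiffAt)).smul contDiffAt_const)
  set φ := hψc.toOpenPartialHomeomorph ψ hψd' (zero_lt_one.trans_le hone).ne' with hφ
  have hφcoe : ⇑φ = ψ := rfl
  have hq₁ : q₁ ∈ φ.source := hψc.mem_toOpenPartialHomeomorph_source hψd' (zero_lt_one.trans_le hone).ne'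
  have hb : ψ q₁ ∈ φ.target := hψc.image_mem_toOpenPartialHomeomorph_target hψd' (zero_lt_one.trans_le hone).ne'
  have hφq : φ.symm (ψ q₁) = q₁ := φ.left_inv hq₁
  have hsymm : ContDiffAt ℝ (↑(⊤ : ℕ∞)) φ.symm (ψ q₁) := by
    refine φ.contDiffAt_symm (f₀' := ContinuousLinearEquiv.refl ℝ 𝕍) hb ?_ ?_
    · rw [hφq]; exact hψd'
    · rw [hφq]; exact hψc
  obtain ⟨u', hu'mem, hu'⟩ : ∃ u' ∈ 𝓝 (ψ q₁), ContDiffOn ℝ 1 φ.symm u' :=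
    hsymm.contDiffOn (by exact_mod_cast le_top) (by simp)
  obtain ⟨u₂, hu₂sub, hu₂open, hbu₂⟩ := mem_nhds_iff.mp hu'mem
  set K := LinearMap.ker (A : 𝕍 →ₗ[ℝ] ℝ) with hK
  have hKne : K ≠ ⊤ := by
    intro h
    have : u ∈ K := h ▸ Submodule.mem_top
    rw [LinearMap.mem_ker] at this
    have : A u = 0 := this
    rw [hAu] at this
    exact one_ne_zero this
  have hKnull : volume (K : Set 𝕍) = 0 := Measure.addHaar_submodule volume K hKne
  have hKclosed : IsClosed (K : Set 𝕍) := Submodule.closed_of_finiteDimensional K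
  set s := (K : Set 𝕍) ∩ u₂ with hs
  have hsmeas : MeasurableSet s := hKclosed.measurableSet.inter hu₂open.measurableSet
  have hsnull : volume s = 0 := measure_mono_null inter_subset_left hKnull
  have hdiffOn : DifferentiableOn ℝ φ.symm s :=
    ((hu'.mono (hu₂sub.trans (subset_refl _))).differentiableOn one_ne_zero).mono inter_subset_right
  have himg : volume (φ.symm '' s) = 0 := by
    refine le_antisymm ?_ (zero_le)
    refine le_trans (addHaar_image_le_lintegral_abs_det_fderiv volume hsmeas
      (fun z hz => (hdiffOn z hz).hasFDerivWithinAt)) ?_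
    rw [setLIntegral_measure_zero s _ hsnull]
  refine ⟨φ.source ∩ ψ ⁻¹' u₂, Filter.inter_mem (φ.open_source.mem_nhds hq₁)
    (hψc.continuousAt.preimage_mem_nhds (hu₂open.mem_nhds hbu₂)), ?_⟩
  refine measure_mono_null ?_ himg
  rintro q ⟨⟨hqφ, hqu₂⟩, hgq⟩
  have hAψ : A (ψ q) = 0 := by
    simp only [hψ, map_add, _root_.map_smul, smul_eq_mul, hAu]
    rw [hgq]
    ring
  have hmem : ψ q ∈ s := ⟨by rwa [SetLike.mem_coe, LinearMap.mem_ker], hqu₂⟩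
  exact ⟨ψ q, hmem, φ.left_inv hqφ⟩

end CerfAux

open CerfAux

/-- (Proposition 4.3.) For a compact exact Lagrangian immersion
`ι = (Q̃, P̃)` with Liouville primitive `S` (i.e. `dS = ι*θ`), the set `𝒰^Cf` of
Cerf-regular values (regular values `q` of `π = Q̃` over which `S` is injective on the
fiber) is open and dense with Lebesgue-null complement. -/
theorem cerf_regular_values_open_dense_full_measure (n : ℕ)
    (N : Type*) [TopologicalSpace N] [ChartedSpace (EuclideanSpace ℝ (Fin n)) N]
    [IsManifold (𝓡 n) (⊤ : ℕ∞) N] [CompactSpace N]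
    (ι : N → EuclideanSpace ℝ (Fin n) × EuclideanSpace ℝ (Fin n))
    (hι : ContMDiff (𝓡 n) 𝓘(ℝ, EuclideanSpace ℝ (Fin n) × EuclideanSpace ℝ (Fin n)) (⊤ : ℕ∞) ι)
    (hinj : Function.Injective ι)
    (himm : ∀ x, Function.Injective
      ⇑(mfderiv (𝓡 n) 𝓘(ℝ, EuclideanSpace ℝ (Fin n) × EuclideanSpace ℝ (Fin n)) ι x))
    (S : N → ℝ) (hS : ContMDiff (𝓡 n) 𝓘(ℝ, ℝ) (⊤ : ℕ∞) S)
    (π : N → EuclideanSpace ℝ (Fin n)) (hπ : ∀ x, π x = (ι x).1)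
    (hexact : ∀ (x : N) (v : TangentSpace (𝓡 n) x),
      mfderiv (𝓡 n) 𝓘(ℝ, ℝ) S x v =
        ⟪(ι x).2, mfderiv (𝓡 n) 𝓘(ℝ, EuclideanSpace ℝ (Fin n)) π x v⟫)
    (𝒰 : Set (EuclideanSpace ℝ (Fin n)))
    (h𝒰 : 𝒰 = {q | ∀ x, π x = q →
      Function.Bijective ⇑(mfderiv (𝓡 n) 𝓘(ℝ, EuclideanSpace ℝ (Fin n)) π x)})
    (𝒰Cf : Set (EuclideanSpace ℝ (Fin n)))
    (h𝒰Cf : 𝒰Cf = {q ∈ 𝒰 | Set.InjOn S (π ⁻¹' {q})}) :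
    IsOpen 𝒰Cf ∧ Dense 𝒰Cf ∧ volume 𝒰Cfᶜ = 0 := by
  classical
  -- shorthand
  have hπs : ContMDiff (𝓡 n) 𝓘(ℝ, EuclideanSpace ℝ (Fin n)) (⊤ : ℕ∞) π := by
    have hfun : π = fun x => (ι x).1 := funext hπ
    rw [hfun]
    exact contDiff_fst.comp_contMDiff hι
  have hπc : Continuous π := hπs.continuous
  have hSc : Continuous S := hS.continuous
  haveI : T2Space N := (hι.continuous.isClosedEmbedding hinj).toIsEmbedding.t2Space
  set C := {x : N | ¬ Function.Bijective
      ⇑(mfderiv (𝓡 n) 𝓘(ℝ, EuclideanSpace ℝ (Fin n)) π x)} with hCdef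
  obtain ⟨hCclosed, hCnull⟩ := crit_closed_null hπs
  have h𝒰compl : 𝒰ᶜ = π '' C := by
    rw [h𝒰]
    ext q
    simp only [mem_compl_iff, mem_setOf_eq, not_forall, mem_image, hCdef]
    constructor
    · rintro ⟨x, hx, hb⟩; exact ⟨x, hb, hx⟩
    · rintro ⟨x, hb, hx⟩; exact ⟨x, hx, hb⟩
  have h𝒰eq : 𝒰 = (π '' C)ᶜ := by rw [← h𝒰compl, compl_compl]
  have h𝒰open : IsOpen 𝒰 := by
    rw [h𝒰eq]
    exact ((hCclosed.isCompact.image hπc).isClosed).isOpen_compl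
  have hreg : ∀ q ∈ 𝒰, ∀ x, π x = q →
      Function.Bijective ⇑(mfderiv (𝓡 n) 𝓘(ℝ, EuclideanSpace ℝ (Fin n)) π x) := by
    intro q hq
    rw [h𝒰] at hq
    exact hq
  set B := {q : EuclideanSpace ℝ (Fin n) |
    ∃ x y, x ≠ y ∧ π x = q ∧ π y = q ∧ S x = S y} with hBdef
  have h𝒰Cf2 : 𝒰Cf = 𝒰 \ B := by
    rw [h𝒰Cf]
    ext q
    simp only [mem_setOf_eq, mem_diff, hBdef, mem_sep_iff]
    constructor
    · rintro ⟨hq𝒰, hinjOn⟩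
      refine ⟨hq𝒰, ?_⟩
      rintro ⟨x, y, hxy, hx, hy, hSxy⟩
      exact hxy (hinjOn (by simpa using hx) (by simpa using hy) hSxy)
    · rintro ⟨hq𝒰, hnB⟩
      refine ⟨hq𝒰, fun x hx y hy hxy => ?_⟩
      by_contra hne
      exact hnB ⟨x, y, hne, by simpa using hx, by simpa using hy, hxy⟩
  -- local injectivity of π near regular points
  have hlocinj : ∀ x : N,
      Function.Bijective ⇑(mfderiv (𝓡 n) 𝓘(ℝ, EuclideanSpace ℝ (Fin n)) π x) →
      ∃ U : Set N, IsOpen U ∧ x ∈ U ∧ Set.InjOn π U := by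
    intro x hx
    obtain ⟨U, V, σ, hUo, hxU, -, -, -, hUprop, -⟩ := localSection hπs x hx Filter.univ_mem
    exact ⟨U, hUo, hxU, fun a ha b hb hab => by
      rw [← (hUprop a ha).2, ← (hUprop b hb).2, hab]⟩
  -- openness
  have hopen : IsOpen (𝒰 \ B) := by
    rw [isOpen_iff_forall_mem_open]
    intro q hq
    have hfib : IsCompact (π ⁻¹' {q}) := (isClosed_singleton.preimage hπc).isCompact
    have hchoice : ∀ z : N, ∃ U : Set N, π z = q → (IsOpen U ∧ z ∈ U ∧ Set.InjOn π U) := by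
      intro z
      by_cases hz : π z = q
      · obtain ⟨U, hU⟩ := hlocinj z (hreg q hq.1 z hz)
        exact ⟨U, fun _ => hU⟩
      · exact ⟨∅, fun h => absurd h hz⟩
    choose U hU using hchoice
    obtain ⟨t, htsub, htcov⟩ := hfib.elim_nhds_subcover U
      (fun z hz => ((hU z hz).1).mem_nhds ((hU z hz).2.1))
    set Λ := {p : N × N | π p.1 = π p.2 ∧ S p.1 = S p.2} with hΛ
    have hΛclosed : IsClosed Λ :=
      (isClosed_eq (hπc.comp continuous_fst) (hπc.comp continuous_snd)).inter
        (isClosed_eq (hSc.comp continuous_fst) (hSc.comp continuous_snd))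
    set T := Λ \ ⋃ z ∈ t, (U z) ×ˢ (U z) with hT
    have hTclosed : IsClosed T := by
      rw [hT, diff_eq]
      exact hΛclosed.inter (isOpen_biUnion fun z hz =>
        ((hU z (htsub z hz)).1.prod (hU z (htsub z hz)).1)).isClosed_compl
    have hqim : q ∉ (fun p : N × N => π p.1) '' T := by
      rintro ⟨⟨x, y⟩, hpT, hpq⟩
      obtain ⟨⟨hπxy, hSxy⟩, hnotin⟩ := hpT
      simp only at hpq hπxy hSxy
      have hxq : π x = q := hpq
      have hyq : π y = q := by rw [← hπxy, hxq]
      have hxyeq : x = y := by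
        by_contra hne
        exact hq.2 ⟨x, y, hne, hxq, hyq, hSxy⟩
      have hxfib : x ∈ π ⁻¹' {q} := by simpa using hxq
      have := htcov hxfib
      simp only [mem_iUnion] at this
      obtain ⟨z, hz, hxUz⟩ := this
      exact hnotin (mem_biUnion hz ⟨hxUz, hxyeq ▸ hxUz⟩)
    have himclosed : IsClosed ((fun p : N × N => π p.1) '' T) :=
      (hTclosed.isCompact.image (hπc.comp continuous_fst)).isClosed
    refine ⟨𝒰 ∩ ((fun p : N × N => π p.1) '' T)ᶜ, ?_,
      h𝒰open.inter himclosed.isOpen_compl, hq.1, hqim⟩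
    rintro q' ⟨hq'𝒰, hq'T⟩
    refine ⟨hq'𝒰, ?_⟩
    rintro ⟨x, y, hxy, hxq, hyq, hSxy⟩
    have hpΛ : (x, y) ∈ Λ := ⟨by simp only; rw [hxq, hyq], hSxy⟩
    have hnT : (x, y) ∉ T := fun h => hq'T ⟨(x, y), h, hxq⟩
    have hmem : (x, y) ∈ ⋃ z ∈ t, (U z) ×ˢ (U z) := by
      by_contra hc
      exact hnT ⟨hpΛ, hc⟩
    simp only [mem_iUnion] at hmem
    obtain ⟨z, hz, hxU, hyU⟩ := hmem
    exact hxy ((hU z (htsub z hz)).2.2 hxU hyU (by rw [hxq, hyq]))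
  -- nullity of 𝒰 ∩ B
  have hBnull : volume (𝒰 ∩ B) = 0 := by
    refine measure_null_of_locally_null _ fun q hq => ?_
    obtain ⟨K, hKcomp, hKint, hKsub⟩ := exists_compact_subset h𝒰open hq.1
    suffices hBK : volume (B ∩ K) = 0 by
      refine ⟨(𝒰 ∩ B) ∩ interior K, ?_, ?_⟩
      · exact Filter.inter_mem self_mem_nhdsWithin
          (mem_nhdsWithin_of_mem_nhds (isOpen_interior.mem_nhds hKint))
      · refine measure_mono_null (fun r hr => ?_) hBK
        exact ⟨hr.1.2, interior_subset hr.2⟩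
    set ΛK := {p : N × N | (π p.1 = π p.2 ∧ S p.1 = S p.2) ∧ π p.1 ∈ K} with hΛK
    have hΛKclosed : IsClosed ΛK := by
      refine IsClosed.inter (IsClosed.inter ?_ ?_) ?_
      · exact isClosed_eq (hπc.comp continuous_fst) (hπc.comp continuous_snd)
      · exact isClosed_eq (hSc.comp continuous_fst) (hSc.comp continuous_snd)
      · exact hKcomp.isClosed.preimage (hπc.comp continuous_fst)
    have hΛKcomp : IsCompact ΛK := hΛKclosed.isCompact
    have hpoint : ∀ p : N × N, ∃ (Wp : Set (N × N)) (Z : Set (EuclideanSpace ℝ (Fin n))),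
        p ∈ ΛK → (Wp ∈ 𝓝 p ∧ volume Z = 0 ∧
          ∀ x' y', (x', y') ∈ Wp → π x' = π y' → S x' = S y' → x' = y' ∨ π x' ∈ Z) := by
      rintro ⟨x₀, y₀⟩
      by_cases hp : (x₀, y₀) ∈ ΛK
      swap
      · exact ⟨univ, ∅, fun h => absurd h hp⟩
      obtain ⟨⟨hπp, hSp⟩, hπK⟩ := hp
      simp only at hπp hSp hπK
      have bijx := hreg (π x₀) (hKsub hπK) x₀ rfl
      have bijy := hreg (π x₀) (hKsub hπK) y₀ hπp.symm
      by_cases hxy : x₀ = y₀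
      · obtain ⟨U1, V1, σ1, hU1o, hxU1, hU1sub, hV1o, hV1prop, hU1prop, hσ1s⟩ :=
          localSection hπs x₀ bijx Filter.univ_mem
        refine ⟨U1 ×ˢ U1, ∅, fun _ => ⟨?_, by simp, ?_⟩⟩
        · exact prod_mem_nhds (hU1o.mem_nhds hxU1) (hU1o.mem_nhds (hxy ▸ hxU1))
        · intro x' y' hW hπeq hSeq
          left
          have h1 := (hU1prop x' hW.1).2
          have h2 := (hU1prop y' hW.2).2
          rw [← h1, ← h2, hπeq]
      · obtain ⟨O1, O2, hO1o, hO2o, hxO1, hyO2, hO12⟩ := t2_separation hxy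
        obtain ⟨U1, V1, σ1, hU1o, hxU1, hU1sub, hV1o, hV1prop, hU1prop, hσ1s⟩ :=
          localSection hπs x₀ bijx (hO1o.mem_nhds hxO1)
        obtain ⟨U2, V2, σ2, hU2o, hyU2, hU2sub, hV2o, hV2prop, hU2prop, hσ2s⟩ :=
          localSection hπs y₀ bijy (hO2o.mem_nhds hyO2)
        set Z := {q' ∈ V1 ∩ V2 | S (σ1 q') - S (σ2 q') = 0} with hZ
        have hZnull : volume Z = 0 := by
          refine measure_null_of_locally_null _ fun q₁ hq₁ => ?_
          obtain ⟨⟨hq₁V1, hq₁V2⟩, hgq₁⟩ := hq₁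
          have hd1 : HasFDerivAt (S ∘ σ1) (innerSL ℝ ((ι (σ1 q₁)).2)) q₁ :=
            section_deriv hπs (P := fun z => (ι z).2) hS hexact hV1o
              (fun r hr => (hV1prop r hr).2) hq₁V1 (hσ1s _ hq₁V1)
          have hd2 : HasFDerivAt (S ∘ σ2) (innerSL ℝ ((ι (σ2 q₁)).2)) q₁ :=
            section_deriv hπs (P := fun z => (ι z).2) hS hexact hV2o
              (fun r hr => (hV2prop r hr).2) hq₁V2 (hσ2s _ hq₁V2)
          have hgd : HasFDerivAt (fun q' => S (σ1 q') - S (σ2 q'))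
              (innerSL ℝ ((ι (σ1 q₁)).2) - innerSL ℝ ((ι (σ2 q₁)).2)) q₁ := hd1.sub hd2
          have hne : σ1 q₁ ≠ σ2 q₁ := by
            intro h
            have h1 : σ1 q₁ ∈ O1 := hU1sub ((hV1prop _ hq₁V1).1)
            have h2 : σ2 q₁ ∈ O2 := hU2sub ((hV2prop _ hq₁V2).1)
            rw [h] at h1
            exact Set.disjoint_left.mp hO12 h1 h2
          have hQeq : (ι (σ1 q₁)).1 = (ι (σ2 q₁)).1 := by
            rw [← hπ, ← hπ, (hV1prop _ hq₁V1).2, (hV2prop _ hq₁V2).2]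
          have hPne : (ι (σ1 q₁)).2 ≠ (ι (σ2 q₁)).2 := by
            intro h
            exact hne (hinj (Prod.ext hQeq h))
          have hA0 : innerSL ℝ ((ι (σ1 q₁)).2) - innerSL ℝ ((ι (σ2 q₁)).2) ≠ 0 := by
            intro h
            apply hPne
            have h' := congrArg
              (fun (L : EuclideanSpace ℝ (Fin n) →L[ℝ] ℝ) =>
                L ((ι (σ1 q₁)).2 - (ι (σ2 q₁)).2)) h
            simp only [ContinuousLinearMap.sub_apply, innerSL_apply_apply,
              ContinuousLinearMap.zero_apply] at h'
            rw [← inner_sub_left] at h'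
            exact sub_eq_zero.mp (inner_self_eq_zero.mp h')
          have hgc : ContDiffAt ℝ (↑(⊤ : ℕ∞)) (fun q' => S (σ1 q') - S (σ2 q')) q₁ := by
            have c1 : ContMDiffAt 𝓘(ℝ, EuclideanSpace ℝ (Fin n)) 𝓘(ℝ, ℝ) (⊤ : ℕ∞) (S ∘ σ1) q₁ :=
              (hS.contMDiffAt).comp q₁ (hσ1s _ hq₁V1)
            have c2 : ContMDiffAt 𝓘(ℝ, EuclideanSpace ℝ (Fin n)) 𝓘(ℝ, ℝ) (⊤ : ℕ∞) (S ∘ σ2) q₁ :=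
              (hS.contMDiffAt).comp q₁ (hσ2s _ hq₁V2)
            exact (contMDiffAt_iff_contDiffAt.mp c1).sub (contMDiffAt_iff_contDiffAt.mp c2)
          obtain ⟨W₁, hW₁mem, hW₁null⟩ := null_level hgc hgd hA0
          refine ⟨Z ∩ W₁, Filter.inter_mem self_mem_nhdsWithin
            (mem_nhdsWithin_of_mem_nhds hW₁mem), ?_⟩
          refine measure_mono_null ?_ hW₁null
          rintro r ⟨⟨hrV, hgr⟩, hrW⟩
          exact ⟨hrW, hgr⟩
        refine ⟨U1 ×ˢ U2, Z, fun _ =>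
          ⟨prod_mem_nhds (hU1o.mem_nhds hxU1) (hU2o.mem_nhds hyU2), hZnull, ?_⟩⟩
        intro x' y' hW hπeq hSeq
        right
        have h1 := hU1prop x' hW.1
        have h2 := hU2prop y' hW.2
        refine ⟨⟨h1.1, by rw [hπeq]; exact h2.1⟩, ?_⟩
        show S (σ1 (π x')) - S (σ2 (π x')) = 0
        rw [h1.2, hπeq, h2.2, hSeq, sub_self]
    choose W Z hWZ using hpoint
    obtain ⟨T, hTsub, hTcov⟩ := hΛKcomp.elim_nhds_subcover W (fun p hp => (hWZ p hp).1)
    have hZZ : volume (⋃ p ∈ T, Z p) = 0 := by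
      refine le_antisymm (le_trans (measure_biUnion_finset_le T Z) ?_) (zero_le)
      exact le_of_eq (Finset.sum_eq_zero fun p hp => (hWZ p (hTsub p hp)).2.1)
    refine measure_mono_null ?_ hZZ
    rintro q' ⟨⟨x, y, hxy, hxq, hyq, hSxy⟩, hq'K⟩
    have hpΛK : (x, y) ∈ ΛK := ⟨⟨by simp only; rw [hxq, hyq], hSxy⟩, by simp only; rwa [hxq]⟩
    have hcov := hTcov hpΛK
    simp only [mem_iUnion] at hcov
    obtain ⟨p, hpT, hmemW⟩ := hcov
    rcases (hWZ p (hTsub p hpT)).2.2 x y hmemW (by rw [hxq, hyq]) hSxy with h | h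
    · exact absurd h hxy
    · exact mem_biUnion hpT (hxq ▸ h)
  have hcompl : 𝒰Cfᶜ ⊆ 𝒰ᶜ ∪ (𝒰 ∩ B) := by
    rw [h𝒰Cf2]
    intro r hr
    simp only [mem_compl_iff, mem_diff, not_and, not_not] at hr
    by_cases hr𝒰 : r ∈ 𝒰
    · exact Or.inr ⟨hr𝒰, hr hr𝒰⟩
    · exact Or.inl hr𝒰
  have hnull : volume 𝒰Cfᶜ = 0 := by
    refine measure_mono_null hcompl ?_
    refine measure_union_null ?_ hBnull
    rw [h𝒰compl]
    exact hCnull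
  have hopen' : IsOpen 𝒰Cf := h𝒰Cf2 ▸ hopen
  refine ⟨hopen', ?_, hnull⟩
  rw [dense_iff_inter_open]
  intro V hVo hVne
  by_contra hc
  push_neg at hc
  have hsub : V ⊆ 𝒰Cfᶜ := by
    intro v hv
    by_contra hvc
    rw [mem_compl_iff, not_not] at hvc
    exact (Set.eq_empty_iff_forall_notMem.mp hc v) ⟨hv, hvc⟩
  have := hVo.measure_pos volume hVne
  rw [show volume V = 0 from measure_mono_null hsub hnull] at this
  exact lt_irrefl 0 this
end

section
/- Let K > 0 and let f_k : ℝⁿ → ℝ be a sequence of K-Lipschitz functions converging uniformly to a function f : ℝⁿ → ℝ. Let V ⊆ ℝⁿ be a set whose complement has Lebesgue measure zero, such that every f_k is differentiable at every point of V. For q ∈ ℝⁿ define Λ_q ⊆ ℝⁿ to be the set of all p ∈ ℝⁿ for which there exist a strictly increasing sequence of indices (k_j) and points x_j ∈ V with x_j → q and ∇f_{k_j}(x_j) → p. If f is differentiable at the point q, then ∇f(q) belongs to the convex hull of Λ_q. -/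
open scoped NNReal
open MeasureTheory Filter
open Set Metric
open scoped ENNReal Topology

lemma sum_dite_fin {M : Type*} [AddCommMonoid M] {m k : ℕ} (hk : k ≤ m) (f : Fin k → M) :
    ∑ i : Fin m, (if h : (i : ℕ) < k then f ⟨i, h⟩ else 0) = ∑ j : Fin k, f j := by
  classical
  have h1 : ∑ i : Fin m, (if h : (i : ℕ) < k then f ⟨i, h⟩ else 0)
      = ∑ i ∈ Finset.range m, (if h : i < k then f ⟨i, h⟩ else 0) :=
    Fin.sum_univ_eq_sum_range (fun i => if h : i < k then f ⟨i, h⟩ else 0) m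
  rw [h1, ← Finset.sum_range_add_sum_Ico _ hk]
  have h2 : ∑ i ∈ Finset.Ico k m, (if h : i < k then f ⟨i, h⟩ else 0) = 0 := by
    apply Finset.sum_eq_zero
    intro i hi
    rw [dif_neg (by simpa using (Finset.mem_Ico.1 hi).1.not_gt)]
  rw [h2, add_zero, ← Fin.sum_univ_eq_sum_range (fun i => if h : i < k then f ⟨i, h⟩ else 0) k]
  apply Finset.sum_congr rfl
  intro j _
  rw [dif_pos j.isLt]

lemma isCompact_convexHull' {E : Type*} [NormedAddCommGroup E] [NormedSpace ℝ E]
    [FiniteDimensional ℝ E] {s : Set E} (hs : IsCompact s) : IsCompact (convexHull ℝ s) := by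
  classical
  rcases s.eq_empty_or_nonempty with rfl | ⟨p₀, hp₀⟩
  · simpa using isCompact_empty
  set m := Module.finrank ℝ E + 1 with hm
  set g : (Fin m → ℝ) × (Fin m → E) → E := fun p => ∑ i, p.1 i • p.2 i with hg
  have hgc : Continuous g := by
    apply continuous_finset_sum
    intro i _
    exact ((continuous_apply i).comp continuous_fst).smul ((continuous_apply i).comp continuous_snd)
  set D : Set ((Fin m → ℝ) × (Fin m → E)) :=
    (stdSimplex ℝ (Fin m)) ×ˢ (Set.univ.pi fun _ : Fin m => s) with hD
  have hDc : IsCompact D := (isCompact_stdSimplex ℝ (Fin m)).prod (isCompact_univ_pi fun _ => hs)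
  have himg : g '' D = convexHull ℝ s := by
    apply Subset.antisymm
    · rintro _ ⟨⟨w, z⟩, ⟨⟨hw0, hw1⟩, hz⟩, rfl⟩
      exact (convex_convexHull ℝ s).sum_mem (fun i _ => hw0 i) hw1
        (fun i _ => subset_convexHull ℝ s (hz i (mem_univ i)))
    · intro x hx
      obtain ⟨t, ht, hai, hxt⟩ : ∃ t : Finset E, ↑t ⊆ s ∧
          AffineIndependent ℝ ((↑) : t → E) ∧ x ∈ convexHull ℝ (↑t : Set E) := by
        rw [convexHull_eq_union] at hx
        simp only [mem_iUnion, exists_prop] at hx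
        obtain ⟨t, h1, h2, h3⟩ := hx
        exact ⟨t, h1, h2, h3⟩
      have hcard : t.card ≤ m := by
        have h1 := hai.card_le_finrank_succ
        rw [Fintype.card_coe] at h1
        exact h1.trans (Nat.add_le_add_right (Submodule.finrank_le _) 1)
      rw [Finset.convexHull_eq] at hxt
      obtain ⟨w, hw0, hw1, hwx⟩ := hxt
      rw [t.centerMass_eq_of_sum_1 _ hw1] at hwx
      set σ : Fin t.card ≃ t := t.equivFin.symm with hσ
      set w' : Fin m → ℝ := fun i => if h : (i : ℕ) < t.card then w (σ ⟨i, h⟩) else 0 with hw'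
      set z' : Fin m → E := fun i => if h : (i : ℕ) < t.card then (σ ⟨i, h⟩ : E) else p₀ with hz'
      have keyR : ∀ (f : E → ℝ),
          ∑ i : Fin m, (if h : (i : ℕ) < t.card then f (σ ⟨i, h⟩) else 0) = ∑ y ∈ t, f y := by
        intro f
        rw [sum_dite_fin hcard (fun j => f (σ j))]
        rw [← Finset.sum_coe_sort t f]
        exact (Equiv.sum_comp σ (fun y : t => f y))
      have key : ∀ (f : E → E),
          ∑ i : Fin m, (if h : (i : ℕ) < t.card then f (σ ⟨i, h⟩) else 0) = ∑ y ∈ t, f y := by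
        intro f
        rw [sum_dite_fin hcard (fun j => f (σ j))]
        rw [← Finset.sum_coe_sort t f]
        exact (Equiv.sum_comp σ (fun y : t => f y))
      refine ⟨(w', z'), ⟨⟨fun i => ?_, ?_⟩, fun i _ => ?_⟩, ?_⟩
      · by_cases h : (i : ℕ) < t.card
        · simpa [hw', h] using hw0 _ (σ ⟨i, h⟩).2
        · simp [hw', h]
      · rw [← hw1]; exact keyR (fun y => w y)
      · by_cases h : (i : ℕ) < t.card
        · simpa [hz', h] using ht (σ ⟨i, h⟩).2
        · simpa [hz', h] using hp₀
      · rw [← hwx]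
        calc g (w', z')
            = ∑ i : Fin m, (if h : (i : ℕ) < t.card then w (σ ⟨i, h⟩) • (σ ⟨i, h⟩ : E) else 0) := by
              apply Finset.sum_congr rfl
              intro i _
              by_cases h : (i : ℕ) < t.card <;> simp [hw', hz', h]
          _ = ∑ y ∈ t, w y • y := key (fun y => w y • y)
          _ = ∑ i ∈ t, w i • id i := by simp
  rw [← himg]
  exact hDc.image hgc

lemma lip_deriv_le {g : ℝ → ℝ} {L : ℝ≥0} (hg : LipschitzWith L g) {t u : ℝ}
    (ht : 0 ≤ t) (hu : -(L : ℝ) ≤ u)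
    (hae : ∀ᵐ s, s ∈ Set.Ioc 0 t → ∃ d, d ≤ u ∧ HasDerivAt g d s) :
    g t - g 0 ≤ u * t := by
  set h : ℝ → ℝ := fun s => g s + L * s with hh
  have hgcont : Continuous g := hg.continuous
  have hdist : ∀ a b : ℝ, a ≤ b → g a - g b ≤ L * (b - a) := by
    intro a b hab
    have := hg.dist_le_mul a b
    rw [Real.dist_eq, Real.dist_eq] at this
    have h2 : |a - b| = b - a := by rw [abs_sub_comm]; exact abs_of_nonneg (by linarith)
    rw [h2] at this
    linarith [le_abs_self (g a - g b)]
  have hmono : Monotone h := by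
    intro a b hab
    have := hdist a b hab
    simp only [hh]
    nlinarith
  set μ := hmono.stieltjesFunction.measure with hμ
  have hSF : ∀ x, hmono.stieltjesFunction x = h x := by
    intro x
    rw [Monotone.stieltjesFunction_eq]
    exact rightLim_eq_of_tendsto
      ((hgcont.add (continuous_const.mul continuous_id)).continuousWithinAt)
  have hμIoc : ∀ a b : ℝ, μ (Ioc a b) = ENNReal.ofReal (h b - h a) := by
    intro a b
    rw [hμ, StieltjesFunction.measure_Ioc, hSF, hSF]
  -- second monotone function h₂ s = L s - g s
  have hmono2 : Monotone (fun s : ℝ => (L : ℝ) * s - g s) := by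
    intro a b hab
    have := hdist a b hab  -- wrong direction; need g b - g a ≤ L (b-a)
    have h2 : g b - g a ≤ L * (b - a) := by
      have := hg.dist_le_mul b a
      rw [Real.dist_eq, Real.dist_eq] at this
      have h3 : |b - a| = b - a := abs_of_nonneg (by linarith)
      rw [h3] at this
      linarith [le_abs_self (g b - g a)]
    simp only []
    nlinarith
  set ν := hmono2.stieltjesFunction.measure with hν
  have hSF2 : ∀ x, hmono2.stieltjesFunction x = (L : ℝ) * x - g x := by
    intro x
    rw [Monotone.stieltjesFunction_eq]
    exact rightLim_eq_of_tendsto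
      (((continuous_const.mul continuous_id).sub hgcont).continuousWithinAt)
  have hsum : μ + ν = ((2 * L : ℝ≥0) : ℝ≥0∞) • (volume : Measure ℝ) := by
    have : IsLocallyFiniteMeasure (μ + ν) := by
      refine ⟨fun x => ?_⟩
      obtain ⟨s, hs, hμs⟩ := μ.finiteAt_nhds x
      obtain ⟨s', hs', hνs'⟩ := ν.finiteAt_nhds x
      refine ⟨s ∩ s', inter_mem hs hs', ?_⟩
      rw [Measure.add_apply]
      exact ENNReal.add_lt_top.2 ⟨lt_of_le_of_lt (measure_mono inter_subset_left) hμs,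
        lt_of_le_of_lt (measure_mono inter_subset_right) hνs'⟩
    apply Measure.ext_of_Ioc
    intro a b hab
    rw [Measure.add_apply, hμIoc, hν, StieltjesFunction.measure_Ioc, hSF2, hSF2,
      Measure.smul_apply, Real.volume_Ioc, smul_eq_mul]
    rw [← ENNReal.ofReal_add (sub_nonneg.2 (hmono hab.le)) (sub_nonneg.2 (hmono2 hab.le))]
    rw [← ENNReal.ofReal_coe_nnreal, ← ENNReal.ofReal_mul (by positivity)]
    congr 1
    push_cast
    ring
  have hle : μ ≤ ((2 * L : ℝ≥0) : ℝ≥0∞) • (volume : Measure ℝ) := by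
    rw [← hsum]
    exact Measure.le_add_right le_rfl
  have hac : μ ≪ (volume : Measure ℝ) := by
    refine Measure.AbsolutelyContinuous.mk (fun s hs hs0 => ?_)
    have := hle s
    rw [Measure.smul_apply, hs0, smul_eq_mul, mul_zero] at this
    exact le_antisymm this zero_le
  have hrnlt := Measure.rnDeriv_lt_top μ (volume : Measure ℝ)
  have hderiv := hmono.ae_hasDerivAt
  -- a.e. bound on rnDeriv on Ioc 0 t
  have hbound : ∀ᵐ s, s ∈ Ioc 0 t → μ.rnDeriv volume s ≤ ENNReal.ofReal (u + L) := by
    filter_upwards [hae, hderiv, hrnlt] with s hs hd hlt hmem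
    obtain ⟨d, hdu, hgd⟩ := hs hmem
    have hhd : HasDerivAt h (d + L) s := by
      exact (hgd.add ((hasDerivAt_id s).const_mul (L : ℝ))).congr_deriv (by simp)
    have heq : ((μ.rnDeriv volume s).toReal) = d + L := hd.unique hhd
    rw [ENNReal.le_ofReal_iff_toReal_le hlt.ne (by linarith), heq]
    linarith
  have hInt : μ (Ioc 0 t) = ∫⁻ s in Ioc 0 t, μ.rnDeriv volume s := by
    conv_lhs => rw [← Measure.withDensity_rnDeriv_eq μ volume hac]
    rw [withDensity_apply _ measurableSet_Ioc]
  have hIntLe : ∫⁻ s in Ioc 0 t, μ.rnDeriv volume s ≤ ENNReal.ofReal (u + L) * ENNReal.ofReal t := by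
    calc ∫⁻ s in Ioc 0 t, μ.rnDeriv volume s
        ≤ ∫⁻ _ in Ioc 0 t, ENNReal.ofReal (u + L) := by
          apply lintegral_mono_ae
          exact (ae_restrict_iff' measurableSet_Ioc).2 hbound
      _ = ENNReal.ofReal (u + L) * ENNReal.ofReal t := by
          rw [setLIntegral_const, Real.volume_Ioc]
          congr 1
          rw [sub_zero]
  have hfinal : ENNReal.ofReal (h t - h 0) ≤ ENNReal.ofReal ((u + L) * t) := by
    rw [← hμIoc 0 t]
    rw [hInt]
    refine hIntLe.trans_eq ?_
    rw [← ENNReal.ofReal_mul (by linarith)]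
  have : h t - h 0 ≤ (u + L) * t :=
    (ENNReal.ofReal_le_ofReal_iff (by nlinarith)).1 hfinal
  simp only [hh] at this
  nlinarith

lemma ae_ae_line_mem {n : ℕ} {V : Set (EuclideanSpace ℝ (Fin n))} (hV : volume Vᶜ = 0)
    (v : EuclideanSpace ℝ (Fin n)) :
    ∀ᵐ y : EuclideanSpace ℝ (Fin n), ∀ᵐ s : ℝ, y + s • v ∈ V := by
  obtain ⟨W, hVW, hWmeas, hW0⟩ := exists_measurable_superset_of_null hV
  have hcont : Continuous (fun p : (EuclideanSpace ℝ (Fin n)) × ℝ => p.1 + p.2 • v) :=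
    continuous_fst.add (continuous_snd.smul continuous_const)
  set T : Set ((EuclideanSpace ℝ (Fin n)) × ℝ) :=
    (fun p : (EuclideanSpace ℝ (Fin n)) × ℝ => p.1 + p.2 • v) ⁻¹' W with hT
  have hTmeas : MeasurableSet T := hcont.measurable hWmeas
  have hswapmeas : MeasurableSet (Prod.swap ⁻¹' T : Set (ℝ × EuclideanSpace ℝ (Fin n))) :=
    measurable_swap hTmeas
  have hswap0 : ((volume : Measure ℝ).prod (volume : Measure (EuclideanSpace ℝ (Fin n))))
      (Prod.swap ⁻¹' T) = 0 := by
    rw [Measure.measure_prod_null hswapmeas]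
    refine ae_of_all _ (fun s => ?_)
    show (volume : Measure (EuclideanSpace ℝ (Fin n))) (Prod.mk s ⁻¹' (Prod.swap ⁻¹' T)) = 0
    have h1 : (Prod.mk s ⁻¹' (Prod.swap ⁻¹' T) : Set (EuclideanSpace ℝ (Fin n)))
        = (fun y : EuclideanSpace ℝ (Fin n) => y + s • v) ⁻¹' W := rfl
    rw [h1, measure_preimage_add_right]
    exact hW0
  have hT0 : ((volume : Measure (EuclideanSpace ℝ (Fin n))).prod (volume : Measure ℝ)) T = 0 := by
    have h1 : ((volume : Measure ℝ).prod (volume : Measure (EuclideanSpace ℝ (Fin n))))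
        (Prod.swap ⁻¹' T)
        = ((volume : Measure (EuclideanSpace ℝ (Fin n))).prod (volume : Measure ℝ)) T := by
      rw [← Measure.prod_swap, Measure.map_apply measurable_swap hswapmeas]
      congr 1
    rw [← h1, hswap0]
  have hae := (Measure.measure_prod_null hTmeas).1 hT0
  filter_upwards [hae] with y hy
  have h2 : (volume : Measure ℝ) {s : ℝ | y + s • v ∈ W} = 0 := hy
  have h3 : ∀ᵐ s : ℝ, y + s • v ∉ W := by
    rw [ae_iff]
    simpa using h2
  filter_upwards [h3] with s hs
  by_contra hmem
  exact hs (hVW hmem)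

set_option maxHeartbeats 1000000 in

/-- (Lemma 5.3, Bernard–Oliveira dos Santos.) If equi-Lipschitz functions
`f_k` converge uniformly to `f`, all `f_k` are differentiable on a full-measure set `V`, and
`f` is differentiable at `q`, then `∇f(q)` lies in the convex hull of the set `Λ_q` of all
limits of gradients `∇f_{k_j}(x_j)` with `x_j ∈ V`, `x_j → q`. -/
theorem gradient_mem_convexHull_of_limits (n : ℕ) (K : ℝ≥0) (hK : 0 < K)
    (fk : ℕ → EuclideanSpace ℝ (Fin n) → ℝ) (f : EuclideanSpace ℝ (Fin n) → ℝ)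
    (hLip : ∀ k, LipschitzWith K (fk k))
    (hconv : TendstoUniformly fk f atTop)
    (V : Set (EuclideanSpace ℝ (Fin n))) (hV : volume Vᶜ = 0)
    (hdiff : ∀ k, ∀ x ∈ V, DifferentiableAt ℝ (fk k) x)
    (q : EuclideanSpace ℝ (Fin n)) (hq : DifferentiableAt ℝ f q) :
    gradient f q ∈ convexHull ℝ
      {p : EuclideanSpace ℝ (Fin n) | ∃ k : ℕ → ℕ, StrictMono k ∧
        ∃ x : ℕ → EuclideanSpace ℝ (Fin n), (∀ j, x j ∈ V) ∧
          Tendsto x atTop (nhds q) ∧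
          Tendsto (fun j => gradient (fk (k j)) (x j)) atTop (nhds p)} := by
  classical
  -- the cluster-point description of the limit set
  set Cl : Set (EuclideanSpace ℝ (Fin n)) :=
    {p | ∀ ε : ℝ, 0 < ε → ∀ N : ℕ, ∃ k, N ≤ k ∧ ∃ x, x ∈ V ∧ dist x q < ε ∧
      dist (gradient (fk k) x) p < ε} with hCldef
  -- gradient bound
  have hgradbd : ∀ (k : ℕ) (x : EuclideanSpace ℝ (Fin n)), ‖gradient (fk k) x‖ ≤ K := by
    intro k x
    have h1 : ‖fderiv ℝ (fk k) x‖ ≤ K := norm_fderiv_le_of_lipschitz ℝ (hLip k)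
    rw [gradient]
    rwa [LinearIsometryEquiv.norm_map]
  -- cluster description is contained in the limit set
  have hCl_sub : ∀ p ∈ Cl, p ∈ {p : EuclideanSpace ℝ (Fin n) | ∃ k : ℕ → ℕ, StrictMono k ∧
      ∃ x : ℕ → EuclideanSpace ℝ (Fin n), (∀ j, x j ∈ V) ∧
        Tendsto x atTop (nhds q) ∧
        Tendsto (fun j => gradient (fk (k j)) (x j)) atTop (nhds p)} := by
    intro p hp
    have H : ∀ (N m : ℕ), ∃ kx : ℕ × (EuclideanSpace ℝ (Fin n)), N ≤ kx.1 ∧ kx.2 ∈ V ∧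
        dist kx.2 q < 1/(m+1) ∧ dist (gradient (fk kx.1) kx.2) p < 1/(m+1) := by
      intro N m
      obtain ⟨k, hk, x, hx1, hx2, hx3⟩ := hp (1/(m+1)) (by positivity) N
      exact ⟨(k, x), hk, hx1, hx2, hx3⟩
    set S : ℕ → ℕ × (EuclideanSpace ℝ (Fin n)) :=
      fun j => Nat.rec (H 0 0).choose (fun j ih => (H (ih.1 + 1) (j+1)).choose) j with hS
    have hS0 : S 0 = (H 0 0).choose := rfl
    have hSsucc : ∀ j, S (j+1) = (H ((S j).1 + 1) (j+1)).choose := fun j => rfl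
    have hspec : ∀ j, (S j).2 ∈ V ∧ dist (S j).2 q < 1/(j+1) ∧
        dist (gradient (fk (S j).1) (S j).2) p < 1/(j+1) := by
      intro j
      cases j with
      | zero =>
        have h := (H 0 0).choose_spec
        rw [← hS0] at h
        exact ⟨h.2.1, by exact_mod_cast h.2.2.1, by exact_mod_cast h.2.2.2⟩
      | succ j =>
        have h := (H ((S j).1 + 1) (j+1)).choose_spec
        rw [← hSsucc j] at h
        exact ⟨h.2.1, by exact_mod_cast h.2.2.1, by exact_mod_cast h.2.2.2⟩
    have hmonoS : StrictMono (fun j => (S j).1) := by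
      apply strictMono_nat_of_lt_succ
      intro j
      have h := (H ((S j).1 + 1) (j+1)).choose_spec.1
      rw [← hSsucc j] at h
      omega
    refine ⟨fun j => (S j).1, hmonoS, fun j => (S j).2, fun j => (hspec j).1, ?_, ?_⟩
    · rw [tendsto_iff_dist_tendsto_zero]
      exact squeeze_zero (fun j => dist_nonneg) (fun j => (hspec j).2.1.le)
        tendsto_one_div_add_atTop_nhds_zero_nat
    · rw [tendsto_iff_dist_tendsto_zero]
      exact squeeze_zero (fun j => dist_nonneg) (fun j => (hspec j).2.2.le)
        tendsto_one_div_add_atTop_nhds_zero_nat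
  have hLam_sub : ∀ p ∈ {p : EuclideanSpace ℝ (Fin n) | ∃ k : ℕ → ℕ, StrictMono k ∧
      ∃ x : ℕ → EuclideanSpace ℝ (Fin n), (∀ j, x j ∈ V) ∧
        Tendsto x atTop (nhds q) ∧
        Tendsto (fun j => gradient (fk (k j)) (x j)) atTop (nhds p)}, p ∈ Cl := by
    rintro p ⟨k, hk, x, hxV, hxq, hgp⟩
    intro ε hε N
    have hev1 : ∀ᶠ j in atTop, dist (x j) q < ε := hxq.eventually (Metric.ball_mem_nhds q hε)
    have hev2 : ∀ᶠ j in atTop, dist (gradient (fk (k j)) (x j)) p < ε :=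
      hgp.eventually (Metric.ball_mem_nhds p hε)
    obtain ⟨j, hjN, hj2, hj3⟩ := ((eventually_ge_atTop N).and (hev1.and hev2)).exists
    exact ⟨k j, le_trans hjN hk.le_apply, x j, hxV j, hj2, hj3⟩
  have hEq : {p : EuclideanSpace ℝ (Fin n) | ∃ k : ℕ → ℕ, StrictMono k ∧
      ∃ x : ℕ → EuclideanSpace ℝ (Fin n), (∀ j, x j ∈ V) ∧
        Tendsto x atTop (nhds q) ∧
        Tendsto (fun j => gradient (fk (k j)) (x j)) atTop (nhds p)} = Cl :=
    Set.Subset.antisymm hLam_sub hCl_sub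
  rw [hEq]
  -- balls meet V
  have hballV : ∀ r : ℝ, 0 < r → ∃ x, x ∈ V ∧ dist x q < r := by
    intro r hr
    by_contra hcon
    push_neg at hcon
    have hsub : ball q r ⊆ Vᶜ := fun x hx hxV => absurd (mem_ball.1 hx) (not_lt.2 (hcon x hxV))
    have h1 := measure_mono (μ := volume) hsub
    rw [hV] at h1
    exact (measure_ball_pos volume q hr).ne' (le_antisymm h1 zero_le)
  -- subsequence extraction tool
  have subseq_tool : ∀ (km : ℕ → ℕ) (xm : ℕ → EuclideanSpace ℝ (Fin n)),
      (∀ m, m ≤ km m) → (∀ m, xm m ∈ V) → (∀ m, dist (xm m) q < 1/(m+1)) →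
      ∃ p ∈ Cl, ∃ ψ : ℕ → ℕ, StrictMono ψ ∧
        Tendsto (fun j => gradient (fk (km (ψ j))) (xm (ψ j))) atTop (nhds p) := by
    intro km xm hkm hxmV hxm
    have hbd : ∀ m, gradient (fk (km m)) (xm m) ∈ closedBall (0 : EuclideanSpace ℝ (Fin n)) K := by
      intro m
      rw [mem_closedBall, dist_zero_right]
      exact hgradbd _ _
    obtain ⟨p, _, ψ, hψ, hten⟩ := tendsto_subseq_of_bounded isBounded_closedBall hbd
    refine ⟨p, ?_, ψ, hψ, hten⟩
    intro ε hε N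
    have hev1 : ∀ᶠ j in atTop, dist (gradient (fk (km (ψ j))) (xm (ψ j))) p < ε :=
      hten.eventually (Metric.ball_mem_nhds p hε)
    have hev2 : ∀ᶠ j : ℕ in atTop, 1/((j:ℝ)+1) < ε := by
      have h0 : Tendsto (fun j : ℕ => 1/((j:ℝ)+1)) atTop (nhds 0) :=
        tendsto_one_div_add_atTop_nhds_zero_nat
      exact h0.eventually_lt_const hε
    obtain ⟨j, hjN, hj1, hj2⟩ := ((eventually_ge_atTop N).and (hev1.and hev2)).exists
    refine ⟨km (ψ j), le_trans (le_trans hjN hψ.le_apply) (hkm _), xm (ψ j), hxmV _, ?_, hj1⟩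
    have h3 := hxm (ψ j)
    have h4 : 1/((ψ j : ℝ)+1) ≤ 1/((j:ℝ)+1) := by
      apply one_div_le_one_div_of_le (by positivity)
      have hjle : j ≤ ψ j := hψ.le_apply
      exact_mod_cast add_le_add_left (Nat.cast_le.2 hjle) 1
    linarith
  -- Cl is nonempty
  have hne : Cl.Nonempty := by
    have hx : ∀ m : ℕ, ∃ x, x ∈ V ∧ dist x q < 1/(m+1) := fun m => hballV _ (by positivity)
    obtain ⟨p, hp, _⟩ := subseq_tool id (fun m => (hx m).choose) (fun m => le_rfl)
      (fun m => (hx m).choose_spec.1) (fun m => (hx m).choose_spec.2)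
    exact ⟨p, hp⟩
  -- Cl is closed and bounded
  have hclosed : IsClosed Cl := by
    apply isClosed_of_closure_subset
    intro p hp
    intro ε hε N
    obtain ⟨b, hb, hpb⟩ := Metric.mem_closure_iff.1 hp (ε/2) (by positivity)
    obtain ⟨k, hk, x, hx1, hx2, hx3⟩ := hb (ε/2) (by positivity) N
    refine ⟨k, hk, x, hx1, lt_of_lt_of_le hx2 (by linarith), ?_⟩
    have h1 := dist_triangle (gradient (fk k) x) b p
    rw [dist_comm p b] at hpb
    linarith
  have hbdd : Cl ⊆ closedBall 0 K := by
    intro p hp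
    rw [mem_closedBall, dist_zero_right]
    refine le_of_forall_pos_le_add ?_
    intro ε hε
    obtain ⟨k, _, x, _, _, hx3⟩ := hp ε hε 0
    have h1 := hgradbd k x
    calc ‖p‖ = dist p 0 := (dist_zero_right p).symm
      _ ≤ dist p (gradient (fk k) x) + dist (gradient (fk k) x) 0 := dist_triangle _ _ _
      _ ≤ (K : ℝ) + ε := by
          rw [dist_comm p, dist_zero_right]
          linarith
  by_contra hno
  have hcomp : IsCompact Cl :=
    (isCompact_closedBall (0 : EuclideanSpace ℝ (Fin n)) K).of_isClosed_subset hclosed hbdd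
  obtain ⟨φ, u, hsep, hgt⟩ := geometric_hahn_banach_closed_point
    (convex_convexHull ℝ Cl) (isCompact_convexHull' hcomp).isClosed hno
  set v : EuclideanSpace ℝ (Fin n) := (InnerProductSpace.toDual ℝ _).symm φ with hv
  have hfd : ∀ (g : EuclideanSpace ℝ (Fin n) → ℝ) (x : EuclideanSpace ℝ (Fin n)),
      φ (gradient g x) = fderiv ℝ g x v := by
    intro g x
    have h1 : φ (gradient g x) = inner ℝ v (gradient g x) :=
      (InnerProductSpace.toDual_symm_apply).symm
    rw [h1, real_inner_comm]
    exact InnerProductSpace.toDual_symm_apply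
  -- lower bound on u
  have hu_lb : -((K : ℝ) * ‖v‖) ≤ u := by
    obtain ⟨p₀, hp₀⟩ := hne
    have h1 : φ p₀ < u := hsep p₀ (subset_convexHull ℝ Cl hp₀)
    have h2 : φ p₀ = inner ℝ v p₀ := (InnerProductSpace.toDual_symm_apply).symm
    have h3 := abs_real_inner_le_norm v p₀
    have h4 : ‖p₀‖ ≤ K := by
      have := hbdd hp₀
      rwa [mem_closedBall, dist_zero_right] at this
    have h5 : -(‖v‖ * ‖p₀‖) ≤ inner ℝ v p₀ := neg_le_of_abs_le h3
    nlinarith [norm_nonneg v, norm_nonneg p₀, abs_nonneg (inner ℝ v p₀ : ℝ)]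
  -- Claim A
  obtain ⟨δ, hδ, N, hN⟩ : ∃ δ, 0 < δ ∧ ∃ N : ℕ, ∀ k, N ≤ k → ∀ x ∈ V, dist x q < δ →
      fderiv ℝ (fk k) x v < u := by
    by_contra hcon
    push_neg at hcon
    have hsel : ∀ m : ℕ, ∃ kx : ℕ × (EuclideanSpace ℝ (Fin n)), m ≤ kx.1 ∧ kx.2 ∈ V ∧
        dist kx.2 q < 1/(m+1) ∧ u ≤ fderiv ℝ (fk kx.1) kx.2 v := by
      intro m
      obtain ⟨k, hk, x, hx1, hx2, hx3⟩ := hcon (1/(m+1)) (by positivity) m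
      exact ⟨(k, x), hk, hx1, hx2, hx3⟩
    choose kx hkx1 hkx2 hkx3 hkx4 using hsel
    obtain ⟨p, hpCl, ψ, hψ, hten⟩ := subseq_tool (fun m => (kx m).1) (fun m => (kx m).2)
      hkx1 hkx2 hkx3
    have hφten : Tendsto (fun j => φ (gradient (fk ((kx (ψ j)).1)) ((kx (ψ j)).2))) atTop
        (nhds (φ p)) := (φ.continuous.tendsto p).comp hten
    have hup : u ≤ φ p := by
      refine ge_of_tendsto hφten (Eventually.of_forall (fun j => ?_))
      rw [hfd]
      exact hkx4 (ψ j)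
    exact absurd (hsep p (subset_convexHull ℝ Cl hpCl)) (not_lt.2 hup)
  -- Fubini
  have hgood := ae_ae_line_mem hV v
  have hgoodball : ∀ r : ℝ, 0 < r →
      ∃ y, dist y q < r ∧ ∀ᵐ s : ℝ, y + s • v ∈ V := by
    intro r hr
    have hbad : volume {y : EuclideanSpace ℝ (Fin n) | ¬ ∀ᵐ s : ℝ, y + s • v ∈ V} = 0 :=
      ae_iff.1 hgood
    by_contra hcon
    push_neg at hcon
    have hsub : ball q r ⊆ {y : EuclideanSpace ℝ (Fin n) | ¬ ∀ᵐ s : ℝ, y + s • v ∈ V} := by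
      intro y hy
      exact Filter.not_eventually.2 (hcon y (mem_ball.1 hy))
    have h1 := measure_mono (μ := volume) hsub
    rw [hbad] at h1
    exact (measure_ball_pos volume q hr).ne' (le_antisymm h1 zero_le)
  -- derivative of f at q in direction v
  have haux : ∀ (g : EuclideanSpace ℝ (Fin n) → ℝ) (y : EuclideanSpace ℝ (Fin n)) (s : ℝ),
      DifferentiableAt ℝ g (y + s • v) →
      HasDerivAt (fun r : ℝ => g (y + r • v)) (fderiv ℝ g (y + s • v) v) s := by
    intro g y s hg
    have hc : HasDerivAt (fun r : ℝ => y + r • v) v s := by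
      simpa using ((hasDerivAt_id s).smul_const v).const_add y
    exact hg.hasFDerivAt.comp_hasDerivAt s hc
  have hD : HasDerivAt (fun r : ℝ => f (q + r • v)) (fderiv ℝ f q v) 0 := by
    have := haux f q 0 (by simpa using hq)
    simpa using this
  have hDgt : u < fderiv ℝ f q v := by
    rw [← hfd f q]; exact hgt
  -- choose t
  obtain ⟨t, ht0, htsmall, htslope⟩ : ∃ t : ℝ, 0 < t ∧ t * (‖v‖ + 1) < δ/2 ∧
      u * t < f (q + t • v) - f q := by
    have hslope := hasDerivAt_iff_tendsto_slope.1 hD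
    have hmono2 : 𝓝[>] (0:ℝ) ≤ 𝓝[≠] (0:ℝ) :=
      nhdsWithin_mono 0 (fun x hx => ne_of_gt hx)
    have hsl2 : Tendsto (slope (fun r : ℝ => f (q + r • v)) 0) (𝓝[>] 0)
        (nhds (fderiv ℝ f q v)) := hslope.mono_left hmono2
    have hev1 : ∀ᶠ t in 𝓝[>] (0:ℝ), u < slope (fun r : ℝ => f (q + r • v)) 0 t :=
      hsl2.eventually (eventually_gt_nhds hDgt)
    have hev2 : ∀ᶠ t in 𝓝[>] (0:ℝ), t < δ/(2*(‖v‖+1)) := by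
      have hio : Set.Iio (δ/(2*(‖v‖+1))) ∈ 𝓝[>] (0:ℝ) :=
        nhdsWithin_le_nhds (Iio_mem_nhds (by positivity))
      exact eventually_of_mem hio (fun x hx => hx)
    have hev3 : ∀ᶠ t in 𝓝[>] (0:ℝ), (0:ℝ) < t := eventually_mem_nhdsWithin
    obtain ⟨t, h1, h2, h3⟩ := (hev1.and (hev2.and hev3)).exists
    refine ⟨t, h3, ?_, ?_⟩
    · have h4 := (lt_div_iff₀ (by positivity : (0:ℝ) < 2*(‖v‖+1))).1 h2
      nlinarith
    · rw [slope_def_field] at h1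
      have h5 : f (q + (0:ℝ) • v) = f q := by simp
      rw [h5] at h1
      have h6 := (lt_div_iff₀ h3).1 (by simpa [div_eq_mul_inv] using h1)
      linarith [h6]
  -- the key bound for large k
  have hkey : ∀ k, N ≤ k → fk k (q + t • v) - fk k q ≤ u * t := by
    intro k hk
    refine le_of_forall_pos_le_add ?_
    intro ε hε
    set η := min (ε/(2*K+1)) (δ/2) with hηdef
    have hη0 : 0 < η := lt_min (by positivity) (by positivity)
    obtain ⟨y, hyq, hyae⟩ := hgoodball η hη0
    set g1 : ℝ → ℝ := fun s => fk k (y + s • v) with hg1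
    have haff : LipschitzWith ‖v‖₊ (fun s : ℝ => y + s • v) := by
      apply LipschitzWith.of_dist_le_mul
      intro a b
      rw [dist_eq_norm, dist_eq_norm]
      have h1 : (y + a • v) - (y + b • v) = (a - b) • v := by
        rw [add_sub_add_left_eq_sub, ← sub_smul]
      rw [h1, norm_smul, Real.norm_eq_abs, ← Real.dist_eq, dist_eq_norm, coe_nnnorm]
      rw [Real.norm_eq_abs]
      ring_nf
      rfl
    have hg1lip : LipschitzWith (K * ‖v‖₊) g1 := (hLip k).comp haff
    have hae2 : ∀ᵐ s : ℝ, s ∈ Set.Ioc 0 t → ∃ d, d ≤ u ∧ HasDerivAt g1 d s := by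
      filter_upwards [hyae] with s hsV
      intro hmem
      refine ⟨fderiv ℝ (fk k) (y + s • v) v, ?_, haux (fk k) y s (hdiff k _ hsV)⟩
      apply le_of_lt
      apply hN k hk _ hsV
      have hd1 : dist (y + s • v) y = |s| * ‖v‖ := by
        rw [dist_eq_norm, add_sub_cancel_left, norm_smul, Real.norm_eq_abs]
      have hd2 : |s| * ‖v‖ < δ/2 := by
        rw [abs_of_pos hmem.1]
        have h7 : s * ‖v‖ ≤ t * ‖v‖ := by
          apply mul_le_mul_of_nonneg_right hmem.2 (norm_nonneg v)
        have h8 : t * ‖v‖ ≤ t * (‖v‖ + 1) := by nlinarith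
        linarith
      calc dist (y + s • v) q ≤ dist (y + s • v) y + dist y q := dist_triangle _ _ _
        _ < δ/2 + δ/2 := by
            apply add_lt_add (by rw [hd1]; exact hd2)
            exact lt_of_lt_of_le hyq (min_le_right _ _)
        _ = δ := by ring
    have hcoe : ((K * ‖v‖₊ : ℝ≥0) : ℝ) = (K:ℝ) * ‖v‖ := by
      push_cast [coe_nnnorm]
      rfl
    have hu2 : -((K * ‖v‖₊ : ℝ≥0) : ℝ) ≤ u := by
      rw [hcoe]
      exact hu_lb
    have h1d := lip_deriv_le hg1lip ht0.le hu2 hae2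
    have hg10 : g1 0 = fk k y := by simp [hg1]
    have hg1t : g1 t = fk k (y + t • v) := rfl
    have hb1 : |fk k (q + t • v) - fk k (y + t • v)| ≤ (K:ℝ) * η := by
      have := (hLip k).dist_le_mul (q + t • v) (y + t • v)
      rw [Real.dist_eq] at this
      have hd3 : dist (q + t • v) (y + t • v) = dist q y := dist_add_right q y (t • v)
      rw [hd3, dist_comm q y] at this
      exact this.trans (mul_le_mul_of_nonneg_left hyq.le (NNReal.coe_nonneg K))
    have hb2 : |fk k y - fk k q| ≤ (K:ℝ) * η := by
      have := (hLip k).dist_le_mul y q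
      rw [Real.dist_eq] at this
      have hd4 : dist y q ≤ η := hyq.le
      exact this.trans (mul_le_mul_of_nonneg_left hd4 (NNReal.coe_nonneg K))
    have hηε : 2*(K:ℝ)*η ≤ ε := by
      have h9 : η ≤ ε/(2*K+1) := min_le_left _ _
      have h10 : (0:ℝ) < 2*K+1 := by positivity
      rw [le_div_iff₀ h10] at h9
      nlinarith [NNReal.coe_nonneg K, hη0.le]
    have e1 := abs_le.1 hb1
    have e2 := abs_le.1 hb2
    rw [hg10, hg1t] at h1d
    linarith [e1.2, e2.2, h1d, hηε]
  -- limit and contradiction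
  have hfin : f (q + t • v) - f q ≤ u * t := by
    have h1 : Tendsto (fun k => fk k (q + t • v) - fk k q) atTop
        (nhds (f (q + t • v) - f q)) :=
      (hconv.tendsto_at _).sub (hconv.tendsto_at _)
    exact le_of_tendsto h1 (eventually_atTop.2 ⟨N, hkey⟩)
  linarith
end
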